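/- arXiv:2103.02307 — 10 statements merged into one kernel-verified Lean document; each statement's English description precedes it below -/
import Mathlib

section
/- For every connected graph G with n vertices and m edges, the Wiener index satisfies W(G) ≥ ε(G) + m − n, where ε(G) is the sum of vertex eccentricities. -/
open Finset

/-- The Wiener index: sum of distances over unordered pairs of vertices. -/
noncomputable def wiener {V : Type*} [Fintype V] (G : SimpleGraph V) : ℕ :=
  (∑ u : V, ∑ v : V, G.dist u v) / 2

/-- The eccentricity of a vertex. -/
noncomputable def eccVert {V : Type*} [Fintype V] (G : SimpleGraph V) (v : V) : ℕ :=
  univ.sup (G.dist v)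

/-- The eccentricity (total eccentricity) of a graph. -/
noncomputable def eccSum {V : Type*} [Fintype V] (G : SimpleGraph V) : ℕ :=
  ∑ v : V, eccVert G v

lemma key_vert {V : Type*} [Fintype V] [DecidableEq V] (G : SimpleGraph V)
    [DecidableRel G.Adj] (hG : G.Connected) (v : V) :
    G.degree v + 2 * eccVert G v ≤ (∑ u : V, G.dist v u) + 2 := by
  haveI : Nonempty V := hG.nonempty
  obtain ⟨u0, -, hu0⟩ := Finset.exists_mem_eq_sup (univ : Finset V) univ_nonempty (G.dist v)
  have hu0' : eccVert G v = G.dist v u0 := hu0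
  by_cases h0 : eccVert G v = 0
  · have hdeg : G.degree v = 0 := by
      rw [← SimpleGraph.card_neighborFinset_eq_degree, Finset.card_eq_zero,
        Finset.eq_empty_iff_forall_notMem]
      intro w hw
      have hadj : G.Adj v w := (SimpleGraph.mem_neighborFinset G v w).mp hw
      have h1 : G.dist v w = 1 := SimpleGraph.dist_eq_one_iff_adj.mpr hadj
      have h2 : G.dist v w ≤ eccVert G v := Finset.le_sup (Finset.mem_univ w)
      omega
    simp [hdeg, h0]
  · set e := eccVert G v with he
    obtain ⟨p, hp⟩ := hG.exists_walk_length_eq_dist v u0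
    have hple : p.length = e := by rw [hp, ← hu0']
    have hle : ∀ i, i ≤ p.length → G.dist v (p.getVert i) ≤ i := by
      intro i
      induction i with
      | zero => simp
      | succ i ih =>
        intro h
        have hadj := p.adj_getVert_succ (by omega : i < p.length)
        have h1 : G.dist (p.getVert i) (p.getVert (i + 1)) = 1 :=
          SimpleGraph.dist_eq_one_iff_adj.mpr hadj
        have htri := hG.dist_triangle (u := v) (v := p.getVert i) (w := p.getVert (i + 1))
        have := ih (by omega)
        omega
    have hge : ∀ j, G.dist (p.getVert (p.length - j)) u0 ≤ j := by
      intro j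
      induction j with
      | zero => simp [p.getVert_length]
      | succ j ih =>
        by_cases hj : p.length ≤ j
        · have hstep : p.length - (j + 1) = p.length - j := by omega
          rw [hstep]; omega
        · have hlt : p.length - (j + 1) < p.length := by omega
          have hadj := p.adj_getVert_succ hlt
          have hstep : p.length - (j + 1) + 1 = p.length - j := by omega
          rw [hstep] at hadj
          have h1 : G.dist (p.getVert (p.length - (j + 1))) (p.getVert (p.length - j)) = 1 :=
            SimpleGraph.dist_eq_one_iff_adj.mpr hadj
          have htri := hG.dist_triangle (u := p.getVert (p.length - (j + 1)))
            (v := p.getVert (p.length - j)) (w := u0)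
          omega
    have hEq : ∀ i, i ≤ p.length → G.dist v (p.getVert i) = i := by
      intro i hi
      have h1 := hle i hi
      have h2 := hge (p.length - i)
      have hsub : p.length - (p.length - i) = i := by omega
      rw [hsub] at h2
      have htri := hG.dist_triangle (u := v) (v := p.getVert i) (w := u0)
      omega
    set A : Finset V := (Finset.Icc 2 e).image p.getVert with hA
    have hmemle : ∀ i ∈ Finset.Icc 2 e, i ≤ p.length := by
      intro i hi
      have := (Finset.mem_Icc.mp hi).2
      omega
    have hAsum : ∑ u ∈ A, G.dist v u = ∑ i ∈ Finset.Icc 2 e, i := by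
      rw [hA, Finset.sum_image (by
        intro i hi j hj hij
        have h1 := hEq i (hmemle i hi)
        have h2 := hEq j (hmemle j hj)
        rw [hij] at h1
        omega)]
      exact Finset.sum_congr rfl fun i hi => hEq i (hmemle i hi)
    have hA2 : 2 * (e - 1) ≤ ∑ i ∈ Finset.Icc 2 e, i := by
      calc 2 * (e - 1) = ∑ _i ∈ Finset.Icc 2 e, 2 := by
            rw [Finset.sum_const, Nat.card_Icc, smul_eq_mul]
            ring_nf
            omega
        _ ≤ ∑ i ∈ Finset.Icc 2 e, i :=
            Finset.sum_le_sum fun i hi => (Finset.mem_Icc.mp hi).1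
    have hdisj : Disjoint (G.neighborFinset v) A := by
      rw [Finset.disjoint_right]
      intro a ha hN
      obtain ⟨i, hi, rfl⟩ := Finset.mem_image.mp ha
      have h1 := hEq i (hmemle i hi)
      have hadj : G.Adj v (p.getVert i) := (SimpleGraph.mem_neighborFinset G v _).mp hN
      have h2 : G.dist v (p.getVert i) = 1 := SimpleGraph.dist_eq_one_iff_adj.mpr hadj
      have := (Finset.mem_Icc.mp hi).1
      omega
    have hNsum : ∑ u ∈ G.neighborFinset v, G.dist v u = G.degree v := by
      rw [← SimpleGraph.card_neighborFinset_eq_degree, Finset.card_eq_sum_ones]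
      exact Finset.sum_congr rfl fun u hu =>
        SimpleGraph.dist_eq_one_iff_adj.mpr ((SimpleGraph.mem_neighborFinset G v u).mp hu)
    have hsub : ∑ u ∈ G.neighborFinset v ∪ A, G.dist v u ≤ ∑ u : V, G.dist v u :=
      Finset.sum_le_sum_of_subset (Finset.subset_univ _)
    rw [Finset.sum_union hdisj, hNsum, hAsum] at hsub
    omega

theorem stmt_0 {V : Type*} [Fintype V] [DecidableEq V] (G : SimpleGraph V)
    [DecidableRel G.Adj] (hG : G.Connected) :
    (wiener G : ℤ) ≥ eccSum G + G.edgeFinset.card - Fintype.card V := by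
  have hkey : ∀ v : V, G.degree v + 2 * eccVert G v ≤ (∑ u : V, G.dist v u) + 2 :=
    key_vert G hG
  have hsum : (∑ v : V, G.degree v) + 2 * eccSum G ≤
      (∑ v : V, ∑ u : V, G.dist v u) + 2 * Fintype.card V := by
    have := Finset.sum_le_sum (fun v (_ : v ∈ (univ : Finset V)) => hkey v)
    simp only [Finset.sum_add_distrib, Finset.sum_const, Finset.card_univ,
      smul_eq_mul] at this
    rw [eccSum, Finset.mul_sum]
    omega
  rw [SimpleGraph.sum_degrees_eq_twice_card_edges] at hsum
  have hS : (∑ v : V, ∑ u : V, G.dist v u) = ∑ u : V, ∑ v : V, G.dist u v := rfl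
  rw [hS] at hsum
  have hW : wiener G = (∑ u : V, ∑ v : V, G.dist u v) / 2 := rfl
  have hmod := Nat.div_add_mod (∑ u : V, ∑ v : V, G.dist u v) 2
  have hlt := Nat.mod_lt (∑ u : V, ∑ v : V, G.dist u v) (by norm_num : 0 < 2)
  rw [hW]
  omega
end

section
/- If G is a connected graph with at least 5 vertices, then W(G) > ε(G). -/
open Finset

private lemma dist_getVert_le {V : Type*} (G : SimpleGraph V) (hG : G.Connected)
    {v u : V} (p : G.Walk v u) : ∀ j : ℕ, G.dist v (p.getVert j) ≤ j := by
  intro j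
  induction j with
  | zero => simp
  | succ j ih =>
    rcases lt_or_ge j p.length with h | h
    · have hadj := p.adj_getVert_succ h
      have h1 : G.dist (p.getVert j) (p.getVert (j + 1)) ≤ 1 :=
        le_of_eq ((SimpleGraph.dist_eq_one_iff_adj).2 hadj)
      have := hG.dist_triangle (u := v) (v := p.getVert j) (w := p.getVert (j + 1))
      omega
    · rw [p.getVert_of_length_le (by omega)]
      calc G.dist v u ≤ p.length := SimpleGraph.dist_le p
        _ ≤ j + 1 := by omega

private lemma dist_getVert_to_le {V : Type*} (G : SimpleGraph V) (hG : G.Connected)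
    {v u : V} (p : G.Walk v u) : ∀ k : ℕ, G.dist (p.getVert (p.length - k)) u ≤ k := by
  intro k
  induction k with
  | zero => simp
  | succ k ih =>
    rcases le_or_gt p.length (k + 1) with h | h
    · simp only [Nat.sub_eq_zero_of_le h, SimpleGraph.Walk.getVert_zero]
      calc G.dist v u ≤ p.length := SimpleGraph.dist_le p
        _ ≤ k + 1 := h
    · set i := p.length - (k + 1) with hi
      have hil : i < p.length := by omega
      have hadj := p.adj_getVert_succ hil
      have h1 : G.dist (p.getVert i) (p.getVert (i + 1)) ≤ 1 :=
        le_of_eq ((SimpleGraph.dist_eq_one_iff_adj).2 hadj)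
      have hik : i + 1 = p.length - k := by omega
      rw [hik] at h1
      have := hG.dist_triangle (u := p.getVert i) (v := p.getVert (p.length - k)) (w := u)
      omega

private lemma dist_getVert_eq {V : Type*} (G : SimpleGraph V) (hG : G.Connected)
    {v u : V} (p : G.Walk v u) (hp : p.length = G.dist v u)
    {j : ℕ} (hj : j ≤ p.length) : G.dist v (p.getVert j) = j := by
  have hA := dist_getVert_le G hG p j
  have hB := dist_getVert_to_le G hG p (p.length - j)
  rw [show p.length - (p.length - j) = j by omega] at hB
  have htri := hG.dist_triangle (u := v) (v := p.getVert j) (w := u)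
  omega

/-- every value up to the eccentricity is attained as a distance -/
private lemma eccVert_exists_dist_eq {V : Type*} [Fintype V] (G : SimpleGraph V) (hG : G.Connected)
    (v : V) {j : ℕ} (hj : j ≤ eccVert G v) : ∃ u : V, G.dist v u = j := by
  have hne : (univ : Finset V).Nonempty := ⟨v, mem_univ v⟩
  obtain ⟨u, -, hu⟩ := Finset.exists_mem_eq_sup univ hne (G.dist v)
  obtain ⟨p, hp⟩ := (hG v u).exists_walk_length_eq_dist
  have hlen : p.length = eccVert G v := by rw [hp, eccVert, hu]
  exact ⟨p.getVert j, dist_getVert_eq G hG p hp (by omega)⟩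

private lemma arith_aux (e S n : ℕ) (h1 : 1 ≤ e) (h2 : e + 1 ≤ n) (h3 : 5 ≤ n)
    (hg : S * 2 = (e + 1) * e) : 4 * e + 2 ≤ 2 * S + 2 * (n - (e + 1)) := by
  rcases le_or_gt e 3 with h | h
  · interval_cases e <;> omega
  · have h4 : 4 * e ≤ e * e := Nat.mul_le_mul (by omega) (le_refl e)
    have hg2 : S * 2 = e * e + e := by rw [hg]; ring
    omega

private lemma rowsum_ge {V : Type*} [Fintype V] (G : SimpleGraph V) (hG : G.Connected)
    (hn : 5 ≤ Fintype.card V) (v : V) :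
    2 * eccVert G v + 1 ≤ ∑ u : V, G.dist v u := by
  classical
  set e := eccVert G v with he
  -- choose vertices at each distance 0..e
  have hch : ∀ j ∈ Finset.range (e + 1), ∃ u : V, G.dist v u = j := by
    intro j hj
    exact eccVert_exists_dist_eq G hG v (by simp at hj; omega)
  choose f hf using hch
  set T : Finset V := (Finset.range (e + 1)).attach.image (fun j => f j.1 j.2) with hT
  have hdistT : ∀ j : {x // x ∈ Finset.range (e+1)}, G.dist v (f j.1 j.2) = j.1 :=
    fun j => hf j.1 j.2
  have hinj : ∀ a ∈ (Finset.range (e+1)).attach, ∀ b ∈ (Finset.range (e+1)).attach,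
      f a.1 a.2 = f b.1 b.2 → a = b := by
    intro a _ b _ hab
    have := hdistT a
    rw [hab, hdistT b] at this
    exact Subtype.ext this.symm
  have hcardT : T.card = e + 1 := by
    rw [hT, Finset.card_image_of_injOn hinj, Finset.card_attach, Finset.card_range]
  have hsumT : ∑ u ∈ T, G.dist v u = ∑ j ∈ Finset.range (e + 1), j := by
    rw [hT, Finset.sum_image hinj]
    rw [← Finset.sum_attach (Finset.range (e+1)) (fun j => j)]
    exact Finset.sum_congr rfl (fun j _ => hdistT j)
  -- vertex v is in T (at distance 0)
  have hvT : v ∈ T := by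
    have h0 : (0 : ℕ) ∈ Finset.range (e + 1) := by simp
    have : G.dist v (f 0 h0) = 0 := hf 0 h0
    have hfv : f 0 h0 = v := ((hG v _).dist_eq_zero_iff.mp this).symm
    rw [hT, Finset.mem_image]
    exact ⟨⟨0, h0⟩, Finset.mem_attach _ _, hfv⟩
  -- split the sum
  have hsplit : ∑ u : V, G.dist v u
      = ∑ u ∈ T, G.dist v u + ∑ u ∈ univ \ T, G.dist v u := by
    rw [add_comm, Finset.sum_sdiff (Finset.subset_univ T)]
  have hrest : (univ \ T).card ≤ ∑ u ∈ univ \ T, G.dist v u := by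
    have := Finset.card_nsmul_le_sum (univ \ T) (fun u => G.dist v u) 1 (by
      intro u hu
      have huT : u ∉ T := (Finset.mem_sdiff.mp hu).2
      have huv : u ≠ v := fun h => huT (h ▸ hvT)
      exact hG.pos_dist_of_ne (Ne.symm huv))
    simpa using this
  have hcardsd : (univ \ T).card = Fintype.card V - (e + 1) := by
    rw [Finset.card_sdiff_of_subset (Finset.subset_univ T), hcardT, Finset.card_univ]
  have hTle : e + 1 ≤ Fintype.card V := by
    rw [← hcardT, ← Finset.card_univ]
    exact Finset.card_le_card (Finset.subset_univ T)
  have hgauss : (∑ j ∈ Finset.range (e + 1), j) * 2 = (e + 1) * e :=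
    Finset.sum_range_id_mul_two (e + 1)
  -- eccentricity is at least 1
  have he1 : 1 ≤ e := by
    obtain ⟨w, hw⟩ := Fintype.exists_ne_of_one_lt_card (by omega) v
    have : 1 ≤ G.dist v w := hG.pos_dist_of_ne (Ne.symm hw)
    calc 1 ≤ G.dist v w := this
      _ ≤ e := Finset.le_sup (mem_univ w)
  -- final arithmetic
  have key := arith_aux e (∑ j ∈ Finset.range (e + 1), j) (Fintype.card V)
    he1 hTle hn hgauss
  omega

theorem stmt_3 {V : Type*} [Fintype V] (G : SimpleGraph V)
    (hG : G.Connected) (hn : 5 ≤ Fintype.card V) :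
    eccSum G < wiener G := by
  have hrow : ∀ v : V, 2 * eccVert G v + 1 ≤ ∑ u : V, G.dist v u :=
    rowsum_ge G hG hn
  have hsum : ∑ v : V, (2 * eccVert G v + 1) ≤ ∑ v : V, ∑ u : V, G.dist v u :=
    Finset.sum_le_sum (fun v _ => hrow v)
  have hL : ∑ v : V, (2 * eccVert G v + 1) = 2 * eccSum G + Fintype.card V := by
    rw [Finset.sum_add_distrib, ← Finset.mul_sum, eccSum]
    simp [Finset.card_univ]
  rw [hL] at hsum
  rw [wiener]
  have : eccSum G + 1 ≤ (∑ u : V, ∑ v : V, G.dist u v) / 2 := by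
    rw [Nat.le_div_iff_mul_le (by norm_num : 0 < 2)]
    omega
  omega
end

section
/- For every connected graph G on n vertices, W(G) ≤ ((n−1)/2)·ε(G), with equality if and only if G is the complete graph K_n. -/
open Finset

lemma dist_le_eccVert {V : Type*} [Fintype V] (G : SimpleGraph V) (u v : V) :
    G.dist u v ≤ eccVert G u := Finset.le_sup (mem_univ v)

lemma row_eq {V : Type*} [Fintype V] [DecidableEq V] (G : SimpleGraph V) (u : V) :
    ∑ v : V, G.dist u v = ∑ v ∈ univ.erase u, G.dist u v := by
  rw [Finset.sum_erase univ (by simp)]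

lemma row_le {V : Type*} [Fintype V] [DecidableEq V] (G : SimpleGraph V) (u : V) :
    ∑ v : V, G.dist u v ≤ (Fintype.card V - 1) * eccVert G u := by
  rw [row_eq]
  calc ∑ v ∈ univ.erase u, G.dist u v ≤ ∑ _v ∈ univ.erase u, eccVert G u :=
        Finset.sum_le_sum fun v _ => dist_le_eccVert G u v
    _ = (Fintype.card V - 1) * eccVert G u := by
        rw [Finset.sum_const, Finset.card_erase_of_mem (mem_univ u), card_univ, smul_eq_mul]

theorem stmt_4 {V : Type*} [Fintype V] (G : SimpleGraph V) (hG : G.Connected) :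
    (wiener G : ℚ) ≤ (Fintype.card V - 1) / 2 * eccSum G ∧
      ((wiener G : ℚ) = (Fintype.card V - 1) / 2 * eccSum G ↔ G = ⊤) := by
  classical
  have hne : Nonempty V := hG.nonempty
  have hcard : 1 ≤ Fintype.card V := Fintype.card_pos
  set n := Fintype.card V with hn
  set S := ∑ u : V, ∑ v : V, G.dist u v with hSdef
  have hS : S ≤ (n - 1) * eccSum G := by
    rw [eccSum, Finset.mul_sum]
    exact Finset.sum_le_sum fun u _ => row_le G u
  have hcast : ((n : ℚ) - 1) = ((n - 1 : ℕ) : ℚ) := by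
    rw [Nat.cast_sub hcard]; norm_num
  have hmain : (wiener G : ℚ) ≤ (n - 1) / 2 * eccSum G := by
    have h1 : (wiener G : ℚ) ≤ (S : ℚ) / 2 := by
      rw [wiener]
      exact_mod_cast Nat.cast_div_le
    refine h1.trans ?_
    rw [hcast, div_mul_eq_mul_div]
    apply div_le_div_of_nonneg_right ?_ (by norm_num)
    exact_mod_cast hS
  refine ⟨hmain, ?_, ?_⟩
  · -- equality → G = ⊤
    intro heq
    -- derive S = (n-1) * eccSum
    have hT : 2 * (S / 2) = (n - 1) * eccSum G := by
      have : ((2 * (S / 2) : ℕ) : ℚ) = (((n - 1) * eccSum G : ℕ) : ℚ) := by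
        push_cast
        rw [← hcast]
        rw [wiener] at heq
        have := heq
        field_simp at this ⊢
        linarith [this]
      exact_mod_cast this
    have hSeq : S = (n - 1) * eccSum G := by
      have h2 : 2 * (S / 2) ≤ S := Nat.mul_div_le S 2
      omega
    -- per-row equality
    have hrow : ∀ u : V, ∑ v : V, G.dist u v = (n - 1) * eccVert G u := by
      have := (Finset.sum_eq_sum_iff_of_le (s := (univ : Finset V))
        (f := fun u => ∑ v : V, G.dist u v)
        (g := fun u => (n - 1) * eccVert G u) (fun u _ => row_le G u)).1 ?_
      · exact fun u => this u (mem_univ u)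
      · rw [← Finset.mul_sum]; exact hSeq
    have hdist : ∀ u v : V, v ≠ u → G.dist u v = eccVert G u := by
      intro u v hvu
      have := (Finset.sum_eq_sum_iff_of_le (s := univ.erase u)
        (f := fun v => G.dist u v)
        (g := fun _ => eccVert G u) (fun v _ => dist_le_eccVert G u v)).1 ?_
      · exact this v (Finset.mem_erase.2 ⟨hvu, mem_univ v⟩)
      · rw [Finset.sum_const, Finset.card_erase_of_mem (mem_univ u), card_univ, smul_eq_mul,
          ← row_eq]
        exact hrow u
    ext u v
    simp only [SimpleGraph.top_adj]
    constructor
    · exact fun h => G.ne_of_adj h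
    · intro huv
      have hd : G.dist u v = eccVert G u := hdist u v (Ne.symm huv)
      have hpos : 0 < G.dist u v := hG.pos_dist_of_ne huv
      -- find a neighbor of u
      obtain ⟨p, hp⟩ := (hG u v).exists_walk_length_eq_dist
      cases p with
      | nil => exact absurd rfl huv
      | cons h q =>
        rename_i w
        have hw : u ≠ w := G.ne_of_adj h
        have h1 : G.dist u w = 1 := SimpleGraph.dist_eq_one_iff_adj.2 h
        have h2 := hdist u w (Ne.symm hw)
        exact SimpleGraph.dist_eq_one_iff_adj.1 (by omega)
  · -- G = ⊤ → equality
    intro htop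
    subst htop
    by_cases h1 : n = 1
    · have hsub : Subsingleton V := by
        rw [← Fintype.card_le_one_iff_subsingleton]; omega
      have hw : wiener (⊤ : SimpleGraph V) = 0 := by
        rw [wiener]
        have : ∀ u v : V, (⊤ : SimpleGraph V).dist u v = 0 := by
          intro u v; rw [Subsingleton.elim u v]; simp
        simp [this]
      have he : eccSum (⊤ : SimpleGraph V) = 0 := by
        rw [eccSum]
        apply Finset.sum_eq_zero
        intro u _
        rw [eccVert]
        refine Nat.le_antisymm (Finset.sup_le fun v _ => ?_) (Nat.zero_le _)
        rw [Subsingleton.elim v u, SimpleGraph.dist_self]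
      rw [hw, he]; norm_num
    · have hn2 : 2 ≤ n := by omega
      have hdtop : ∀ u v : V, u ≠ v → (⊤ : SimpleGraph V).dist u v = 1 := by
        intro u v huv
        exact SimpleGraph.dist_eq_one_iff_adj.2 huv
      have hecc : ∀ u : V, eccVert (⊤ : SimpleGraph V) u = 1 := by
        intro u
        obtain ⟨w, hw⟩ := Fintype.exists_ne_of_one_lt_card (by omega) u
        apply Nat.le_antisymm
        · apply Finset.sup_le
          intro v _
          by_cases hv : u = v
          · subst hv; rw [SimpleGraph.dist_self]; omega
          · rw [hdtop u v hv]
        · rw [← hdtop u w (Ne.symm hw)]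
          exact Finset.le_sup (mem_univ w)
      have heS : eccSum (⊤ : SimpleGraph V) = n := by
        rw [eccSum]; simp [hecc, hn]
      have hwS : (∑ u : V, ∑ v : V, (⊤ : SimpleGraph V).dist u v) = n * (n - 1) := by
        rw [Finset.sum_congr rfl (fun u _ => ?_)]
        · rw [Finset.sum_const, card_univ, smul_eq_mul]
        · rw [row_eq]
          rw [Finset.sum_congr rfl (fun v hv => hdtop u v (Ne.symm (Finset.mem_erase.1 hv).1)),
            Finset.sum_const, Finset.card_erase_of_mem (mem_univ u), card_univ, smul_eq_mul,
            mul_one]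
      have heven : 2 ∣ n * (n - 1) := by
        rcases Nat.even_or_odd n with h | h
        · exact Dvd.dvd.mul_right h.two_dvd _
        · exact Dvd.dvd.mul_left (Nat.Odd.sub_odd h odd_one).two_dvd _
      rw [wiener, hwS, heS, hcast]
      rw [Nat.cast_div heven (by norm_num)]
      push_cast [Nat.cast_sub hcard]
      ring
end

section
/- Every connected self-centered graph on at least 3 vertices is 2-connected. -/
open Finset

lemma lift_walk {V : Type*} {G : SimpleGraph V} {v : V} {x y : V}
    (p : G.Walk x y) (hx : x ∈ ((⊤ : G.Subgraph).deleteVerts {v}).verts)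
    (hy : y ∈ ((⊤ : G.Subgraph).deleteVerts {v}).verts) (hv : v ∉ p.support) :
    ((⊤ : G.Subgraph).deleteVerts {v}).coe.Reachable ⟨x, hx⟩ ⟨y, hy⟩ := by
  induction p with
  | nil => exact SimpleGraph.Reachable.refl _
  | @cons x b y h q ih =>
    have hv' : v ∉ q.support := fun hh => hv (SimpleGraph.Walk.support_cons _ _ ▸ List.mem_cons_of_mem _ hh)
    have hb : b ∈ ((⊤ : G.Subgraph).deleteVerts {v}).verts := by
      simp only [SimpleGraph.Subgraph.deleteVerts_verts, SimpleGraph.Subgraph.verts_top,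
        Set.mem_diff, Set.mem_univ, Set.mem_singleton_iff, true_and]
      intro hbv
      exact hv' (hbv ▸ q.start_mem_support)
    have hadj : ((⊤ : G.Subgraph).deleteVerts {v}).coe.Adj ⟨x, hx⟩ ⟨b, hb⟩ := by
      refine SimpleGraph.Subgraph.deleteVerts_adj.mpr ⟨trivial, ?_, trivial, ?_, by simpa using h⟩
      · simpa using hx.2
      · simpa using hb.2
    exact hadj.reachable.trans (ih hb hy hv')

theorem stmt_7 {V : Type*} [Fintype V] (G : SimpleGraph V) (hG : G.Connected)
    (hn : 3 ≤ Fintype.card V)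
    (hsc : ∀ u v : V, eccVert G u = eccVert G v) :
    ∀ v : V, ((⊤ : G.Subgraph).deleteVerts {v}).coe.Connected := by
  intro v
  classical
  have hne : Nonempty V := Fintype.card_pos_iff.mp (by omega)
  -- the deleted graph is nonempty
  obtain ⟨a0, ha0⟩ := Fintype.exists_ne_of_one_lt_card (by omega) v
  have mem_verts : ∀ {x : V}, x ≠ v → x ∈ ((⊤ : G.Subgraph).deleteVerts {v}).verts := by
    intro x hx
    simp [hx]
  have hnonempty : Nonempty ((⊤ : G.Subgraph).deleteVerts {v}).verts :=
    ⟨⟨a0, mem_verts ha0⟩⟩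
  rw [SimpleGraph.connected_iff]
  refine ⟨?_, hnonempty⟩
  by_contra hpre
  rw [SimpleGraph.Preconnected] at hpre
  push_neg at hpre
  obtain ⟨a, b, hab⟩ := hpre
  -- eccentricity of v is positive
  have hd0 : 0 < G.dist v a0 := hG.pos_dist_of_ne (Ne.symm ha0)
  have hecc_pos : 0 < eccVert G v :=
    lt_of_lt_of_le hd0 (Finset.le_sup (Finset.mem_univ a0))
  -- a farthest vertex w from v
  obtain ⟨w, -, hw⟩ := Finset.exists_mem_eq_sup univ univ_nonempty (G.dist v)
  have hw' : eccVert G v = G.dist v w := hw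
  have hwv : w ≠ v := by
    intro h
    rw [h, SimpleGraph.dist_self] at hw'
    omega
  have hwmem : w ∈ ((⊤ : G.Subgraph).deleteVerts {v}).verts := mem_verts hwv
  -- pick u ∈ {a, b} not reachable from w in the deleted graph
  have key : ∀ u : ((⊤ : G.Subgraph).deleteVerts {v}).verts,
      ¬ ((⊤ : G.Subgraph).deleteVerts {v}).coe.Reachable u ⟨w, hwmem⟩ → False := by
    intro u hur
    have huv : (u : V) ≠ v := by
      have := u.2
      simp only [SimpleGraph.Subgraph.deleteVerts_verts, SimpleGraph.Subgraph.verts_top,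
        Set.mem_diff, Set.mem_singleton_iff] at this
      exact this.2
    -- shortest walk from u to w in G
    obtain ⟨p, hp⟩ := (hG.preconnected (u : V) w).exists_walk_length_eq_dist
    have hvp : v ∈ p.support := by
      by_contra hvp
      exact hur (by simpa using lift_walk p u.2 hwmem hvp)
    have h1 : G.dist (u : V) v ≤ (p.takeUntil v hvp).length := SimpleGraph.dist_le _
    have h2 : G.dist v w ≤ (p.dropUntil v hvp).length := SimpleGraph.dist_le _
    have h3 : (p.takeUntil v hvp).length + (p.dropUntil v hvp).length = p.length := by
      rw [← SimpleGraph.Walk.length_append, p.take_spec hvp]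
    have hduv : 0 < G.dist (u : V) v := hG.pos_dist_of_ne huv
    have hle : G.dist (u : V) w ≤ eccVert G (u : V) := Finset.le_sup (Finset.mem_univ w)
    have heq : eccVert G (u : V) = eccVert G v := hsc _ _
    omega
  by_cases h : ((⊤ : G.Subgraph).deleteVerts {v}).coe.Reachable a ⟨w, hwmem⟩
  · exact key b (fun hb => hab (h.trans hb.symm))
  · exact key a h
end

section
/- If G is a connected graph on n vertices whose complement Ḡ is also connected, then W(G) + W(Ḡ) ≤ C(n,2) + (1/2)[(n−1)(ε(G) + ε(Ḡ)) − ξ^c(G) − ξ^c(Ḡ)]. -/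
open Finset

/-- The eccentric connectivity of a graph. -/
noncomputable def eccConn {V : Type*} [Fintype V] (G : SimpleGraph V)
    [DecidableRel G.Adj] : ℕ :=
  ∑ v : V, G.degree v * eccVert G v

lemma vert_bound {V : Type*} [Fintype V] [DecidableEq V] (G : SimpleGraph V)
    [DecidableRel G.Adj] (v : V) :
    (∑ u : V, G.dist v u) + G.degree v * eccVert G v ≤
      G.degree v + (Fintype.card V - 1) * eccVert G v := by
  have hsplit : ∑ u : V, G.dist v u =
      ∑ u ∈ G.neighborFinset v, G.dist v u + ∑ u ∈ (G.neighborFinset v)ᶜ, G.dist v u :=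
    (Finset.sum_add_sum_compl _ _).symm
  have h1 : ∑ u ∈ G.neighborFinset v, G.dist v u = G.degree v := by
    rw [SimpleGraph.degree, Finset.card_eq_sum_ones]
    refine Finset.sum_congr rfl fun u hu => ?_
    rw [SimpleGraph.mem_neighborFinset] at hu
    exact SimpleGraph.dist_eq_one_iff_adj.mpr hu
  have hv : v ∈ (G.neighborFinset v)ᶜ := by
    simp [SimpleGraph.mem_neighborFinset]
  have h2 : ∑ u ∈ (G.neighborFinset v)ᶜ, G.dist v u ≤
      (Fintype.card V - 1 - G.degree v) * eccVert G v := by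
    have : ∑ u ∈ (G.neighborFinset v)ᶜ, G.dist v u
        = ∑ u ∈ ((G.neighborFinset v)ᶜ).erase v, G.dist v u := by
      rw [Finset.sum_erase _ (by simp [SimpleGraph.dist_self])]
    rw [this]
    calc ∑ u ∈ ((G.neighborFinset v)ᶜ).erase v, G.dist v u
        ≤ ∑ _u ∈ ((G.neighborFinset v)ᶜ).erase v, eccVert G v :=
          Finset.sum_le_sum fun u _ => Finset.le_sup (Finset.mem_univ u)
      _ = (((G.neighborFinset v)ᶜ).erase v).card * eccVert G v := by
          rw [Finset.sum_const, smul_eq_mul]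
      _ = (Fintype.card V - 1 - G.degree v) * eccVert G v := by
          rw [Finset.card_erase_of_mem hv, Finset.card_compl]
          congr 1
          have := G.degree_lt_card_verts v
          unfold SimpleGraph.degree
          omega
  have hd : G.degree v ≤ Fintype.card V - 1 := by
    have := G.degree_lt_card_verts v; omega
  calc (∑ u : V, G.dist v u) + G.degree v * eccVert G v
      ≤ G.degree v + (Fintype.card V - 1 - G.degree v) * eccVert G v
          + G.degree v * eccVert G v := by rw [hsplit, h1]; omega
    _ = G.degree v + (Fintype.card V - 1) * eccVert G v := by
          rw [add_assoc, ← Nat.add_mul, Nat.sub_add_cancel hd]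

lemma graph_bound {V : Type*} [Fintype V] [DecidableEq V] (G : SimpleGraph V)
    [DecidableRel G.Adj] :
    (∑ v : V, ∑ u : V, G.dist v u) + eccConn G ≤
      (∑ v : V, G.degree v) + (Fintype.card V - 1) * eccSum G := by
  rw [eccConn, eccSum, Finset.mul_sum, ← Finset.sum_add_distrib, ← Finset.sum_add_distrib]
  exact Finset.sum_le_sum fun v _ => vert_bound G v

theorem stmt_8 {V : Type*} [Fintype V] [DecidableEq V] (G : SimpleGraph V)
    [DecidableRel G.Adj] (hG : G.Connected) (hGc : Gᶜ.Connected) :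
    (wiener G : ℚ) + wiener Gᶜ ≤
      (Fintype.card V).choose 2 +
        (1 / 2) * ((Fintype.card V - 1) * (eccSum G + eccSum Gᶜ)
          - eccConn G - eccConn Gᶜ) := by
  have hne : Nonempty V := hG.nonempty
  set n := Fintype.card V with hn
  have hn1 : 1 ≤ n := Fintype.card_pos
  have hdeg : ∑ v : V, (G.degree v + Gᶜ.degree v) = n * (n - 1) := by
    have : ∀ v : V, G.degree v + Gᶜ.degree v = n - 1 := by
      intro v
      rw [G.degree_compl v]
      have := G.degree_lt_card_verts v
      omega
    rw [Finset.sum_congr rfl fun v _ => this v, Finset.sum_const, smul_eq_mul,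
      Finset.card_univ]
  have key : (∑ v : V, ∑ u : V, G.dist v u) + (∑ v : V, ∑ u : V, Gᶜ.dist v u)
      + eccConn G + eccConn Gᶜ ≤ n * (n - 1) + (n - 1) * (eccSum G + eccSum Gᶜ) := by
    have h1 := graph_bound G
    have h2 := graph_bound Gᶜ
    rw [← hn] at h1 h2
    have hsum : (∑ v : V, G.degree v) + (∑ v : V, Gᶜ.degree v) = n * (n - 1) := by
      rw [← Finset.sum_add_distrib]; exact hdeg
    rw [← hsum, Nat.mul_add]
    omega
  -- cast to ℚ
  have keyQ : ((∑ v : V, ∑ u : V, G.dist v u : ℕ) : ℚ)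
      + ((∑ v : V, ∑ u : V, Gᶜ.dist v u : ℕ) : ℚ)
      + (eccConn G : ℚ) + (eccConn Gᶜ : ℚ)
      ≤ (n : ℚ) * ((n : ℚ) - 1) + ((n : ℚ) - 1) * ((eccSum G : ℚ) + (eccSum Gᶜ : ℚ)) := by
    have := key
    have hcast : ((n * (n - 1) + (n - 1) * (eccSum G + eccSum Gᶜ) : ℕ) : ℚ)
        = (n : ℚ) * ((n : ℚ) - 1) + ((n : ℚ) - 1) * ((eccSum G : ℚ) + (eccSum Gᶜ : ℚ)) := by
      push_cast [Nat.cast_sub hn1]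
      ring
    calc ((∑ v : V, ∑ u : V, G.dist v u : ℕ) : ℚ)
        + ((∑ v : V, ∑ u : V, Gᶜ.dist v u : ℕ) : ℚ)
        + (eccConn G : ℚ) + (eccConn Gᶜ : ℚ)
        = (((∑ v : V, ∑ u : V, G.dist v u) + (∑ v : V, ∑ u : V, Gᶜ.dist v u)
          + eccConn G + eccConn Gᶜ : ℕ) : ℚ) := by push_cast; ring
      _ ≤ ((n * (n - 1) + (n - 1) * (eccSum G + eccSum Gᶜ) : ℕ) : ℚ) := by
          exact_mod_cast key
      _ = _ := hcast
  have hw1 : (wiener G : ℚ) ≤ ((∑ u : V, ∑ v : V, G.dist u v : ℕ) : ℚ) / 2 := by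
    rw [wiener]
    exact Nat.cast_div_le
  have hw2 : (wiener Gᶜ : ℚ) ≤ ((∑ u : V, ∑ v : V, Gᶜ.dist u v : ℕ) : ℚ) / 2 := by
    rw [wiener]
    exact Nat.cast_div_le
  have hchoose : ((n.choose 2 : ℕ) : ℚ) = (n : ℚ) * ((n : ℚ) - 1) / 2 := by
    have h2 : 2 ∣ n * (n - 1) := by
      rcases n with _ | m
      · simp
      · simpa [Nat.succ_sub_one, Nat.mul_comm] using (Nat.even_mul_succ_self m).two_dvd
    have : (n.choose 2 : ℕ) = n * (n - 1) / 2 := Nat.choose_two_right n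
    rw [this]
    rw [Nat.cast_div h2 (by norm_num)]
    push_cast [Nat.cast_sub hn1]
    ring
  rw [hchoose]
  push_cast
  linarith [keyQ, hw1, hw2]
end

section
/- If T is a tree on n vertices, then W(T) = W(L(T)) + C(n,2), where L(T) is the line graph of T. -/
open Finset

section Aux

open SimpleGraph Walk
set_option linter.unusedSectionVars false
set_option linter.unusedVariables false

variable {V : Type*} [Fintype V] [DecidableEq V] {T : SimpleGraph V} [DecidableRel T.Adj]

/-- The unique path between two vertices of a tree. -/
noncomputable def pth (hT : T.IsTree) (u v : V) : T.Walk u v :=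
  (hT.isConnected.exists_path_of_dist u v).choose

lemma pth_isPath (hT : T.IsTree) (u v : V) : (pth hT u v).IsPath :=
  (hT.isConnected.exists_path_of_dist u v).choose_spec.1

lemma pth_length (hT : T.IsTree) (u v : V) : (pth hT u v).length = T.dist u v :=
  (hT.isConnected.exists_path_of_dist u v).choose_spec.2

lemma path_unique (hT : T.IsTree) {u v : V} {p : T.Walk u v} (hp : p.IsPath) :
    p = pth hT u v :=
  ((hT.existsUnique_path u v).unique hp (pth_isPath hT u v))

lemma path_length_eq_dist (hT : T.IsTree) {u v : V} {p : T.Walk u v} (hp : p.IsPath) :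
    p.length = T.dist u v := by
  rw [path_unique hT hp, pth_length]

/-- The second vertex on the unique path from `u` to `v`. -/
noncomputable def nxt (hT : T.IsTree) (u v : V) : V := (pth hT u v).getVert 1

lemma pth_not_nil (hT : T.IsTree) {u v : V} (h : u ≠ v) : ¬ (pth hT u v).Nil :=
  Walk.not_nil_of_ne h

lemma adj_nxt (hT : T.IsTree) {u v : V} (h : u ≠ v) : T.Adj u (nxt hT u v) := by
  simpa [nxt] using Walk.adj_snd (pth_not_nil hT h)

lemma pth_reverse (hT : T.IsTree) (u v : V) : (pth hT u v).reverse = pth hT v u :=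
  path_unique hT ((pth_isPath hT u v).reverse)

lemma nxt_rev (hT : T.IsTree) (u v : V) :
    nxt hT v u = (pth hT u v).getVert ((pth hT u v).length - 1) := by
  rw [nxt, ← pth_reverse hT u v, Walk.getVert_reverse]

lemma dist_nxt (hT : T.IsTree) {u v : V} (h : u ≠ v) :
    T.dist (nxt hT u v) v + 1 = T.dist u v := by
  have hnn := pth_not_nil hT h
  have htail : (pth hT u v).tail.IsPath := (pth_isPath hT u v).tail
  have h1 : (pth hT u v).tail.length + 1 = (pth hT u v).length :=
    Walk.length_tail_add_one hnn
  have h2 := path_length_eq_dist hT htail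
  rw [← pth_length hT u v, ← h1, nxt, ← h2]
lemma dist_adj_step (hT : T.IsTree) {a b : V} (hab : T.Adj a b) (c : V) :
    T.dist a c = T.dist b c + 1 ∨ T.dist b c = T.dist a c + 1 := by
  classical
  set p := pth hT a c with hp
  by_cases hb : b ∈ p.support
  · left
    have hsplit := p.take_spec hb
    have hlen : (p.takeUntil b hb).length + (p.dropUntil b hb).length = p.length := by
      rw [← Walk.length_append, hsplit]
    have h1 : T.dist a b ≤ (p.takeUntil b hb).length := SimpleGraph.dist_le _
    have h2 : T.dist b c ≤ (p.dropUntil b hb).length := SimpleGraph.dist_le _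
    have h3 : T.dist a c ≤ T.dist a b + T.dist b c := hT.isConnected.dist_triangle
    have h4 : p.length = T.dist a c := pth_length hT a c
    have h5 : T.dist a b = 1 := (SimpleGraph.dist_eq_one_iff_adj).2 hab
    omega
  · right
    have hpath : (Walk.cons hab.symm p).IsPath :=
      (Walk.cons_isPath_iff _ _).2 ⟨pth_isPath hT a c, hb⟩
    have := path_length_eq_dist hT hpath
    rw [Walk.length_cons, pth_length hT a c] at this
    omega

lemma dist_pos_of_ne (hT : T.IsTree) {u v : V} (h : u ≠ v) : 0 < T.dist u v :=
  hT.isConnected.pos_dist_of_ne h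

lemma eq_of_dist_zero (hT : T.IsTree) {u v : V} (h : T.dist u v = 0) : u = v :=
  (hT.isConnected.dist_eq_zero_iff).1 h

/-- The tail of the unique path is the unique path from the second vertex. -/
lemma pth_tail (hT : T.IsTree) {u v : V} (h : u ≠ v) :
    (pth hT u v).tail = pth hT (nxt hT u v) v :=
  path_unique hT ((pth_isPath hT u v).tail)

/-- `nxt v (nxt u v)` equals the second-to-last vertex `nxt v u`, when `dist u v ≥ 2`. -/
lemma nxt_nxt (hT : T.IsTree) {u v : V} (h : u ≠ v) (h2 : nxt hT u v ≠ v) :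
    nxt hT v (nxt hT u v) = nxt hT v u := by
  have hnn := pth_not_nil hT h
  have hrev := nxt_rev hT (nxt hT u v) v   -- nxt v (nxt u v) = (pth (nxt u v) v).getVert (len-1)
  rw [← pth_tail hT h] at hrev
  rw [hrev, nxt_rev hT u v]
  have hl : (pth hT u v).tail.length + 1 = (pth hT u v).length :=
    Walk.length_tail_add_one hnn
  have hg := Walk.getVert_tail (pth hT u v) (n := (pth hT u v).tail.length - 1)
  refine hg.trans ?_
  congr 1
  have hlt : 0 < (pth hT u v).tail.length := by
    rcases Nat.eq_zero_or_pos (pth hT u v).tail.length with h0 | h0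
    · exfalso
      apply h2
      have : (pth hT u v).tail.Nil := Walk.nil_iff_length_eq.2 h0
      have := this.eq
      simpa [nxt] using this
    · exact h0
  omega
lemma sym2_dist_le_one (hT : T.IsTree) {e : T.edgeSet} {u x : V}
    (hu : u ∈ (e : Sym2 V)) (hx : x ∈ (e : Sym2 V)) : T.dist u x ≤ 1 := by
  by_cases h : u = x
  · subst h
    rw [SimpleGraph.dist_self]
    omega
  · have he : (e : Sym2 V) = s(u, x) := (Sym2.mem_and_mem_iff h).1 ⟨hu, hx⟩
    have : T.Adj u x := by
      have := e.2
      rw [he] at this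
      exact this
    exact le_of_eq ((SimpleGraph.dist_eq_one_iff_adj).2 this)

/-- From a walk in the line graph, get a distance bound in the tree. -/
lemma dist_le_lwalk (hT : T.IsTree) {e f : T.edgeSet} (w : T.lineGraph.Walk e f)
    {u v : V} (hu : u ∈ (e : Sym2 V)) (hv : v ∈ (f : Sym2 V)) :
    T.dist u v ≤ w.length + 1 := by
  induction w generalizing u v with
  | nil => simpa using sym2_dist_le_one hT hu hv
  | @cons e₁ e₂ e₃ hadj w ih =>
    obtain ⟨hne, x, hx1, hx2⟩ := SimpleGraph.lineGraph_adj_iff_exists.1 hadj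
    calc T.dist u v ≤ T.dist u x + T.dist x v := hT.isConnected.dist_triangle
    _ ≤ 1 + (w.length + 1) := by
        exact Nat.add_le_add (sym2_dist_le_one hT hu hx1) (ih hx2 hv)
    _ = (w.cons hadj).length + 1 := by simp [Walk.length_cons]; omega

/-- From a nontrivial path in the tree, get a walk in the line graph from the
first edge to the last edge. -/
lemma exists_lwalk (hT : T.IsTree) {u v : V} (p : T.Walk u v) (hp : p.IsPath)
    (hl : 0 < p.length) (e f : T.edgeSet)
    (he : (e : Sym2 V) = s(u, p.getVert 1))
    (hf : (f : Sym2 V) = s(p.getVert (p.length - 1), v)) :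
    ∃ w : T.lineGraph.Walk e f, w.length + 1 = p.length := by
  induction p generalizing e f with
  | nil => simp at hl
  | @cons u x v h q ih =>
    by_cases hq : q.Nil
    · obtain rfl : x = v := hq.eq
      have hq0 : q.length = 0 := Walk.nil_iff_length_eq.1 hq
      have hgv : (Walk.cons h q).getVert ((Walk.cons h q).length - 1) = u := by
        simp [hq0]
      rw [hgv] at hf
      rw [Walk.getVert_cons_succ, Walk.getVert_zero] at he
      have hef : e = f := Subtype.ext (by rw [he, hf])
      subst hef
      exact ⟨Walk.nil, by simp [Walk.length_cons, hq0]⟩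
    · have hql : 0 < q.length := Walk.not_nil_iff_lt_length.1 hq
      have hqp : q.IsPath := hp.of_cons
      set e' : T.edgeSet := ⟨s(x, q.getVert 1), Walk.adj_snd hq⟩ with he'
      have hf' : (f : Sym2 V) = s(q.getVert (q.length - 1), v) := by
        have h3 : (Walk.cons h q).getVert ((Walk.cons h q).length - 1)
            = q.getVert (q.length - 1) := by
          rw [Walk.length_cons, Nat.add_sub_cancel]
          conv_lhs => rw [show q.length = (q.length - 1) + 1 by omega]
          rw [Walk.getVert_cons_succ]
        rw [hf, h3]
      obtain ⟨w', hw'⟩ := ih hqp hql e' f rfl hf'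
      have hx1 : x ∈ (e : Sym2 V) := by
        rw [he, Walk.getVert_cons_succ, Walk.getVert_zero]
        exact Sym2.mem_mk_right u x
      have hadj : T.lineGraph.Adj e e' := by
        rw [SimpleGraph.lineGraph_adj_iff_exists]
        refine ⟨?_, x, hx1, Sym2.mem_mk_left x _⟩
        intro hee
        have : (e : Sym2 V) = (e' : Sym2 V) := congrArg _ hee
        rw [he, he', Walk.getVert_cons_succ, Walk.getVert_zero] at this
        rw [Sym2.eq_iff] at this
        have hy : q.getVert 1 ∈ q.support :=
          Walk.mem_support_iff_exists_getVert.2 ⟨1, rfl, hql⟩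
        rcases this with ⟨h1, h2⟩ | ⟨h1, h2⟩
        · exact h.ne h1
        · rw [Walk.cons_isPath_iff] at hp
          exact hp.2 (h1 ▸ hy)
      exact ⟨Walk.cons hadj w', by simp [Walk.length_cons]; omega⟩
/-- The first edge on the path from `u` to `v`. -/
noncomputable def Fe (hT : T.IsTree) (u v : V) (h : u ≠ v) : T.edgeSet :=
  ⟨s(u, nxt hT u v), adj_nxt hT h⟩

lemma Fe_val (hT : T.IsTree) (u v : V) (h : u ≠ v) :
    (Fe hT u v h : Sym2 V) = s(u, nxt hT u v) := rfl

/-- The key distance identity. -/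
lemma dist_eq_ldist (hT : T.IsTree) {u v : V} (h : u ≠ v) :
    T.dist u v = T.lineGraph.dist (Fe hT u v h) (Fe hT v u h.symm) + 1 := by
  have hd : 0 < T.dist u v := dist_pos_of_ne hT h
  have hl : 0 < (pth hT u v).length := by rw [pth_length]; exact hd
  have he : (Fe hT u v h : Sym2 V) = s(u, (pth hT u v).getVert 1) := rfl
  have hf : (Fe hT v u h.symm : Sym2 V)
      = s((pth hT u v).getVert ((pth hT u v).length - 1), v) := by
    rw [Fe_val, nxt_rev hT u v, Sym2.eq_swap]
  obtain ⟨w, hw⟩ := exists_lwalk hT (pth hT u v) (pth_isPath hT u v) hl _ _ he hf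
  have hub : T.lineGraph.dist (Fe hT u v h) (Fe hT v u h.symm) ≤ w.length :=
    SimpleGraph.dist_le w
  have hreach : T.lineGraph.Reachable (Fe hT u v h) (Fe hT v u h.symm) := ⟨w⟩
  obtain ⟨w₀, hw₀⟩ := hreach.exists_walk_length_eq_dist
  have hlb : T.dist u v ≤ w₀.length + 1 :=
    dist_le_lwalk hT w₀ (by rw [Fe_val]; exact Sym2.mem_mk_left _ _)
      (by rw [Fe_val]; exact Sym2.mem_mk_left _ _)
  rw [pth_length] at hw
  omega

/-- If `d(b,v) + 1 = d(u,v)` and `u ~ b` then `b` is the second vertex on the path. -/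
lemma nxt_eq (hT : T.IsTree) {u v b : V} (h : u ≠ v) (hub : T.Adj u b)
    (hd : T.dist b v + 1 = T.dist u v) : nxt hT u v = b := by
  have hw : (Walk.cons hub (pth hT b v)).length = T.dist u v := by
    rw [Walk.length_cons, pth_length]; omega
  have hwp : (Walk.cons hub (pth hT b v)).IsPath :=
    Walk.isPath_of_length_eq_dist _ hw
  have := path_unique hT hwp
  have : (pth hT u v).getVert 1 = (Walk.cons hub (pth hT b v)).getVert 1 := by rw [← this]
  rw [nxt, this, Walk.getVert_cons_succ, Walk.getVert_zero]
lemma tdist_comm (T : SimpleGraph V) (x y : V) : T.dist x y = T.dist y x :=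
  SimpleGraph.dist_comm

lemma dist_nxt' (hT : T.IsTree) {u v : V} (h : u ≠ v) :
    T.dist u (nxt hT v u) + 1 = T.dist u v := by
  have := dist_nxt hT h.symm
  rw [tdist_comm T u (nxt hT v u), tdist_comm T u v]
  exact this

lemma Fe_inj (hT : T.IsTree) {u v u' v' : V} (h : u ≠ v) (h' : u' ≠ v')
    (hna : ¬ T.Adj u v)
    (h1 : Fe hT u v h = Fe hT u' v' h') (h2 : Fe hT v u h.symm = Fe hT v' u' h'.symm) :
    u = u' ∧ v = v' := by
  set b := nxt hT u v with hb
  set c := nxt hT v u with hc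
  have hd2 : 2 ≤ T.dist u v := by
    have h0 : 0 < T.dist u v := dist_pos_of_ne hT h
    have hd1 : T.dist u v ≠ 1 := fun hone =>
      hna ((SimpleGraph.dist_eq_one_iff_adj).1 hone)
    omega
  have dbv : T.dist b v + 1 = T.dist u v := dist_nxt hT h
  have duc : T.dist u c + 1 = T.dist u v := dist_nxt' hT h
  have hbv : b ≠ v := by
    intro hbveq
    rw [hbveq, SimpleGraph.dist_self] at dbv
    omega
  have dcb : T.dist c b + 1 = T.dist v b := by
    have := dist_nxt hT (Ne.symm hbv)
    rwa [nxt_nxt hT h hbv, ← hc] at this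
  have hdcb : T.dist b c + 2 = T.dist u v := by
    have e1 := tdist_comm T c b
    have e2 := tdist_comm T v b
    omega
  have hdist : T.dist u' v' = T.dist u v := by
    rw [dist_eq_ldist hT h', ← h1, ← h2, ← dist_eq_ldist hT h]
  have hu' : u = u' ∧ b = nxt hT u' v' ∨ u = nxt hT u' v' ∧ b = u' := by
    have : s(u, b) = s(u', nxt hT u' v') := congrArg Subtype.val h1
    rwa [Sym2.eq_iff] at this
  have hv' : v = v' ∧ c = nxt hT v' u' ∨ v = nxt hT v' u' ∧ c = v' := by
    have : s(v, c) = s(v', nxt hT v' u') := congrArg Subtype.val h2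
    rwa [Sym2.eq_iff] at this
  rcases hu' with ⟨huu, hbb⟩ | ⟨huu, hbb⟩ <;> rcases hv' with ⟨hvv, hcc⟩ | ⟨hvv, hcc⟩
  · exact ⟨huu, hvv⟩
  · rw [← huu, ← hcc] at hdist
    omega
  · rw [← hbb, ← hvv] at hdist
    omega
  · rw [← hbb, ← hcc] at hdist
    omega

lemma surj_aux (hT : T.IsTree) {a b c d : V} (hab : T.Adj a b) (hcd : T.Adj c d)
    (hne : s(a, b) ≠ s(c, d))
    (hmax : ∀ x y : V, (x = a ∨ x = b) → (y = c ∨ y = d) → T.dist x y ≤ T.dist a c) :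
    ∃ (h1 : a ≠ c), ¬ T.Adj a c ∧ (Fe hT a c h1 : Sym2 V) = s(a, b) ∧
      (Fe hT c a h1.symm : Sym2 V) = s(c, d) := by
  have e1 : T.dist a c = T.dist b c + 1 := by
    have hle : T.dist b c ≤ T.dist a c := hmax b c (Or.inr rfl) (Or.inl rfl)
    rcases dist_adj_step hT hab c with h | h
    · exact h
    · omega
  have e2 : T.dist a c = T.dist a d + 1 := by
    have hle : T.dist a d ≤ T.dist a c := hmax a d (Or.inl rfl) (Or.inr rfl)
    have e3 := tdist_comm T c a
    have e4 := tdist_comm T d a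
    rcases dist_adj_step hT hcd a with h | h
    · omega
    · omega
  have h1 : a ≠ c := by
    intro hEq
    rw [hEq, SimpleGraph.dist_self] at e1
    omega
  have hnadj : ¬ T.Adj a c := by
    intro hadj
    have hd1 : T.dist a c = 1 := (SimpleGraph.dist_eq_one_iff_adj).2 hadj
    have hbc : b = c := eq_of_dist_zero hT (by omega)
    have had : a = d := eq_of_dist_zero hT (by omega)
    exact hne (by rw [hbc, had, Sym2.eq_swap])
  have hn1 : nxt hT a c = b := nxt_eq hT h1 hab (by omega)
  have hn2 : nxt hT c a = d := by
    apply nxt_eq hT h1.symm hcd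
    have e3 := tdist_comm T c a
    have e4 := tdist_comm T d a
    omega
  exact ⟨h1, hnadj, by rw [Fe_val, hn1], by rw [Fe_val, hn2]⟩
lemma sym2_exists (z : Sym2 V) : ∃ a b : V, z = s(a, b) :=
  Sym2.ind (fun a b => ⟨a, b, rfl⟩) z

lemma Fe_surj (hT : T.IsTree) (e f : T.edgeSet) (hne : e ≠ f) :
    ∃ (u v : V) (h : u ≠ v), ¬ T.Adj u v ∧ Fe hT u v h = e ∧ Fe hT v u h.symm = f := by
  obtain ⟨a, b, hE⟩ := sym2_exists (e : Sym2 V)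
  obtain ⟨c, d, hF⟩ := sym2_exists (f : Sym2 V)
  have hab : T.Adj a b := by have := e.2; rwa [hE] at this
  have hcd : T.Adj c d := by have := f.2; rwa [hF] at this
  have hneS : s(a, b) ≠ s(c, d) := by
    rw [← hE, ← hF]
    exact fun hh => hne (Subtype.ext hh)
  obtain ⟨⟨x, y⟩, hmem, hmax⟩ :=
    Finset.exists_max_image (({a, b} ×ˢ {c, d} : Finset (V × V)))
      (fun p => T.dist p.1 p.2) ⟨(a, c), by simp⟩
  rw [Finset.mem_product] at hmem
  obtain ⟨hx, hy⟩ := hmem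
  simp only [Finset.mem_insert, Finset.mem_singleton] at hx hy
  have hmax' : ∀ z w : V, (z = x ∨ z ∈ ({a,b} : Finset V)) →
      (w = y ∨ w ∈ ({c,d} : Finset V)) → T.dist z w ≤ T.dist x y := by
    intro z w hz hw
    have hz' : z ∈ ({a, b} : Finset V) := by
      rcases hz with rfl | hz
      · simp only [Finset.mem_insert, Finset.mem_singleton]; exact hx
      · exact hz
    have hw' : w ∈ ({c, d} : Finset V) := by
      rcases hw with rfl | hw
      · simp only [Finset.mem_insert, Finset.mem_singleton]; exact hy
      · exact hw
    exact hmax (z, w) (Finset.mem_product.2 ⟨hz', hw'⟩)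
  -- name the other endpoints
  rcases hx with rfl | rfl <;> rcases hy with rfl | rfl
  · obtain ⟨h1, hnadj, hv1, hv2⟩ := surj_aux hT hab hcd hneS
      (fun z w hz hw => hmax' z w
        (by rcases hz with rfl | rfl
            · exact Or.inl rfl
            · exact Or.inr (by simp))
        (by rcases hw with rfl | rfl
            · exact Or.inl rfl
            · exact Or.inr (by simp)))
    exact ⟨x, y, h1, hnadj, Subtype.ext (hv1.trans hE.symm), Subtype.ext (hv2.trans hF.symm)⟩
  · obtain ⟨h1, hnadj, hv1, hv2⟩ := surj_aux hT hab hcd.symm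
      (by rw [Sym2.eq_swap (a := c)] at hneS; exact hneS)
      (fun z w hz hw => hmax' z w
        (by rcases hz with rfl | rfl
            · exact Or.inl rfl
            · exact Or.inr (by simp))
        (by rcases hw with rfl | rfl
            · exact Or.inl rfl
            · exact Or.inr (by simp)))
    refine ⟨x, y, h1, hnadj, Subtype.ext (hv1.trans hE.symm), Subtype.ext (hv2.trans ?_)⟩
    rw [hF, Sym2.eq_swap]
  · obtain ⟨h1, hnadj, hv1, hv2⟩ := surj_aux hT hab.symm hcd
      (by rw [Sym2.eq_swap (a := a)] at hneS; exact hneS)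
      (fun z w hz hw => hmax' z w
        (by rcases hz with rfl | rfl
            · exact Or.inl rfl
            · exact Or.inr (by simp))
        (by rcases hw with rfl | rfl
            · exact Or.inl rfl
            · exact Or.inr (by simp)))
    refine ⟨x, y, h1, hnadj, Subtype.ext (hv1.trans ?_), Subtype.ext (hv2.trans hF.symm)⟩
    rw [hE, Sym2.eq_swap]
  · obtain ⟨h1, hnadj, hv1, hv2⟩ := surj_aux hT hab.symm hcd.symm
      (by rw [Sym2.eq_swap (a := a), Sym2.eq_swap (a := c)] at hneS; exact hneS)
      (fun z w hz hw => hmax' z w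
        (by rcases hz with rfl | rfl
            · exact Or.inl rfl
            · exact Or.inr (by simp))
        (by rcases hw with rfl | rfl
            · exact Or.inl rfl
            · exact Or.inr (by simp)))
    refine ⟨x, y, h1, hnadj, Subtype.ext (hv1.trans ?_), Subtype.ext (hv2.trans ?_)⟩
    · rw [hE, Sym2.eq_swap]
    · rw [hF, Sym2.eq_swap]
lemma Fe_ne (hT : T.IsTree) {u v : V} (h : u ≠ v) (hna : ¬ T.Adj u v) :
    Fe hT u v h ≠ Fe hT v u h.symm := by
  intro heq
  have hval : s(u, nxt hT u v) = s(v, nxt hT v u) := congrArg Subtype.val heq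
  have hu : u ∈ s(v, nxt hT v u) := hval ▸ Sym2.mem_mk_left _ _
  rcases Sym2.mem_iff.1 hu with h1 | h1
  · exact h h1
  · refine hna ?_
    rw [h1]
    exact (adj_nxt hT h.symm).symm

lemma sum_dist_eq (hT : T.IsTree) (hn : 2 ≤ Fintype.card V) :
    ∑ u : V, ∑ v : V, T.dist u v
      = (∑ e : T.edgeSet, ∑ f : T.edgeSet, T.lineGraph.dist e f)
        + Fintype.card V * (Fintype.card V - 1) := by
  classical
  -- pointwise decomposition
  have hpoint : ∀ u v : V, T.dist u v
      = (if T.Adj u v then 1 else 0)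
        + (if u ≠ v ∧ ¬ T.Adj u v then T.dist u v else 0) := by
    intro u v
    by_cases hadj : T.Adj u v
    · simp [hadj, (SimpleGraph.dist_eq_one_iff_adj).2 hadj]
    · by_cases heq : u = v
      · subst heq; simp [hadj]
      · simp [hadj, heq]
  have hsplit : ∑ u : V, ∑ v : V, T.dist u v
      = (∑ u : V, ∑ v : V, if T.Adj u v then 1 else 0)
        + ∑ u : V, ∑ v : V, (if u ≠ v ∧ ¬ T.Adj u v then T.dist u v else 0) := by
    rw [← Finset.sum_add_distrib]
    refine Finset.sum_congr rfl fun u _ => ?_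
    rw [← Finset.sum_add_distrib]
    exact Finset.sum_congr rfl fun v _ => hpoint u v
  -- the adjacency part
  have hadjsum : (∑ u : V, ∑ v : V, if T.Adj u v then 1 else 0)
      = 2 * T.edgeFinset.card := by
    rw [← SimpleGraph.sum_degrees_eq_twice_card_edges]
    refine Finset.sum_congr rfl fun u _ => ?_
    rw [SimpleGraph.degree, SimpleGraph.neighborFinset_eq_filter, Finset.card_filter]
  -- the main part, as a sum over a filtered product
  set S : Finset (V × V) :=
    Finset.univ.filter (fun p : V × V => p.1 ≠ p.2 ∧ ¬ T.Adj p.1 p.2) with hS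
  have hmain : ∑ u : V, ∑ v : V, (if u ≠ v ∧ ¬ T.Adj u v then T.dist u v else 0)
      = ∑ p ∈ S, T.dist p.1 p.2 := by
    rw [hS, Finset.sum_filter]
    exact (Fintype.sum_prod_type
      (f := fun p : V × V => if p.1 ≠ p.2 ∧ ¬ T.Adj p.1 p.2 then T.dist p.1 p.2 else 0)).symm
  set Tg : Finset (T.edgeSet × T.edgeSet) :=
    Finset.univ.filter (fun q => q.1 ≠ q.2) with hTg
  have hbij : ∑ p ∈ S, T.dist p.1 p.2
      = ∑ q ∈ Tg, (T.lineGraph.dist q.1 q.2 + 1) := by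
    refine Finset.sum_bij
      (fun p hp => (Fe hT p.1 p.2 ((Finset.mem_filter.1 hp).2.1),
        Fe hT p.2 p.1 ((Finset.mem_filter.1 hp).2.1).symm)) ?_ ?_ ?_ ?_
    · intro p hp
      rw [hTg, Finset.mem_filter]
      exact ⟨Finset.mem_univ _,
        Fe_ne hT ((Finset.mem_filter.1 hp).2.1) ((Finset.mem_filter.1 hp).2.2)⟩
    · intro p hp p' hp' heq
      rw [Prod.mk.injEq] at heq
      obtain ⟨he1, he2⟩ := heq
      obtain ⟨hu, hv⟩ := Fe_inj hT ((Finset.mem_filter.1 hp).2.1)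
        ((Finset.mem_filter.1 hp').2.1) ((Finset.mem_filter.1 hp).2.2) he1 he2
      exact Prod.ext hu hv
    · intro q hq
      obtain ⟨u, v, h, hna, hfu, hfv⟩ :=
        Fe_surj hT q.1 q.2 ((Finset.mem_filter.1 hq).2)
      refine ⟨(u, v), Finset.mem_filter.2 ⟨Finset.mem_univ _, h, hna⟩, ?_⟩
      simp [hfu, hfv]
    · intro p hp
      exact dist_eq_ldist hT ((Finset.mem_filter.1 hp).2.1)
  have hTgsum : ∑ q ∈ Tg, (T.lineGraph.dist q.1 q.2 + 1)
      = (∑ e : T.edgeSet, ∑ f : T.edgeSet, T.lineGraph.dist e f) + Tg.card := by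
    rw [Finset.sum_add_distrib, Finset.sum_const, smul_eq_mul, mul_one]
    congr 1
    have hall : ∑ q : T.edgeSet × T.edgeSet, T.lineGraph.dist q.1 q.2
        = ∑ e : T.edgeSet, ∑ f : T.edgeSet, T.lineGraph.dist e f :=
      Fintype.sum_prod_type (f := fun q : T.edgeSet × T.edgeSet => T.lineGraph.dist q.1 q.2)
    rw [← hall]
    rw [← Finset.sum_filter_add_sum_filter_not Finset.univ (fun q => q.1 ≠ q.2)
      (fun q : T.edgeSet × T.edgeSet => T.lineGraph.dist q.1 q.2)]
    rw [← hTg]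
    have : ∑ q ∈ Finset.univ.filter (fun q : T.edgeSet × T.edgeSet => ¬ q.1 ≠ q.2),
        T.lineGraph.dist q.1 q.2 = 0 := by
      refine Finset.sum_eq_zero fun q hq => ?_
      have : q.1 = q.2 := not_not.1 (Finset.mem_filter.1 hq).2
      rw [this, SimpleGraph.dist_self]
    omega
  -- cardinalities
  have hm : Fintype.card T.edgeSet + 1 = Fintype.card V := by
    rw [← Set.toFinset_card]
    exact hT.card_edgeFinset
  have hedge : T.edgeFinset.card = Fintype.card T.edgeSet := Set.toFinset_card _
  have hTgcard : Tg.card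
      = Fintype.card T.edgeSet * Fintype.card T.edgeSet - Fintype.card T.edgeSet := by
    have : Tg = (Finset.univ : Finset T.edgeSet).offDiag := by
      ext q
      simp [hTg, Finset.mem_offDiag]
    rw [this, Finset.offDiag_card, Finset.card_univ]
  rw [hsplit, hadjsum, hmain, hbij, hTgsum, hTgcard, hedge]
  set m := Fintype.card T.edgeSet with hmm
  have hm1 : 1 ≤ m := by omega
  have hmsq : m ≤ m * m := Nat.le_mul_of_pos_left m hm1
  have hcard : Fintype.card V = m + 1 := by omega
  rw [hcard]
  simp only [Nat.add_sub_cancel]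
  zify [hmsq]
  ring

end Aux

theorem stmt_13 {V : Type*} [Fintype V] [DecidableEq V] (T : SimpleGraph V)
    [DecidableRel T.Adj] (hT : T.IsTree) (hn : 2 ≤ Fintype.card V) :
    wiener T = wiener T.lineGraph + (Fintype.card V).choose 2 := by
  have hsum := sum_dist_eq hT hn
  rw [wiener, wiener, hsum]
  set n := Fintype.card V with hN
  set A := ∑ e : T.edgeSet, ∑ f : T.edgeSet, T.lineGraph.dist e f with hA
  have h1 : n - 1 + 1 = n := by omega
  have heven : Even ((n - 1) * (n - 1 + 1)) := Nat.even_mul_succ_self _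
  rw [h1] at heven
  obtain ⟨k, hk⟩ := heven
  have hc : n.choose 2 = k := by
    rw [Nat.choose_two_right, Nat.mul_comm, hk]
    omega
  rw [Nat.mul_comm n (n - 1), hk, hc]
  have h2 : A + (k + k) = A + 2 * k := by ring
  rw [h2, Nat.add_mul_div_left _ _ (by norm_num : (0:ℕ) < 2)]
end

section
/- If T is a tree with radius r on n vertices, then ε(T) = ε(L(T)) + n + r − 1, where L(T) is the line graph of T. -/
open Finset

/-- The radius of a graph: the minimum eccentricity. -/
noncomputable def graphRad {V : Type*} [Fintype V] [Nonempty V]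
    (G : SimpleGraph V) : ℕ :=
  univ.inf' univ_nonempty (eccVert G)

open SimpleGraph Walk

namespace TreeEcc

variable {V : Type*} [DecidableEq V] {T : SimpleGraph V}

/-- In a tree, every path has length equal to the distance. -/
lemma path_len (hT : T.IsTree) {x y : V} {p : T.Walk x y} (hp : p.IsPath) :
    p.length = T.dist x y := by
  obtain ⟨q, hq, hlen⟩ := hT.isConnected.exists_path_of_dist x y
  have huniq := isAcyclic_iff_path_unique.mp hT.IsAcyclic (⟨p, hp⟩ : T.Path x y) ⟨q, hq⟩
  rw [← hlen]
  exact congrArg (fun r : T.Path x y => r.1.length) huniq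

lemma dist_adj (hT : T.IsTree) {x y : V} (h : T.Adj x y) : T.dist x y = 1 :=
  dist_eq_one_iff_adj.mpr h

/-- additivity of distance along a path -/
lemma add_of_mem_support (hT : T.IsTree) {x y m : V} {p : T.Walk x y} (hp : p.IsPath)
    (hm : m ∈ p.support) : T.dist x m + T.dist m y = T.dist x y := by
  rw [← path_len hT (hp.takeUntil hm), ← path_len hT (hp.dropUntil hm), ← path_len hT hp,
    ← Walk.length_append, Walk.take_spec]

/-- if distances are additive through m, then m lies on every path. -/
lemma mem_support_of_add (hT : T.IsTree) {x y m : V}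
    (h : T.dist x m + T.dist m y = T.dist x y) {p : T.Walk x y} (hp : p.IsPath) :
    m ∈ p.support := by
  obtain ⟨a, ha, hal⟩ := hT.isConnected.exists_path_of_dist x m
  obtain ⟨b, hb, hbl⟩ := hT.isConnected.exists_path_of_dist m y
  have hdisj : ∀ z, z ∈ a.support → z ∈ b.support → z = m := by
    intro z hza hzb
    have h1 := add_of_mem_support hT ha hza
    have h2 := add_of_mem_support hT hb hzb
    have ht := hT.isConnected.dist_triangle (u := x) (v := z) (w := y)
    have hc : T.dist z m = T.dist m z := dist_comm
    have h4 : T.dist z m = 0 := by omega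
    exact hT.isConnected.dist_eq_zero_iff.mp h4
  have hbt : b.support = m :: b.support.tail := b.support_eq_cons
  have hbnd : b.support.Nodup := hb.2
  have hpath : (a.append b).IsPath := by
    rw [Walk.isPath_def, Walk.support_append, List.nodup_append]
    refine ⟨ha.2, ?_, ?_⟩
    · rw [hbt] at hbnd; exact (List.nodup_cons.mp hbnd).2
    · intro z hza z' hzb hzz; subst hzz
      have hz : z ∈ b.support := by rw [hbt]; exact List.mem_cons_of_mem _ hzb
      have := hdisj z hza hz
      subst this
      rw [hbt] at hbnd
      exact (List.nodup_cons.mp hbnd).1 hzb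
  have huniq := isAcyclic_iff_path_unique.mp hT.IsAcyclic (⟨a.append b, hpath⟩ : T.Path x y) ⟨p, hp⟩
  have hm : m ∈ (a.append b).support := by
    rw [Walk.mem_support_append_iff]; left; exact Walk.end_mem_support a
  have : (a.append b).support = p.support := congrArg (fun r : T.Path x y => r.1.support) huniq
  rwa [this] at hm


/-- For an edge (p,v) of a tree and any w, the distances from p and v to w differ by one. -/
lemma dist_succ_or (hT : T.IsTree) {p v : V} (h : T.Adj p v) (w : V) :
    T.dist p w + 1 = T.dist v w ∨ T.dist v w + 1 = T.dist p w := by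
  obtain ⟨P, hP, hPl⟩ := hT.isConnected.exists_path_of_dist w v
  by_cases hp : p ∈ P.support
  · left
    have := add_of_mem_support hT hP hp
    have h1 : T.dist p v = 1 := dist_adj hT h
    have c1 : T.dist p w = T.dist w p := dist_comm
    have c2 : T.dist v w = T.dist w v := dist_comm
    omega
  · right
    have hcp : (P.concat h.symm).IsPath := by
      rw [Walk.isPath_def, Walk.support_concat, List.nodup_append]
      refine ⟨hP.2, List.nodup_singleton p, ?_⟩
      intro z hz z' hzp hzz; subst hzz
      simp only [List.mem_singleton] at hzp
      subst hzp
      exact hp hz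
    have := path_len hT hcp
    rw [Walk.length_concat, hPl] at this
    have c1 : T.dist p w = T.dist w p := dist_comm
    have c2 : T.dist v w = T.dist w v := dist_comm
    omega


section Ecc
variable [Fintype V]

lemma dist_le_ecc (v w : V) : T.dist v w ≤ eccVert T v := Finset.le_sup (mem_univ w)

lemma exists_ecc [Nonempty V] (v : V) : ∃ w, eccVert T v = T.dist v w := by
  obtain ⟨w, _, hw⟩ := Finset.exists_mem_eq_sup univ univ_nonempty (T.dist v)
  exact ⟨w, hw⟩

lemma one_le_ecc (hT : T.IsTree) (hn : 2 ≤ Fintype.card V) (u : V) : 1 ≤ eccVert T u := by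
  obtain ⟨w, hw⟩ := Fintype.exists_ne_of_one_lt_card (by omega) u
  have h1 : 1 ≤ T.dist u w := hT.isConnected.pos_dist_of_ne (Ne.symm hw)
  exact le_trans h1 (dist_le_ecc u w)

/-- Key lemma for the edge/vertex bijection: every vertex `v ≠ c` (for `c` a center)
has a neighbor `p` one step closer to `c` with `eccVert T p ≤ eccVert T v`. -/
lemma exists_parent (hT : T.IsTree) {c : V} (hc : ∀ u, eccVert T c ≤ eccVert T u)
    {v : V} (hv : v ≠ c) :
    ∃ p, T.Adj v p ∧ T.dist p c + 1 = T.dist v c ∧ eccVert T p ≤ eccVert T v := by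
  have hd : T.dist v c ≠ 0 := by
    have := hT.isConnected.pos_dist_of_ne hv; omega
  obtain ⟨P, hP, hPl⟩ := hT.isConnected.exists_path_of_dist v c
  cases P with
  | nil => exact absurd rfl hv
  | cons h q =>
    rename_i p
    rw [Walk.cons_isPath_iff] at hP
    obtain ⟨hq, hvq⟩ := hP
    have hql : q.length = T.dist p c := path_len hT hq
    have hpc : T.dist p c + 1 = T.dist v c := by
      rw [Walk.length_cons] at hPl; omega
    refine ⟨p, h, hpc, ?_⟩
    apply Finset.sup_le
    intro w _
    rcases dist_succ_or hT h.symm w with hcase | hcase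
    · -- d p w + 1 = d v w
      have := dist_le_ecc (T := T) v w; omega
    · -- d v w + 1 = d p w : show d p w ≤ d c w ≤ ecc c ≤ ecc v
      have hle : T.dist p w ≤ T.dist c w := by
        obtain ⟨P', hP', hP'l⟩ := hT.isConnected.exists_path_of_dist c w
        by_cases hvP : v ∈ P'.support
        · have := add_of_mem_support hT hP' hvP
          have hcv : 1 ≤ T.dist c v := hT.isConnected.pos_dist_of_ne (Ne.symm hv)
          have hc1 : T.dist c v = T.dist v c := dist_comm
          have hc2 : T.dist v w = T.dist w v := dist_comm
          omega
        · by_cases hpP : p ∈ P'.support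
          · have := add_of_mem_support hT hP' hpP
            omega
          · -- contradiction : v must lie on every p-w path, but q ++ P' avoids v
            exfalso
            have hpv : T.dist p v = 1 := dist_adj hT h.symm
            have hadd : T.dist p v + T.dist v w = T.dist p w := by omega
            set W := (q.append P').bypass with hW
            have hWp : W.IsPath := Walk.bypass_isPath _
            have hmem := mem_support_of_add hT hadd hWp
            have hsub := Walk.support_bypass_subset (q.append P')
            have := hsub hmem
            rw [Walk.mem_support_append_iff] at this
            rcases this with h' | h'
            · exact hvq h'
            · exact hvP h'
      calc T.dist p w ≤ T.dist c w := hle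
        _ ≤ eccVert T c := dist_le_ecc c w
        _ ≤ eccVert T v := hc v


/-- max of eccentricities of the endpoints of an edge -/
noncomputable def maxEcc (T : SimpleGraph V) [Fintype V] : Sym2 V → ℕ :=
  Sym2.lift ⟨fun a b => max (eccVert T a) (eccVert T b), fun a b => by simp [max_comm]⟩

variable [DecidableRel T.Adj]

lemma sum_maxEcc (hT : T.IsTree) {c : V} (hc : ∀ u, eccVert T c ≤ eccVert T u) :
    ∑ e ∈ T.edgeFinset, maxEcc T e + eccVert T c = eccSum T := by
  classical
  have key : ∀ v ∈ univ.erase c, ∃ p, T.Adj v p ∧ T.dist p c + 1 = T.dist v c ∧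
      eccVert T p ≤ eccVert T v := by
    intro v hv
    exact exists_parent hT hc (Finset.mem_erase.mp hv).1
  choose pa hpa1 hpa2 hpa3 using key
  have hsum : ∑ v ∈ univ.erase c, eccVert T v = ∑ e ∈ T.edgeFinset, maxEcc T e := by
    apply Finset.sum_bij (i := fun v hv => s(v, pa v hv))
    · intro v hv
      rw [mem_edgeFinset, SimpleGraph.mem_edgeSet]
      exact hpa1 v hv
    · intro v hv v' hv' heq
      rw [Sym2.eq_iff] at heq
      rcases heq with ⟨rfl, -⟩ | ⟨h1, h2⟩
      · rfl
      · exfalso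
        have d1 := hpa2 v hv
        have d2 := hpa2 v' hv'
        rw [h2] at d1
        rw [← h1] at d2
        omega
    · -- surjectivity via cardinality
      have hcard : T.edgeFinset.card ≤ (univ.erase c).card := by
        have h1 := hT.card_edgeFinset
        have h2 : (univ.erase c).card = Fintype.card V - 1 := by
          rw [Finset.card_erase_of_mem (mem_univ c), Finset.card_univ]
        omega
      intro b hb
      obtain ⟨a, ha, hab⟩ := Finset.surj_on_of_inj_on_of_card_le _
        (fun v hv => by rw [mem_edgeFinset, SimpleGraph.mem_edgeSet]; exact hpa1 v hv)
        (fun w w' hw hw' heq => by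
          rw [Sym2.eq_iff] at heq
          rcases heq with ⟨rfl, -⟩ | ⟨h1, h2⟩
          · rfl
          · exfalso
            have d1 := hpa2 w hw
            have d2 := hpa2 w' hw'
            rw [h2] at d1
            rw [← h1] at d2
            omega) hcard b hb
      exact ⟨a, ha, hab.symm⟩
    · intro v hv
      simp only [maxEcc, Sym2.lift_mk]
      exact (max_eq_left (hpa3 v hv)).symm
  have : ∑ v ∈ univ.erase c, eccVert T v + eccVert T c = eccSum T := by
    rw [eccSum, ← Finset.sum_erase_add univ _ (mem_univ c)]
  omega


lemma edge_rep (e : T.edgeSet) : ∃ u v, T.Adj u v ∧ (e : Sym2 V) = s(u, v) := by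
  obtain ⟨es, he⟩ := e
  induction es with
  | _ u v => exact ⟨u, v, (T.mem_edgeSet).mp he, rfl⟩

lemma mem_edge_dist_le_one (e : T.edgeSet) {a b : V}
    (ha : a ∈ (e : Sym2 V)) (hb : b ∈ (e : Sym2 V)) : T.dist a b ≤ 1 := by
  obtain ⟨u, v, huv, he⟩ := edge_rep e
  rw [he, Sym2.mem_iff] at ha hb
  have h1 : T.dist u v = 1 := dist_eq_one_iff_adj.mpr huv
  have h2 : T.dist v u = 1 := dist_eq_one_iff_adj.mpr huv.symm
  rcases ha with rfl | rfl <;> rcases hb with rfl | rfl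
  · simp [SimpleGraph.dist_self]
  · omega
  · omega
  · simp [SimpleGraph.dist_self]

lemma lwalk {u x : V} (W : T.Walk u x) :
    ∀ (e f : T.edgeSet), u ∈ (e : Sym2 V) → x ∈ (f : Sym2 V) →
      ∃ Ω : T.lineGraph.Walk e f, Ω.length ≤ W.length + 1 := by
  induction W with
  | nil =>
    intro e f he hf
    by_cases hef : e = f
    · subst hef; exact ⟨Walk.nil, by simp⟩
    · refine ⟨Walk.cons (lineGraph_adj_iff_exists.mpr ⟨hef, _, he, hf⟩) Walk.nil, by simp⟩
  | cons h W' ih =>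
    rename_i a b _
    intro e f he hf
    have hg : s(a, b) ∈ T.edgeSet := (T.mem_edgeSet).mpr h
    obtain ⟨Ω', hΩ'⟩ := ih ⟨s(a, b), hg⟩ f (Sym2.mem_mk_right a b) hf
    by_cases heg : e = (⟨s(a, b), hg⟩ : T.edgeSet)
    · cases heg
      exact ⟨Ω', by simp only [Walk.length_cons]; omega⟩
    · refine ⟨Walk.cons (lineGraph_adj_iff_exists.mpr ⟨heg, a, he, Sym2.mem_mk_left a b⟩) Ω', ?_⟩
      simp only [Walk.length_cons]
      omega

lemma ldist_le (hT : T.IsTree) (e f : T.edgeSet) {u x : V}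
    (hu : u ∈ (e : Sym2 V)) (hx : x ∈ (f : Sym2 V)) :
    T.lineGraph.dist e f ≤ T.dist u x + 1 := by
  obtain ⟨W, hW⟩ := (hT.isConnected u x).exists_walk_length_eq_dist
  obtain ⟨Ω, hΩ⟩ := lwalk W e f hu hx
  calc T.lineGraph.dist e f ≤ Ω.length := SimpleGraph.dist_le Ω
    _ ≤ W.length + 1 := hΩ
    _ = T.dist u x + 1 := by rw [hW]

lemma lreach (hT : T.IsTree) (e f : T.edgeSet) : T.lineGraph.Reachable e f := by
  obtain ⟨u, v, huv, he⟩ := edge_rep e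
  obtain ⟨x, y, hxy, hf⟩ := edge_rep f
  obtain ⟨W⟩ := hT.isConnected u x
  obtain ⟨Ω, -⟩ := lwalk W e f (by rw [he]; exact Sym2.mem_mk_left u v)
    (by rw [hf]; exact Sym2.mem_mk_left x y)
  exact ⟨Ω⟩

lemma lproj (hT : T.IsTree) {e f : T.edgeSet} (Ω : T.lineGraph.Walk e f)
    (hΩ : Ω.length ≠ 0) :
    ∃ a b, a ∈ (e : Sym2 V) ∧ b ∈ (f : Sym2 V) ∧ T.dist a b + 1 ≤ Ω.length := by
  induction Ω with
  | nil => simp at hΩ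
  | cons hadj Ω' ih =>
    rename_i e g _
    obtain ⟨-, sh, hse, hsg⟩ := lineGraph_adj_iff_exists.mp hadj
    by_cases h0 : Ω'.length = 0
    · have hgf := Ω'.eq_of_length_eq_zero h0
      subst hgf
      exact ⟨sh, sh, hse, hsg, by simp [SimpleGraph.dist_self, Walk.length_cons, h0]⟩
    · obtain ⟨a', b, ha', hb, hd⟩ := ih h0
      refine ⟨sh, b, hse, hb, ?_⟩
      have ht : T.dist sh b ≤ T.dist sh a' + T.dist a' b := hT.isConnected.dist_triangle
      have h1 : T.dist sh a' ≤ 1 := mem_edge_dist_le_one _ hsg ha'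
      simp only [Walk.length_cons]
      omega


lemma ecc_le_eccL (hT : T.IsTree) (e : T.edgeSet) {u : V} (hu : u ∈ (e : Sym2 V)) :
    eccVert T u ≤ eccVert T.lineGraph e + 1 := by
  haveI : Nonempty V := ⟨u⟩
  obtain ⟨w, hw⟩ := exists_ecc (T := T) u
  by_cases h0 : eccVert T u = 0
  · omega
  have hwu : w ≠ u := by rintro rfl; rw [hw, SimpleGraph.dist_self] at h0; exact h0 rfl
  obtain ⟨P, hP, hPl⟩ := hT.isConnected.exists_path_of_dist w u
  cases P with
  | nil => exact absurd rfl hwu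
  | cons h q =>
    rename_i y
    have hf : s(w, y) ∈ T.edgeSet := (T.mem_edgeSet).mpr h
    set f : T.edgeSet := ⟨s(w, y), hf⟩ with hfdef
    have hwf : w ∈ (f : Sym2 V) := Sym2.mem_mk_left w y
    by_cases hef : e = f
    · rw [hef] at hu
      have : T.dist u w ≤ 1 := mem_edge_dist_le_one f hu hwf
      omega
    · have hdne : T.lineGraph.dist e f ≠ 0 := by
        have := (lreach hT e f).pos_dist_of_ne hef; omega
      obtain ⟨Ω, hΩl⟩ := SimpleGraph.exists_walk_of_dist_ne_zero hdne
      obtain ⟨a, b, ha, hb, hab⟩ := lproj hT Ω (by omega)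
      have h1 : T.dist u a ≤ 1 := mem_edge_dist_le_one e hu ha
      have h2 : T.dist b w ≤ 1 := mem_edge_dist_le_one f hb hwf
      have ht1 : T.dist u w ≤ T.dist u a + T.dist a w := hT.isConnected.dist_triangle
      have ht2 : T.dist a w ≤ T.dist a b + T.dist b w := hT.isConnected.dist_triangle
      have h3 : T.lineGraph.dist e f ≤ eccVert T.lineGraph e := dist_le_ecc e f
      omega

lemma key_ub' (hT : T.IsTree) {u v x y : V} (huv : T.Adj u v) (hxy : T.Adj x y)
    (hne : s(u, v) ≠ s(x, y)) (hxyu : T.dist u x + 1 = T.dist u y) :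
    ∃ a b, (a = u ∨ a = v) ∧ (b = x ∨ b = y) ∧
      T.dist a b + 2 ≤ max (eccVert T u) (eccVert T v) := by
  set k := eccVert T u with hk
  have hbx : T.dist u y ≤ k := dist_le_ecc u y
  have hecv : T.dist v y ≤ eccVert T v := dist_le_ecc v y
  by_cases hB : T.dist u y = k
  · rcases dist_succ_or hT huv y with hB1 | hB2
    · -- d u y + 1 = d v y, so ecc v ≥ k + 1
      refine ⟨u, x, Or.inl rfl, Or.inl rfl, ?_⟩
      have : k + 1 ≤ eccVert T v := by omega
      have := le_max_right (eccVert T u) (eccVert T v)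
      omega
    · -- d v y = k - 1
      rcases dist_succ_or hT huv x with hB2b | hB2a
      · -- d u x + 1 = d v x : impossible
        exfalso
        have hk1 : 1 ≤ k := by
          have h1 : T.dist u v = 1 := dist_adj hT huv
          have := dist_le_ecc (T := T) u v
          omega
        by_cases hk2 : k = 1
        · -- then u = x and v = y
          have hux : u = x := hT.isConnected.dist_eq_zero_iff.mp (by omega)
          have hvy : v = y := hT.isConnected.dist_eq_zero_iff.mp (by omega)
          exact hne (by rw [hux, hvy])
        · -- k ≥ 2
          obtain ⟨P, hP, hPl⟩ := hT.isConnected.exists_path_of_dist v x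
          have hvu : T.dist v u = 1 := dist_adj hT huv.symm
          have hyx : T.dist y x = 1 := dist_adj hT hxy.symm
          have hvy' : T.dist v y = T.dist u y - 1 := by omega
          have haddu : T.dist v u + T.dist u x = T.dist v x := by omega
          have haddy : T.dist v y + T.dist y x = T.dist v x := by omega
          have huP : u ∈ P.support := mem_support_of_add hT haddu hP
          have hyP : y ∈ P.support := mem_support_of_add hT haddy hP
          rw [← Walk.take_spec P hyP, Walk.mem_support_append_iff] at huP
          rcases huP with h' | h'
          · have := add_of_mem_support hT (hP.takeUntil hyP) h'
            have hcomm : T.dist u y = T.dist y u := dist_comm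
            omega
          · have := add_of_mem_support hT (hP.dropUntil hyP) h'
            have hcomm : T.dist u y = T.dist y u := dist_comm
            omega
      · -- d v x + 1 = d u x, so d v x = k - 2
        refine ⟨v, x, Or.inr rfl, Or.inl rfl, ?_⟩
        have := le_max_left (eccVert T u) (eccVert T v)
        omega
  · -- d u y < k : easy
    refine ⟨u, x, Or.inl rfl, Or.inl rfl, ?_⟩
    have := le_max_left (eccVert T u) (eccVert T v)
    omega

lemma key_ub (hT : T.IsTree) {u v x y : V} (huv : T.Adj u v) (hxy : T.Adj x y)
    (hne : s(u, v) ≠ s(x, y)) :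
    ∃ a b, (a = u ∨ a = v) ∧ (b = x ∨ b = y) ∧
      T.dist a b + 2 ≤ max (eccVert T u) (eccVert T v) := by
  rcases dist_succ_or hT hxy u with hc | hc
  · -- d x u + 1 = d y u
    have h' : T.dist u x + 1 = T.dist u y := by
      have c1 : T.dist u x = T.dist x u := dist_comm
      have c2 : T.dist u y = T.dist y u := dist_comm
      omega
    exact key_ub' hT huv hxy hne h'
  · have h' : T.dist u y + 1 = T.dist u x := by
      have c1 : T.dist u x = T.dist x u := dist_comm
      have c2 : T.dist u y = T.dist y u := dist_comm
      omega
    have hne' : s(u, v) ≠ s(y, x) := by rw [Sym2.eq_swap (a := y)]; exact hne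
    obtain ⟨a, b, ha, hb, hab⟩ := key_ub' hT huv hxy.symm hne' h'
    exact ⟨a, b, ha, hb.symm, hab⟩

lemma eccL_eq (hT : T.IsTree) (e : T.edgeSet) {u v : V} (huv : T.Adj u v)
    (he : (e : Sym2 V) = s(u, v)) :
    eccVert T.lineGraph e + 1 = max (eccVert T u) (eccVert T v) := by
  have hM : 1 ≤ max (eccVert T u) (eccVert T v) := by
    have h1 : T.dist u v = 1 := dist_adj hT huv
    have := dist_le_ecc (T := T) u v
    have := le_max_left (eccVert T u) (eccVert T v)
    omega
  have hue : u ∈ (e : Sym2 V) := by rw [he]; exact Sym2.mem_mk_left u v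
  have hve : v ∈ (e : Sym2 V) := by rw [he]; exact Sym2.mem_mk_right u v
  apply le_antisymm
  · have hlt : eccVert T.lineGraph e < max (eccVert T u) (eccVert T v) := by
      rw [eccVert]
      rw [Finset.sup_lt_iff (by simp only [bot_eq_zero]; omega : ⊥ < max (eccVert T u) (eccVert T v))]
      intro f _
      obtain ⟨x, y, hxy, hf⟩ := edge_rep f
      by_cases hef : e = f
      · subst hef
        rw [SimpleGraph.dist_self]
        omega
      · have hne : s(u, v) ≠ s(x, y) := by
          rw [← he, ← hf]
          exact fun hh => hef (Subtype.ext hh)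
        obtain ⟨a, b, ha, hb, hab⟩ := key_ub hT huv hxy hne
        have hae : a ∈ (e : Sym2 V) := by
          rw [he]; rcases ha with rfl | rfl
          exacts [Sym2.mem_mk_left a v, Sym2.mem_mk_right u a]
        have hbf : b ∈ (f : Sym2 V) := by
          rw [hf]; rcases hb with rfl | rfl
          exacts [Sym2.mem_mk_left b y, Sym2.mem_mk_right x b]
        have h1 : T.lineGraph.dist e f ≤ T.dist a b + 1 := ldist_le hT e f hae hbf
        omega
    omega
  · exact max_le (ecc_le_eccL hT e hue) (ecc_le_eccL hT e hve)


lemma maxEcc_eq (hT : T.IsTree) (e : T.edgeSet) :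
    maxEcc T (e : Sym2 V) = eccVert T.lineGraph e + 1 := by
  obtain ⟨u, v, huv, he⟩ := edge_rep e
  have h := eccL_eq hT e huv he
  rw [he]
  simp only [maxEcc, Sym2.lift_mk]
  omega

end Ecc
end TreeEcc

theorem stmt_14 {V : Type*} [Fintype V] [Nonempty V] [DecidableEq V]
    (T : SimpleGraph V) [DecidableRel T.Adj] (hT : T.IsTree)
    (hn : 2 ≤ Fintype.card V) :
    (eccSum T : ℤ) = eccSum T.lineGraph + Fintype.card V + graphRad T - 1 := by
  classical
  obtain ⟨c, -, hrc⟩ := Finset.exists_mem_eq_inf' (univ_nonempty) (eccVert T)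
  have hc : ∀ u, eccVert T c ≤ eccVert T u := fun u => by
    rw [← hrc]; exact Finset.inf'_le _ (mem_univ u)
  have hrad : graphRad T = eccVert T c := hrc
  have hsum := TreeEcc.sum_maxEcc hT hc
  have hline : ∑ e ∈ T.edgeFinset, TreeEcc.maxEcc T e
      = eccSum T.lineGraph + T.edgeFinset.card := by
    rw [Finset.sum_subtype (F := (inferInstance : Fintype T.edgeSet)) T.edgeFinset
      (fun x => SimpleGraph.mem_edgeFinset) (TreeEcc.maxEcc T)]
    have : ∀ e : T.edgeSet, TreeEcc.maxEcc T (e : Sym2 V)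
        = eccVert T.lineGraph e + 1 := fun e => TreeEcc.maxEcc_eq hT e
    rw [Finset.sum_congr rfl (fun e _ => this e), Finset.sum_add_distrib]
    simp [eccSum, SimpleGraph.edgeFinset, Set.toFinset_card, Finset.card_univ]
  have hcard := hT.card_edgeFinset
  rw [hline] at hsum
  rw [hrad]
  push_cast
  omega
end

section
/- If T is a tree with radius r on n vertices, then W(T) − ε(T) = W(L(T)) − ε(L(T)) + n(n−3)/2 − r + 1. -/
open Finset

open SimpleGraph Walk

namespace TreeProof

variable {V : Type*} [DecidableEq V] {T : SimpleGraph V}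

lemma path_len (hT : T.IsTree) {u v : V} {p : T.Walk u v} (hp : p.IsPath) :
    p.length = T.dist u v := by
  obtain ⟨q, hq, hql⟩ := hT.isConnected.exists_path_of_dist u v
  rw [(hT.existsUnique_path u v).unique hp hq, hql]

noncomputable def tpath (hT : T.IsTree) (u v : V) : T.Walk u v :=
  (hT.isConnected.exists_path_of_dist u v).choose

lemma tpath_isPath (hT : T.IsTree) (u v : V) : (tpath hT u v).IsPath :=
  (hT.isConnected.exists_path_of_dist u v).choose_spec.1

lemma tpath_len (hT : T.IsTree) (u v : V) : (tpath hT u v).length = T.dist u v :=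
  path_len hT (tpath_isPath hT u v)

lemma tpath_eq (hT : T.IsTree) {u v : V} {p : T.Walk u v} (hp : p.IsPath) :
    p = tpath hT u v :=
  (hT.existsUnique_path u v).unique hp (tpath_isPath hT u v)

lemma bw_of_mem (hT : T.IsTree) {u v z : V} {p : T.Walk u v}
    (hlen : p.length = T.dist u v) (hz : z ∈ p.support) :
    T.dist u z + T.dist z v = T.dist u v := by
  have h1 := dist_le (p.takeUntil z hz)
  have h2 := dist_le (p.dropUntil z hz)
  have h3 : (p.takeUntil z hz).length + (p.dropUntil z hz).length = p.length := by
    rw [← length_append, take_spec]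
  have h4 := hT.isConnected.dist_triangle (u := u) (v := z) (w := v)
  omega

lemma mem_tpath_of_bw (hT : T.IsTree) {u v z : V}
    (h : T.dist u z + T.dist z v = T.dist u v) : z ∈ (tpath hT u v).support := by
  have hlen : ((tpath hT u z).append (tpath hT z v)).length = T.dist u v := by
    rw [length_append, tpath_len, tpath_len, h]
  have hp : ((tpath hT u z).append (tpath hT z v)).IsPath :=
    isPath_of_length_eq_dist _ hlen
  have heq := tpath_eq hT hp
  rw [← heq]
  rw [mem_support_append_iff]
  exact Or.inl (end_mem_support _)

lemma dist_adj (hT : T.IsTree) {u v : V} (h : T.Adj u v) : T.dist u v = 1 :=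
  dist_eq_one_iff_adj.2 h

lemma adj_dist_cases (hT : T.IsTree) {u v : V} (huv : T.Adj u v) (w : V) :
    T.dist v w = T.dist u w + 1 ∨ T.dist v w + 1 = T.dist u w := by
  obtain ⟨p, hp, hl⟩ := hT.isConnected.exists_path_of_dist u w
  by_cases hv : v ∈ p.support
  · right
    have hb := bw_of_mem hT hl hv
    have h1 : T.dist u v = 1 := dist_adj hT huv
    omega
  · left
    have hp2 : (p.cons huv.symm).IsPath := hp.cons hv
    have h2 := path_len hT hp2
    rw [length_cons, hl] at h2
    have hc : T.dist v w = T.dist w v := SimpleGraph.dist_comm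
    have hc2 : T.dist u w = T.dist w u := SimpleGraph.dist_comm
    omega

noncomputable def fstep (hT : T.IsTree) (u v : V) : V := (tpath hT u v).getVert 1

lemma tpath_not_nil (hT : T.IsTree) {u v : V} (huv : u ≠ v) : ¬ (tpath hT u v).Nil := by
  rw [not_nil_iff_lt_length, tpath_len]
  exact hT.isConnected.pos_dist_of_ne huv

lemma fstep_adj (hT : T.IsTree) {u v : V} (huv : u ≠ v) : T.Adj u (fstep hT u v) :=
  adj_snd (tpath_not_nil hT huv)

lemma fstep_mem (hT : T.IsTree) {u v : V} (huv : u ≠ v) :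
    fstep hT u v ∈ (tpath hT u v).support := by
  rw [mem_support_iff_exists_getVert]
  refine ⟨1, rfl, ?_⟩
  rw [tpath_len]
  exact hT.isConnected.pos_dist_of_ne huv

lemma fstep_dist (hT : T.IsTree) {u v : V} (huv : u ≠ v) :
    T.dist (fstep hT u v) v + 1 = T.dist u v := by
  have hb := bw_of_mem hT (tpath_len hT u v) (fstep_mem hT huv)
  have h1 : T.dist u (fstep hT u v) = 1 := dist_adj hT (fstep_adj hT huv)
  omega

lemma fstep_unique (hT : T.IsTree) {u v x : V} (hx : T.Adj u x)
    (hd : T.dist x v + 1 = T.dist u v) : x = fstep hT u v := by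
  have hlen : ((tpath hT x v).cons hx).length = T.dist u v := by
    rw [length_cons, tpath_len, hd]
  have hp : ((tpath hT x v).cons hx).IsPath := isPath_of_length_eq_dist _ hlen
  have heq := tpath_eq hT hp
  have : ((tpath hT x v).cons hx).getVert 1 = x := by
    rw [getVert_cons_succ, getVert_zero]
  rw [heq] at this
  exact this.symm

lemma tpath_reverse (hT : T.IsTree) (u v : V) :
    (tpath hT u v).reverse = tpath hT v u :=
  tpath_eq hT (tpath_isPath hT u v).reverse

lemma getVert_one_takeUntil {u v z : V} (p : T.Walk u v) (hz : z ∈ p.support)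
    (hzu : z ≠ u) : (p.takeUntil z hz).getVert 1 = p.getVert 1 := by
  conv_rhs => rw [← take_spec p hz]
  rw [getVert_append]
  have h0 : (p.takeUntil z hz).length ≠ 0 := by
    intro h
    exact hzu (eq_of_length_eq_zero h).symm
  by_cases h1 : 1 < (p.takeUntil z hz).length
  · simp [h1]
  · have hl : (p.takeUntil z hz).length = 1 := by omega
    simp only [h1, if_false]
    rw [hl]
    simp only [Nat.sub_self, getVert_zero]
    have := getVert_length (p.takeUntil z hz)
    rw [hl] at this
    rw [this]

lemma start_not_mem_support_tail {u v : V} {p : T.Walk u v} (hp : p.IsPath) :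
    u ∉ p.support.tail := by
  have hnd := (isPath_def _).1 hp
  rw [support_eq_cons] at hnd
  exact (List.nodup_cons.1 hnd).1

lemma sharedFirstStep (hT : T.IsTree) {u v c : V} (huv : u ≠ v) (huc : u ≠ c) :
    fstep hT u v = fstep hT u c ∨ T.dist v u + T.dist u c = T.dist v c := by
  by_cases hx : fstep hT u v = fstep hT u c
  · exact Or.inl hx
  right
  set P := tpath hT u v with hP
  set Q := tpath hT u c with hQ
  have hdisj : ∀ z ∈ P.support, z ∈ Q.support → z = u := by
    intro z hzP hzQ
    by_contra hzu
    apply hx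
    have h1 : P.takeUntil z hzP = Q.takeUntil z hzQ :=
      (hT.existsUnique_path u z).unique ((tpath_isPath hT u v).takeUntil hzP)
        ((tpath_isPath hT u c).takeUntil hzQ)
    show P.getVert 1 = Q.getVert 1
    rw [← getVert_one_takeUntil P hzP hzu, h1, getVert_one_takeUntil Q hzQ hzu]
  have hpath : (P.reverse.append Q).IsPath := by
    rw [isPath_def, support_append]
    refine List.Nodup.append ?_ ?_ ?_
    · exact isPath_def _ |>.1 (tpath_isPath hT u v).reverse
    · exact ((isPath_def _).1 (tpath_isPath hT u c)).tail
    · intro z hz1 hz2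
      rw [support_reverse, List.mem_reverse] at hz1
      have hz2' : z ∈ Q.support := List.mem_of_mem_tail hz2
      have hzu : z = u := hdisj z hz1 hz2'
      rw [hzu] at hz2
      exact start_not_mem_support_tail (tpath_isPath hT u c) hz2
  have hlen := path_len hT hpath
  rw [length_append, length_reverse, tpath_len, tpath_len] at hlen
  have hc1 : T.dist v u = T.dist u v := SimpleGraph.dist_comm
  omega

lemma fstep_or_between (hT : T.IsTree) {u c : V} (huc : u ≠ c) (v : V) :
    T.dist (fstep hT u c) v + 1 = T.dist u v ∨
      T.dist v u + T.dist u c = T.dist v c := by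
  by_cases huv : u = v
  · right; subst huv; simp [dist_comm]
  rcases sharedFirstStep hT huv huc with h | h
  · left; rw [← h]; exact fstep_dist hT huv
  · exact Or.inr h


lemma edge_two_mem_dist_le (hT : T.IsTree) {s : Sym2 V} (hs : s ∈ T.edgeSet) {z p : V}
    (hz : z ∈ s) (hp : p ∈ s) : T.dist z p ≤ 1 := by
  induction s using Sym2.ind with
  | _ a b =>
    have hab : T.Adj a b := (T.mem_edgeSet).1 hs
    rw [Sym2.mem_iff] at hz hp
    rcases hz with rfl | rfl <;> rcases hp with rfl | rfl
    · simp [SimpleGraph.dist_self]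
    · exact le_of_eq (dist_adj hT hab)
    · exact le_of_eq (dist_adj hT hab.symm)
    · simp [SimpleGraph.dist_self]

lemma line_walk_ub (hT : T.IsTree) (x y : V) (hxy : T.Adj x y) : ∀ (k : ℕ) (a b : V)
    (hab : T.Adj a b), T.dist a x = k →
    ∃ w : T.lineGraph.Walk ⟨s(a,b), (T.mem_edgeSet).2 hab⟩ ⟨s(x,y), (T.mem_edgeSet).2 hxy⟩,
      w.length ≤ k + 1 := by
  intro k
  induction k with
  | zero =>
    intro a b hab hd
    have hax : a = x := (hT.isConnected.dist_eq_zero_iff.1 hd)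
    by_cases hef : (⟨s(a,b), (T.mem_edgeSet).2 hab⟩ : T.edgeSet) = ⟨s(x,y), (T.mem_edgeSet).2 hxy⟩
    · exact ⟨(Walk.nil).copy rfl hef, by simp⟩
    · have hadj : T.lineGraph.Adj ⟨s(a,b), (T.mem_edgeSet).2 hab⟩ ⟨s(x,y), (T.mem_edgeSet).2 hxy⟩ := by
        rw [lineGraph_adj_iff_exists]
        refine ⟨hef, a, ?_, ?_⟩
        · exact Sym2.mem_iff.2 (Or.inl rfl)
        · exact Sym2.mem_iff.2 (Or.inl hax)
      exact ⟨Walk.cons hadj Walk.nil, by simp⟩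
  | succ k ih =>
    intro a b hab hd
    have hax : a ≠ x := by
      intro h; rw [h] at hd; simp [SimpleGraph.dist_self] at hd
    have hz := fstep_dist hT hax
    have hzadj := fstep_adj hT hax
    set z := fstep hT a x with hzdef
    have hdz : T.dist z x = k := by omega
    obtain ⟨w, hw⟩ := ih z a hzadj.symm hdz
    by_cases heg : (⟨s(a,b), (T.mem_edgeSet).2 hab⟩ : T.edgeSet) = ⟨s(z,a), (T.mem_edgeSet).2 hzadj.symm⟩
    · refine ⟨(w.copy heg.symm rfl), ?_⟩
      rw [Walk.length_copy]
      omega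
    · have hadj : T.lineGraph.Adj ⟨s(a,b), (T.mem_edgeSet).2 hab⟩ ⟨s(z,a), (T.mem_edgeSet).2 hzadj.symm⟩ := by
        rw [lineGraph_adj_iff_exists]
        refine ⟨heg, a, ?_, ?_⟩
        · exact Sym2.mem_iff.2 (Or.inl rfl)
        · exact Sym2.mem_iff.2 (Or.inr rfl)
      refine ⟨Walk.cons hadj w, ?_⟩
      rw [Walk.length_cons]
      omega

lemma line_walk_lb (hT : T.IsTree) {e f : T.edgeSet} (w : T.lineGraph.Walk e f)
    (hef : e ≠ f) :
    ∃ p ∈ (e : Sym2 V), ∃ q ∈ (f : Sym2 V), T.dist p q + 1 ≤ w.length := by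
  induction w with
  | nil => exact absurd rfl hef
  | @cons e g f h w ih =>
    obtain ⟨-, z, hze, hzg⟩ := lineGraph_adj_iff_exists.1 h
    by_cases hgf : g = f
    · subst hgf
      refine ⟨z, hze, z, hzg, ?_⟩
      simp [SimpleGraph.dist_self]
    · obtain ⟨p, hp, q, hq, hlen⟩ := ih hgf
      refine ⟨z, hze, q, hq, ?_⟩
      have hzp : T.dist z p ≤ 1 := edge_two_mem_dist_le hT g.2 hzg hp
      have htri : T.dist z q ≤ T.dist z p + T.dist p q := hT.isConnected.dist_triangle
      rw [Walk.length_cons]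
      omega

lemma line_dist_eq (hT : T.IsTree) {e f : T.edgeSet} {a b x y : V}
    (he : (e : Sym2 V) = s(a,b)) (hf : (f : Sym2 V) = s(x,y)) (hef : e ≠ f) :
    T.lineGraph.dist e f =
      min (min (T.dist a x) (T.dist a y)) (min (T.dist b x) (T.dist b y)) + 1 := by
  have hab : T.Adj a b := (T.mem_edgeSet).1 (he ▸ e.2)
  have hxy : T.Adj x y := (T.mem_edgeSet).1 (hf ▸ f.2)
  have hee : e = (⟨s(a,b), (T.mem_edgeSet).2 hab⟩ : T.edgeSet) := Subtype.ext he
  have hee' : e = (⟨s(b,a), (T.mem_edgeSet).2 hab.symm⟩ : T.edgeSet) :=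
    Subtype.ext (he.trans (Sym2.eq_swap))
  have hff : f = (⟨s(x,y), (T.mem_edgeSet).2 hxy⟩ : T.edgeSet) := Subtype.ext hf
  have hff' : f = (⟨s(y,x), (T.mem_edgeSet).2 hxy.symm⟩ : T.edgeSet) :=
    Subtype.ext (hf.trans (Sym2.eq_swap))
  have ub : ∀ (a' b' x' y' : V) (hab' : T.Adj a' b') (hxy' : T.Adj x' y'),
      e = (⟨s(a',b'), (T.mem_edgeSet).2 hab'⟩ : T.edgeSet) →
      f = (⟨s(x',y'), (T.mem_edgeSet).2 hxy'⟩ : T.edgeSet) →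
      T.lineGraph.dist e f ≤ T.dist a' x' + 1 := by
    intro a' b' x' y' hab' hxy' h1 h2
    obtain ⟨w, hw⟩ := line_walk_ub hT x' y' hxy' (T.dist a' x') a' b' hab' rfl
    rw [h1, h2]
    exact le_trans (SimpleGraph.dist_le w) hw
  have u1 := ub a b x y hab hxy hee hff
  have u2 := ub a b y x hab hxy.symm hee hff'
  have u3 := ub b a x y hab.symm hxy hee' hff
  have u4 := ub b a y x hab.symm hxy.symm hee' hff'
  -- lower bound
  obtain ⟨w0, hw0⟩ := line_walk_ub hT x y hxy (T.dist a x) a b hab rfl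
  have hreach : T.lineGraph.Reachable e f := by
    rw [hee, hff]; exact ⟨w0⟩
  obtain ⟨w, hwl⟩ := hreach.exists_walk_length_eq_dist
  obtain ⟨p, hp, q, hq, hlb⟩ := line_walk_lb hT w hef
  rw [hwl] at hlb
  rw [he, Sym2.mem_iff] at hp
  rw [hf, Sym2.mem_iff] at hq
  rcases hp with rfl | rfl <;> rcases hq with rfl | rfl <;> omega

lemma walk_length_drop {W : Type*} {G : SimpleGraph W} {u v : W} (p : G.Walk u v) (n : ℕ) :
    (p.drop n).length = p.length - n := by
  induction p generalizing n with
  | nil => simp [Walk.drop]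
  | cons h q ih =>
    cases n with
    | zero => simp [Walk.drop]
    | succ n => simp [Walk.drop, ih, Walk.length_cons]

lemma dist_getVert (hT : T.IsTree) {u v : V} {i : ℕ} (hi : i ≤ T.dist u v) :
    T.dist u ((tpath hT u v).getVert i) = i ∧
      T.dist ((tpath hT u v).getVert i) v = T.dist u v - i := by
  set P := tpath hT u v with hP
  have hlen : P.length = T.dist u v := tpath_len hT u v
  have h1 : T.dist (P.getVert i) v ≤ T.dist u v - i := by
    have := SimpleGraph.dist_le (P.drop i)
    rw [walk_length_drop, hlen] at this
    exact this
  have h2 : T.dist u (P.getVert i) ≤ i := by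
    have hgv : P.reverse.getVert (P.length - i) = P.getVert i := by
      rw [getVert_reverse]
      congr 1
      omega
    have := SimpleGraph.dist_le (P.reverse.drop (P.length - i))
    rw [walk_length_drop, length_reverse, hgv] at this
    have hc : T.dist (P.getVert i) u = T.dist u (P.getVert i) := SimpleGraph.dist_comm
    omega
  have htri : T.dist u v ≤ T.dist u (P.getVert i) + T.dist (P.getVert i) v :=
    hT.isConnected.dist_triangle
  omega

lemma not_both_between (hT : T.IsTree) {c u v : V} (huv : u ≠ v)
    (h1 : T.dist u v + T.dist v c = T.dist u c)
    (h2 : T.dist v u + T.dist u c = T.dist v c) : False := by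
  have hc : T.dist v u = T.dist u v := SimpleGraph.dist_comm
  have hpos : 0 < T.dist u v := hT.isConnected.pos_dist_of_ne huv
  omega

lemma four_comp1 (hT : T.IsTree) {c u v : V} (huc : u ≠ c) (hvc : v ≠ c) (huv : u ≠ v)
    (hcomp : T.dist v u + T.dist u c = T.dist v c) :
    T.dist (fstep hT u c) v = T.dist u v + 1 ∧
    T.dist (fstep hT v c) u + 1 = T.dist u v ∧
    T.dist u v ≤ T.dist (fstep hT u c) (fstep hT v c) := by
  have hpu := fstep_dist hT huc
  have hpv := fstep_dist hT hvc
  have hcm : T.dist v u = T.dist u v := SimpleGraph.dist_comm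
  have hpos : 0 < T.dist u v := hT.isConnected.pos_dist_of_ne huv
  have hb : T.dist (fstep hT v c) u + 1 = T.dist u v := by
    rcases fstep_or_between hT hvc u with h | h
    · omega
    · exact absurd h (fun h => not_both_between hT huv h hcomp)
  have htr1 : T.dist v c ≤ T.dist v (fstep hT u c) + T.dist (fstep hT u c) c :=
    hT.isConnected.dist_triangle
  have htr2 : T.dist v (fstep hT u c) ≤ T.dist v u + T.dist u (fstep hT u c) :=
    hT.isConnected.dist_triangle
  have hdupu : T.dist u (fstep hT u c) = 1 := dist_adj hT (fstep_adj hT huc)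
  have hcm2 : T.dist v (fstep hT u c) = T.dist (fstep hT u c) v := SimpleGraph.dist_comm
  have htr3 : T.dist (fstep hT u c) v ≤
      T.dist (fstep hT u c) (fstep hT v c) + T.dist (fstep hT v c) v :=
    hT.isConnected.dist_triangle
  have hdvpv : T.dist (fstep hT v c) v = 1 := dist_adj hT (fstep_adj hT hvc).symm
  refine ⟨by omega, by omega, by omega⟩

lemma four_noncomp (hT : T.IsTree) {c u v : V} (huc : u ≠ c) (hvc : v ≠ c)
    (h1 : T.dist u v + T.dist v c ≠ T.dist u c)
    (h2 : T.dist v u + T.dist u c ≠ T.dist v c) :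
    2 ≤ T.dist u v ∧
    T.dist (fstep hT u c) v + 1 = T.dist u v ∧
    T.dist (fstep hT v c) u + 1 = T.dist u v ∧
    T.dist (fstep hT u c) (fstep hT v c) + 2 = T.dist u v := by
  have hcm : T.dist v u = T.dist u v := SimpleGraph.dist_comm
  have huv : u ≠ v := by
    intro h
    subst h
    simp [SimpleGraph.dist_self] at h2
  have hpos : 0 < T.dist u v := hT.isConnected.pos_dist_of_ne huv
  have hpuv : T.dist (fstep hT u c) v + 1 = T.dist u v := by
    rcases fstep_or_between hT huc v with h | h
    · omega
    · exact absurd h h2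
  have hpvu : T.dist (fstep hT v c) u + 1 = T.dist v u := by
    rcases fstep_or_between hT hvc u with h | h
    · omega
    · exact absurd h h1
  have hne1 : T.dist u v ≠ 1 := by
    intro h
    rcases adj_dist_cases hT (SimpleGraph.dist_eq_one_iff_adj.1 h) c with hh | hh
    · exact h2 (by omega)
    · exact h1 (by omega)
  have hm2 : 2 ≤ T.dist u v := by omega
  -- pu is the first step of the path u → v
  have hpueq : fstep hT u c = fstep hT u v :=
    (fstep_unique hT (fstep_adj hT huc) hpuv).symm ▸ rfl
  have hpueq' : fstep hT u v = fstep hT u c :=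
    (fstep_unique hT (fstep_adj hT huc) hpuv).symm
  have hpveq : fstep hT v u = fstep hT v c :=
    (fstep_unique hT (fstep_adj hT hvc) hpvu).symm
  have hvu : v ≠ u := huv.symm
  -- pv lies in the support of tpath u v
  have hpv_mem : fstep hT v c ∈ (tpath hT u v).support := by
    have h0 : fstep hT v c ∈ (tpath hT v u).support := by
      rw [← hpveq]; exact fstep_mem hT hvu
    rw [← tpath_reverse hT u v, support_reverse, List.mem_reverse] at h0
    exact h0
  have hpv_ne_u : fstep hT v c ≠ u := by
    intro h
    rw [h] at hpvu
    simp [SimpleGraph.dist_self] at hpvu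
    omega
  have hnil : ¬ (tpath hT u v).Nil := tpath_not_nil hT huv
  have hpv_tail : fstep hT v c ∈ (tpath hT u v).tail.support := by
    have := cons_support_tail hnil
    rw [← this] at hpv_mem
    rcases List.mem_cons.1 hpv_mem with h | h
    · exact absurd h hpv_ne_u
    · exact h
  have hlen_tail : (tpath hT u v).tail.length = T.dist ((tpath hT u v).getVert 1) v := by
    have ha := length_tail_add_one hnil
    have hb := tpath_len hT u v
    have hgv : (tpath hT u v).getVert 1 = fstep hT u c := hpueq'
    have hd2 : T.dist ((tpath hT u v).getVert 1) v = T.dist (fstep hT u c) v := by rw [hgv]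
    omega
  have hbw := bw_of_mem hT hlen_tail hpv_tail
  have hgv : (tpath hT u v).getVert 1 = fstep hT u c := hpueq'
  rw [Walk.snd, hgv] at hbw
  have hdpvv : T.dist (fstep hT v c) v = 1 := dist_adj hT (fstep_adj hT hvc).symm
  exact ⟨hm2, hpuv, by omega, by omega⟩

noncomputable def phi (hT : T.IsTree) (c : V) (u : V) (h : u ≠ c) : T.edgeSet :=
  ⟨s(u, fstep hT u c), (T.mem_edgeSet).2 (fstep_adj hT h)⟩

lemma phi_inj (hT : T.IsTree) {c u v : V} (hu : u ≠ c) (hv : v ≠ c)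
    (h : phi hT c u hu = phi hT c v hv) : u = v := by
  have h' : s(u, fstep hT u c) = s(v, fstep hT v c) := congrArg Subtype.val h
  rcases Sym2.eq_iff.1 h' with ⟨h1, _⟩ | ⟨h1, h2⟩
  · exact h1
  · exfalso
    have hpu := fstep_dist hT hu
    have hpv := fstep_dist hT hv
    rw [← h1] at hpv
    rw [h2] at hpu
    omega

lemma phi_surj (hT : T.IsTree) (c : V) (f : T.edgeSet) :
    ∃ w, ∃ hwc : w ≠ c, f = phi hT c w hwc := by
  have key : ∀ (s : Sym2 V), s ∈ T.edgeSet → ∃ a b, T.Adj a b ∧ s = s(a,b) := by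
    intro s
    induction s using Sym2.ind with
    | _ a b => intro hs; exact ⟨a, b, (T.mem_edgeSet).1 hs, rfl⟩
  obtain ⟨a, b, hab, hs⟩ := key f.1 f.2
  rcases adj_dist_cases hT hab c with hh | hh
  · -- dist b c = dist a c + 1, so b ≠ c and a = fstep b c
    have hbc : b ≠ c := by
      intro h; rw [h] at hh; simp [SimpleGraph.dist_self] at hh
    have ha : a = fstep hT b c := fstep_unique hT hab.symm (by omega)
    refine ⟨b, hbc, ?_⟩
    apply Subtype.ext
    show (f : Sym2 V) = s(b, fstep hT b c)
    rw [hs, ← ha, Sym2.eq_swap]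
  · have hac : a ≠ c := by
      intro h; rw [h] at hh; simp [SimpleGraph.dist_self] at hh
    have hb : b = fstep hT a c := fstep_unique hT hab (by omega)
    refine ⟨a, hac, ?_⟩
    apply Subtype.ext
    show (f : Sym2 V) = s(a, fstep hT a c)
    rw [hs, ← hb]

lemma phi_dist_comp1 (hT : T.IsTree) {c u v : V} (hu : u ≠ c) (hv : v ≠ c) (huv : u ≠ v)
    (hcomp : T.dist v u + T.dist u c = T.dist v c) :
    T.lineGraph.dist (phi hT c u hu) (phi hT c v hv) = T.dist u v := by
  have hne : phi hT c u hu ≠ phi hT c v hv := fun h => huv (phi_inj hT hu hv h)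
  have hld := line_dist_eq hT (e := phi hT c u hu) (f := phi hT c v hv)
    (a := u) (b := fstep hT u c) (x := v) (y := fstep hT v c) rfl rfl hne
  obtain ⟨f1, f2, f3⟩ := four_comp1 hT hu hv huv hcomp
  have hc1 : T.dist u (fstep hT v c) = T.dist (fstep hT v c) u := SimpleGraph.dist_comm
  rw [hld]
  omega

lemma phi_dist_comp2 (hT : T.IsTree) {c u v : V} (hu : u ≠ c) (hv : v ≠ c) (huv : u ≠ v)
    (hcomp : T.dist u v + T.dist v c = T.dist u c) :
    T.lineGraph.dist (phi hT c u hu) (phi hT c v hv) = T.dist u v := by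
  have hne : phi hT c u hu ≠ phi hT c v hv := fun h => huv (phi_inj hT hu hv h)
  have hld := line_dist_eq hT (e := phi hT c u hu) (f := phi hT c v hv)
    (a := u) (b := fstep hT u c) (x := v) (y := fstep hT v c) rfl rfl hne
  obtain ⟨f1, f2, f3⟩ := four_comp1 hT hv hu huv.symm hcomp
  have hc1 : T.dist u (fstep hT v c) = T.dist (fstep hT v c) u := SimpleGraph.dist_comm
  have hc2 : T.dist (fstep hT u c) v = T.dist v (fstep hT u c) := SimpleGraph.dist_comm
  have hc3 : T.dist (fstep hT u c) (fstep hT v c) = T.dist (fstep hT v c) (fstep hT u c) :=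
    SimpleGraph.dist_comm
  have hc4 : T.dist v u = T.dist u v := SimpleGraph.dist_comm
  rw [hld]
  omega

lemma phi_dist_noncomp (hT : T.IsTree) {c u v : V} (hu : u ≠ c) (hv : v ≠ c)
    (h1 : T.dist u v + T.dist v c ≠ T.dist u c)
    (h2 : T.dist v u + T.dist u c ≠ T.dist v c) :
    T.lineGraph.dist (phi hT c u hu) (phi hT c v hv) + 1 = T.dist u v := by
  obtain ⟨hm2, f1, f2, f3⟩ := four_noncomp hT hu hv h1 h2
  have huv : u ≠ v := by
    intro h; subst h; simp [SimpleGraph.dist_self] at hm2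
  have hne : phi hT c u hu ≠ phi hT c v hv := fun h => huv (phi_inj hT hu hv h)
  have hld := line_dist_eq hT (e := phi hT c u hu) (f := phi hT c v hv)
    (a := u) (b := fstep hT u c) (x := v) (y := fstep hT v c) rfl rfl hne
  have hc1 : T.dist u (fstep hT v c) = T.dist (fstep hT v c) u := SimpleGraph.dist_comm
  rw [hld]
  omega

variable [Fintype V]

lemma count_between (hT : T.IsTree) {c u : V} (huc : u ≠ c) :
    ((univ.erase c).filter
        (fun v => v ≠ u ∧ T.dist u v + T.dist v c = T.dist u c)).card
      = T.dist u c - 1 := by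
  classical
  have hcard : (Finset.Ioo 0 (T.dist u c)).card = T.dist u c - 1 := by
    rw [Nat.card_Ioo]
    omega
  rw [← hcard]
  apply Finset.card_bij (fun v _ => T.dist u v)
  · intro v hv
    rw [Finset.mem_filter, Finset.mem_erase] at hv
    obtain ⟨⟨hvc, -⟩, hvu, hbw⟩ := hv
    rw [Finset.mem_Ioo]
    have h1 : 0 < T.dist u v := hT.isConnected.pos_dist_of_ne (fun h => hvu h.symm)
    have h2 : 0 < T.dist v c := hT.isConnected.pos_dist_of_ne hvc
    omega
  · intro v1 hv1 v2 hv2 heq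
    rw [Finset.mem_filter, Finset.mem_erase] at hv1 hv2
    obtain ⟨⟨h1c, -⟩, h1u, hbw1⟩ := hv1
    obtain ⟨⟨h2c, -⟩, h2u, hbw2⟩ := hv2
    have hm1 : v1 ∈ (tpath hT u c).support := mem_tpath_of_bw hT hbw1
    have hm2 : v2 ∈ (tpath hT u c).support := mem_tpath_of_bw hT hbw2
    have hsplit := (mem_support_append_iff ((tpath hT u c).takeUntil v1 hm1)
        ((tpath hT u c).dropUntil v1 hm1)).1 (by rw [take_spec]; exact hm2)
    rcases hsplit with hin | hin
    · have hlen : ((tpath hT u c).takeUntil v1 hm1).length = T.dist u v1 :=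
        path_len hT ((tpath_isPath hT u c).takeUntil hm1)
      have hbw3 := bw_of_mem hT hlen hin
      have : T.dist v2 v1 = 0 := by omega
      exact (hT.isConnected.dist_eq_zero_iff.1 this).symm
    · have hlen : ((tpath hT u c).dropUntil v1 hm1).length = T.dist v1 c :=
        path_len hT ((tpath_isPath hT u c).dropUntil hm1)
      have hbw3 := bw_of_mem hT hlen hin
      have : T.dist v1 v2 = 0 := by omega
      exact hT.isConnected.dist_eq_zero_iff.1 this
  · intro i hi
    rw [Finset.mem_Ioo] at hi
    obtain ⟨hd1, hd2⟩ := dist_getVert hT (i := i) (v := c) (u := u) (le_of_lt hi.2)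
    refine ⟨(tpath hT u c).getVert i, ?_, hd1⟩
    rw [Finset.mem_filter, Finset.mem_erase]
    have hne_c : (tpath hT u c).getVert i ≠ c := by
      intro h
      rw [h] at hd2
      simp [SimpleGraph.dist_self] at hd2
      omega
    have hne_u : (tpath hT u c).getVert i ≠ u := by
      intro h
      rw [h] at hd1
      simp [SimpleGraph.dist_self] at hd1
      omega
    exact ⟨⟨hne_c, mem_univ _⟩, hne_u, by omega⟩

lemma ecc_fstep_le (hT : T.IsTree) {c v : V} (hvc : v ≠ c)
    (hmin : ∀ w, eccVert T c ≤ eccVert T w) :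
    eccVert T (fstep hT v c) ≤ eccVert T v := by
  show univ.sup (T.dist (fstep hT v c)) ≤ eccVert T v
  apply Finset.sup_le
  intro w _
  have hvw : T.dist v w ≤ eccVert T v := Finset.le_sup (f := T.dist v) (mem_univ w)
  have htri : T.dist (fstep hT v c) w ≤ T.dist (fstep hT v c) v + T.dist v w :=
    hT.isConnected.dist_triangle
  have hd : T.dist (fstep hT v c) v = 1 := dist_adj hT (fstep_adj hT hvc).symm
  rcases fstep_or_between hT hvc w with h | h
  · omega
  · have h1 : T.dist c w ≤ eccVert T c := Finset.le_sup (f := T.dist c) (mem_univ w)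
    have h2 : eccVert T c ≤ eccVert T v := hmin v
    have h3 : 0 < T.dist v c := hT.isConnected.pos_dist_of_ne hvc
    have hcm1 : T.dist w v = T.dist v w := SimpleGraph.dist_comm
    have hcm2 : T.dist w c = T.dist c w := SimpleGraph.dist_comm
    omega

lemma ecc_phi [Nonempty V] [DecidableRel T.Adj] (hT : T.IsTree) {c v : V} (hvc : v ≠ c)
    (hmin : ∀ w, eccVert T c ≤ eccVert T w) :
    eccVert T.lineGraph (phi hT c v hvc) + 1 = eccVert T v := by
  classical
  have hvpos : 1 ≤ eccVert T v := by
    have h1 : 0 < T.dist v c := hT.isConnected.pos_dist_of_ne hvc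
    have h2 : T.dist v c ≤ eccVert T v := Finset.le_sup (f := T.dist v) (mem_univ c)
    omega
  have hub : ∀ f : T.edgeSet,
      T.lineGraph.dist (phi hT c v hvc) f + 1 ≤ eccVert T v := by
    intro f
    obtain ⟨w, hwc, rfl⟩ := phi_surj hT c f
    by_cases hwv : w = v
    · subst hwv
      have he : phi hT c w hvc = phi hT c w hwc := rfl
      rw [he, SimpleGraph.dist_self]
      omega
    · have hvw : T.dist v w ≤ eccVert T v := Finset.le_sup (f := T.dist v) (mem_univ w)
      by_cases hcomp1 : T.dist w v + T.dist v c = T.dist w c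
      · have hld := phi_dist_comp1 hT hvc hwc (fun h => hwv h.symm) hcomp1
        have hfour := (four_comp1 hT hvc hwc (fun h => hwv h.symm) hcomp1).1
        have h1 : T.dist (fstep hT v c) w ≤ eccVert T (fstep hT v c) :=
          Finset.le_sup (f := T.dist (fstep hT v c)) (mem_univ w)
        have h2 : eccVert T (fstep hT v c) ≤ eccVert T v := ecc_fstep_le hT hvc hmin
        omega
      · by_cases hcomp2 : T.dist v w + T.dist w c = T.dist v c
        · have hld := phi_dist_comp2 hT hvc hwc (fun h => hwv h.symm) hcomp2
          have hfour := (four_comp1 hT hwc hvc hwv hcomp2).1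
          have h1 : T.dist v (fstep hT w c) ≤ eccVert T v :=
            Finset.le_sup (f := T.dist v) (mem_univ _)
          have hcm : T.dist (fstep hT w c) v = T.dist v (fstep hT w c) :=
            SimpleGraph.dist_comm
          have hcm2 : T.dist w v = T.dist v w := SimpleGraph.dist_comm
          omega
        · have hld := phi_dist_noncomp hT hvc hwc hcomp2 hcomp1
          omega
  have hlb : ∃ f : T.edgeSet,
      eccVert T v ≤ T.lineGraph.dist (phi hT c v hvc) f + 1 := by
    obtain ⟨w, -, hw⟩ := Finset.exists_mem_eq_sup univ univ_nonempty (T.dist v)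
    have hw' : eccVert T v = T.dist v w := hw
    by_cases hwv : w = v
    · subst hwv
      rw [SimpleGraph.dist_self] at hw'
      omega
    by_cases hwc : w = c
    · rw [hwc] at hw'
      have hfd := fstep_dist hT (Ne.symm hvc)
      by_cases hw'v : fstep hT c v = v
      · refine ⟨phi hT c v hvc, ?_⟩
        rw [SimpleGraph.dist_self]
        rw [hw'v] at hfd
        have hcm : T.dist v c = T.dist c v := SimpleGraph.dist_comm
        have hvv : T.dist v v = 0 := SimpleGraph.dist_self
        omega
      · have hw'c : fstep hT c v ≠ c := (fstep_adj hT (Ne.symm hvc)).ne'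
        have h1 : T.dist (fstep hT c v) c = 1 :=
          dist_adj hT (fstep_adj hT (Ne.symm hvc)).symm
        have hcm1 : T.dist v (fstep hT c v) = T.dist (fstep hT c v) v :=
          SimpleGraph.dist_comm
        have hcm2 : T.dist v c = T.dist c v := SimpleGraph.dist_comm
        have hvw' : v ≠ fstep hT c v := fun h => hw'v h.symm
        have hcomp : T.dist v (fstep hT c v) + T.dist (fstep hT c v) c
            = T.dist v c := by omega
        have hld := phi_dist_comp2 hT hvc hw'c hvw' hcomp
        refine ⟨phi hT c (fstep hT c v) hw'c, ?_⟩
        rw [hld]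
        omega
    · refine ⟨phi hT c w hwc, ?_⟩
      by_cases hcomp1 : T.dist w v + T.dist v c = T.dist w c
      · rw [phi_dist_comp1 hT hvc hwc (fun h => hwv h.symm) hcomp1]
        omega
      · by_cases hcomp2 : T.dist v w + T.dist w c = T.dist v c
        · rw [phi_dist_comp2 hT hvc hwc (fun h => hwv h.symm) hcomp2]
          omega
        · have hld := phi_dist_noncomp hT hvc hwc hcomp2 hcomp1
          omega
  obtain ⟨f0, hf0⟩ := hlb
  have h1 : eccVert T.lineGraph (phi hT c v hvc) ≤ eccVert T v - 1 := by
    show univ.sup (T.lineGraph.dist (phi hT c v hvc)) ≤ eccVert T v - 1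
    apply Finset.sup_le
    intro f _
    have := hub f
    omega
  have h2 : T.lineGraph.dist (phi hT c v hvc) f0
      ≤ eccVert T.lineGraph (phi hT c v hvc) :=
    Finset.le_sup (f := T.lineGraph.dist (phi hT c v hvc)) (mem_univ f0)
  omega

lemma two_mul_wiener {W : Type*} [Fintype W] (G : SimpleGraph W) :
    2 * wiener G = ∑ u : W, ∑ v : W, G.dist u v := by
  classical
  letI : LinearOrder W := LinearOrder.lift' (Fintype.equivFin W)
    (Fintype.equivFin W).injective
  have hsum : ∑ u : W, ∑ v : W, G.dist u v
      = ∑ p ∈ (univ ×ˢ univ : Finset (W × W)), G.dist p.1 p.2 :=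
    (Finset.sum_product' _ _ _).symm
  have h1 := Finset.sum_filter_add_sum_filter_not (univ ×ˢ univ : Finset (W × W))
      (fun p => p.1 < p.2) (fun p => G.dist p.1 p.2)
  have h2 := Finset.sum_filter_add_sum_filter_not
      ((univ ×ˢ univ : Finset (W × W)).filter (fun p => ¬ p.1 < p.2))
      (fun p => p.2 < p.1) (fun p => G.dist p.1 p.2)
  have h3 : ∑ p ∈ (((univ ×ˢ univ : Finset (W × W)).filter
        (fun p => ¬ p.1 < p.2)).filter (fun p => ¬ p.2 < p.1)),
      G.dist p.1 p.2 = 0 := by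
    apply Finset.sum_eq_zero
    intro p hp
    rw [Finset.mem_filter, Finset.mem_filter] at hp
    have hpp : p.1 = p.2 := le_antisymm (not_lt.1 hp.2) (not_lt.1 hp.1.2)
    rw [hpp]
    exact SimpleGraph.dist_self
  have h4 : ∑ p ∈ (((univ ×ˢ univ : Finset (W × W)).filter
        (fun p => ¬ p.1 < p.2)).filter (fun p => p.2 < p.1)),
      G.dist p.1 p.2
      = ∑ p ∈ ((univ ×ˢ univ : Finset (W × W)).filter (fun p => p.1 < p.2)),
      G.dist p.1 p.2 := by
    apply Finset.sum_nbij' (fun p => (p.2, p.1)) (fun p => (p.2, p.1))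
    · intro a ha
      simp only [Finset.mem_filter, Finset.mem_product] at ha ⊢
      exact ⟨⟨mem_univ _, mem_univ _⟩, ha.2⟩
    · intro a ha
      simp only [Finset.mem_filter, Finset.mem_product] at ha ⊢
      exact ⟨⟨⟨mem_univ _, mem_univ _⟩, not_lt.2 (le_of_lt ha.2)⟩, ha.2⟩
    · intro a _; rfl
    · intro a _; rfl
    · intro a _
      exact SimpleGraph.dist_comm
  have hdvd : 2 ∣ ∑ u : W, ∑ v : W, G.dist u v := by
    refine ⟨∑ p ∈ ((univ ×ˢ univ : Finset (W × W)).filter (fun p => p.1 < p.2)),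
      G.dist p.1 p.2, ?_⟩
    rw [hsum]
    omega
  show 2 * ((∑ u : W, ∑ v : W, G.dist u v) / 2) = _
  exact Nat.mul_div_cancel' hdvd

lemma sum_over_edges [DecidableRel T.Adj] (hT : T.IsTree) (c : V) {M : Type*}
    [AddCommMonoid M] (F : T.edgeSet → M) (f : V → M)
    (hf : ∀ v (h : v ≠ c), f v = F (phi hT c v h)) :
    ∑ v ∈ univ.erase c, f v = ∑ e : T.edgeSet, F e := by
  apply Finset.sum_bij (fun v hv => phi hT c v (Finset.ne_of_mem_erase hv))
  · intro a _; exact mem_univ _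
  · intro a1 h1 a2 h2 h; exact phi_inj hT _ _ h
  · intro e _
    obtain ⟨w, hw, rfl⟩ := phi_surj hT c e
    exact ⟨w, Finset.mem_erase.2 ⟨hw, mem_univ _⟩, rfl⟩
  · intro a ha; exact hf a (Finset.ne_of_mem_erase ha)

end TreeProof

open TreeProof

theorem stmt_15 {V : Type*} [Fintype V] [Nonempty V] [DecidableEq V]
    (T : SimpleGraph V) [DecidableRel T.Adj] (hT : T.IsTree)
    (hn : 2 ≤ Fintype.card V) :
    (wiener T : ℚ) - eccSum T =
      (wiener T.lineGraph : ℚ) - eccSum T.lineGraph +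
        (Fintype.card V : ℚ) * (Fintype.card V - 3) / 2 - graphRad T + 1 := by
  classical
  obtain ⟨c, -, hcinf⟩ := Finset.exists_mem_eq_inf' (univ_nonempty (α := V)) (eccVert T)
  have hrad : graphRad T = eccVert T c := hcinf
  have hmin : ∀ w, eccVert T c ≤ eccVert T w := by
    intro w
    rw [← hcinf]
    exact Finset.inf'_le _ (mem_univ w)
  obtain ⟨u0, hu0⟩ := Fintype.exists_ne_of_one_lt_card (by omega) c
  have hEne : Nonempty T.edgeSet := ⟨phi hT c u0 hu0⟩
  have hE'card : (univ.erase c).card = Fintype.card V - 1 := by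
    rw [card_erase_of_mem (mem_univ c), card_univ]
  let φ : V → T.edgeSet := fun v =>
    if h : v = c then Classical.arbitrary _ else phi hT c v h
  have hφ : ∀ (v : V) (h : v ≠ c), φ v = phi hT c v h := fun v h => dif_neg h
  set n := Fintype.card V with hndef
  -- B + (n-1) = D
  have hBD : (∑ u ∈ univ.erase c, ∑ v ∈ univ.erase c,
        (if v ≠ u ∧ T.dist u v + T.dist v c = T.dist u c then 1 else 0)) + (n - 1)
      = ∑ u ∈ univ.erase c, T.dist u c := by
    have hper : ∀ u ∈ univ.erase c,
        (∑ v ∈ univ.erase c,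
          (if v ≠ u ∧ T.dist u v + T.dist v c = T.dist u c then 1 else 0)) + 1
        = T.dist u c := by
      intro u hu
      have hcb := Finset.card_filter
        (fun v => v ≠ u ∧ T.dist u v + T.dist v c = T.dist u c) (univ.erase c)
      have hcnt := count_between hT (Finset.ne_of_mem_erase hu)
      have hpos : 0 < T.dist u c :=
        hT.isConnected.pos_dist_of_ne (Finset.ne_of_mem_erase hu)
      omega
    calc (∑ u ∈ univ.erase c, ∑ v ∈ univ.erase c,
          (if v ≠ u ∧ T.dist u v + T.dist v c = T.dist u c then 1 else 0)) + (n-1)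
        = ∑ u ∈ univ.erase c, ((∑ v ∈ univ.erase c,
          (if v ≠ u ∧ T.dist u v + T.dist v c = T.dist u c then 1 else 0)) + 1) := by
          rw [Finset.sum_add_distrib, Finset.sum_const, hE'card, smul_eq_mul, mul_one]
      _ = ∑ u ∈ univ.erase c, T.dist u c := Finset.sum_congr rfl hper
  -- counting identity
  have hcount : (∑ u ∈ univ.erase c, ∑ v ∈ univ.erase c,
        (if u ≠ v ∧ T.dist u v + T.dist v c ≠ T.dist u c
            ∧ T.dist v u + T.dist u c ≠ T.dist v c then 1 else 0)) + (n - 1)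
      + (∑ u ∈ univ.erase c, ∑ v ∈ univ.erase c,
        (if v ≠ u ∧ T.dist u v + T.dist v c = T.dist u c then 1 else 0))
      + (∑ u ∈ univ.erase c, ∑ v ∈ univ.erase c,
        (if v ≠ u ∧ T.dist u v + T.dist v c = T.dist u c then 1 else 0))
      = (n-1) * (n-1) := by
    have hpt : ∀ u ∈ univ.erase c, ∀ v ∈ univ.erase c,
        (if u ≠ v ∧ T.dist u v + T.dist v c ≠ T.dist u c
            ∧ T.dist v u + T.dist u c ≠ T.dist v c then 1 else 0)
        + (if u = v then 1 else 0)
        + (if v ≠ u ∧ T.dist u v + T.dist v c = T.dist u c then 1 else 0)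
        + (if u ≠ v ∧ T.dist v u + T.dist u c = T.dist v c then 1 else 0) = 1 := by
      intro u _ v _
      by_cases h : u = v
      · simp [h]
      · have hvu : ¬ v = u := fun hh => h hh.symm
        by_cases hbw1 : T.dist u v + T.dist v c = T.dist u c <;>
          by_cases hbw2 : T.dist v u + T.dist u c = T.dist v c
        · exact (not_both_between hT h hbw1 hbw2).elim
        · simp [h, hvu, hbw1, hbw2]
        · simp [h, hvu, hbw1, hbw2]
        · simp [h, hvu, hbw1, hbw2]
    have hsum : ∑ u ∈ univ.erase c, ∑ v ∈ univ.erase c,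
        ((if u ≠ v ∧ T.dist u v + T.dist v c ≠ T.dist u c
            ∧ T.dist v u + T.dist u c ≠ T.dist v c then 1 else 0)
        + (if u = v then 1 else 0)
        + (if v ≠ u ∧ T.dist u v + T.dist v c = T.dist u c then 1 else 0)
        + (if u ≠ v ∧ T.dist v u + T.dist u c = T.dist v c then 1 else 0))
        = (n-1) * (n-1) := by
      rw [Finset.sum_congr rfl (fun u hu => Finset.sum_congr rfl (hpt u hu))]
      simp [Finset.sum_const, hE'card, mul_one]
    have hsplit : ∑ u ∈ univ.erase c, ∑ v ∈ univ.erase c,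
        ((if u ≠ v ∧ T.dist u v + T.dist v c ≠ T.dist u c
            ∧ T.dist v u + T.dist u c ≠ T.dist v c then 1 else 0)
        + (if u = v then 1 else 0)
        + (if v ≠ u ∧ T.dist u v + T.dist v c = T.dist u c then 1 else 0)
        + (if u ≠ v ∧ T.dist v u + T.dist u c = T.dist v c then 1 else 0))
        = (∑ u ∈ univ.erase c, ∑ v ∈ univ.erase c,
          (if u ≠ v ∧ T.dist u v + T.dist v c ≠ T.dist u c
            ∧ T.dist v u + T.dist u c ≠ T.dist v c then 1 else 0))
        + (∑ u ∈ univ.erase c, ∑ v ∈ univ.erase c, (if u = v then 1 else 0))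
        + (∑ u ∈ univ.erase c, ∑ v ∈ univ.erase c,
          (if v ≠ u ∧ T.dist u v + T.dist v c = T.dist u c then 1 else 0))
        + (∑ u ∈ univ.erase c, ∑ v ∈ univ.erase c,
          (if u ≠ v ∧ T.dist v u + T.dist u c = T.dist v c then 1 else 0)) := by
      simp only [Finset.sum_add_distrib]
    have hdiag : ∑ u ∈ univ.erase c, ∑ v ∈ univ.erase c,
        (if u = v then 1 else 0) = n - 1 := by
      have : ∀ u ∈ univ.erase c, (∑ v ∈ univ.erase c,
          (if u = v then (1:ℕ) else 0)) = 1 := by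
        intro u hu
        rw [Finset.sum_ite_eq (univ.erase c) u (fun _ => 1), if_pos hu]
      rw [Finset.sum_congr rfl this]
      simp [hE'card]
    have hswap : (∑ u ∈ univ.erase c, ∑ v ∈ univ.erase c,
        (if u ≠ v ∧ T.dist v u + T.dist u c = T.dist v c then 1 else 0))
        = ∑ u ∈ univ.erase c, ∑ v ∈ univ.erase c,
        (if v ≠ u ∧ T.dist u v + T.dist v c = T.dist u c then 1 else 0) :=
      Finset.sum_comm
    omega
  -- pairwise distance identity
  have hpair : ∀ u (hu : u ≠ c) v (hv : v ≠ c),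
      T.lineGraph.dist (φ u) (φ v)
        + (if u ≠ v ∧ T.dist u v + T.dist v c ≠ T.dist u c
            ∧ T.dist v u + T.dist u c ≠ T.dist v c then 1 else 0)
      = T.dist u v := by
    intro u hu v hv
    rw [hφ u hu, hφ v hv]
    by_cases huv : u = v
    · subst huv
      simp [SimpleGraph.dist_self]
    · by_cases hbw1 : T.dist u v + T.dist v c = T.dist u c
      · rw [if_neg (fun hh => hh.2.1 hbw1), phi_dist_comp2 hT hu hv huv hbw1]
        omega
      · by_cases hbw2 : T.dist v u + T.dist u c = T.dist v c
        · rw [if_neg (fun hh => hh.2.2 hbw2), phi_dist_comp1 hT hu hv huv hbw2]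
          omega
        · rw [if_pos ⟨huv, hbw1, hbw2⟩]
          exact phi_dist_noncomp hT hu hv hbw1 hbw2
  have hWsum : (∑ u ∈ univ.erase c, ∑ v ∈ univ.erase c,
        T.lineGraph.dist (φ u) (φ v))
      + (∑ u ∈ univ.erase c, ∑ v ∈ univ.erase c,
        (if u ≠ v ∧ T.dist u v + T.dist v c ≠ T.dist u c
            ∧ T.dist v u + T.dist u c ≠ T.dist v c then 1 else 0))
      = ∑ u ∈ univ.erase c, ∑ v ∈ univ.erase c, T.dist u v := by
    rw [← Finset.sum_add_distrib]
    apply Finset.sum_congr rfl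
    intro u hu
    rw [← Finset.sum_add_distrib]
    apply Finset.sum_congr rfl
    intro v hv
    exact hpair u (Finset.ne_of_mem_erase hu) v (Finset.ne_of_mem_erase hv)
  -- transport of line-graph double sum
  have hinner : ∀ u : V, ∑ v ∈ univ.erase c, T.lineGraph.dist (φ u) (φ v)
      = ∑ f : T.edgeSet, T.lineGraph.dist (φ u) f := by
    intro u
    apply sum_over_edges hT c
    intro v h
    rw [hφ v h]
  have hSLLtrans : ∑ u ∈ univ.erase c, ∑ v ∈ univ.erase c,
        T.lineGraph.dist (φ u) (φ v)
      = ∑ e : T.edgeSet, ∑ f : T.edgeSet, T.lineGraph.dist e f := by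
    calc ∑ u ∈ univ.erase c, ∑ v ∈ univ.erase c, T.lineGraph.dist (φ u) (φ v)
        = ∑ u ∈ univ.erase c, ∑ f : T.edgeSet, T.lineGraph.dist (φ u) f :=
          Finset.sum_congr rfl (fun u _ => hinner u)
      _ = ∑ e : T.edgeSet, ∑ f : T.edgeSet, T.lineGraph.dist e f := by
          apply sum_over_edges hT c
          intro u h
          rw [hφ u h]
  -- eccentricity identity
  have hEccT : eccSum T = eccVert T c + (eccSum T.lineGraph + (n - 1)) := by
    have h1 : eccSum T = eccVert T c + ∑ v ∈ univ.erase c, eccVert T v :=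
      (Finset.add_sum_erase _ _ (mem_univ c)).symm
    have h2 : ∀ v ∈ univ.erase c,
        eccVert T v = eccVert T.lineGraph (φ v) + 1 := by
      intro v hv
      rw [hφ v (Finset.ne_of_mem_erase hv)]
      exact (ecc_phi hT (Finset.ne_of_mem_erase hv) hmin).symm
    have h3 : ∑ v ∈ univ.erase c, eccVert T v
        = (∑ v ∈ univ.erase c, eccVert T.lineGraph (φ v)) + (n - 1) := by
      rw [Finset.sum_congr rfl h2, Finset.sum_add_distrib, Finset.sum_const,
        hE'card, smul_eq_mul, mul_one]
    have h4 : ∑ v ∈ univ.erase c, eccVert T.lineGraph (φ v)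
        = eccSum T.lineGraph := by
      apply sum_over_edges hT c
      intro v h
      rw [hφ v h]
    omega
  -- total distance split
  have hSTT : (∑ u : V, ∑ v : V, T.dist u v)
      = 2 * (∑ u ∈ univ.erase c, T.dist u c)
        + ∑ u ∈ univ.erase c, ∑ v ∈ univ.erase c, T.dist u v := by
    have hrow : ∀ u : V, ∑ v : V, T.dist u v
        = T.dist u c + ∑ v ∈ univ.erase c, T.dist u v :=
      fun u => (Finset.add_sum_erase _ _ (mem_univ c)).symm
    have h1 : ∑ u : V, ∑ v : V, T.dist u v
        = (∑ u : V, T.dist u c) + ∑ u : V, ∑ v ∈ univ.erase c, T.dist u v := by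
      rw [Finset.sum_congr rfl (fun u _ => hrow u), Finset.sum_add_distrib]
    have h2 : (∑ u : V, T.dist u c)
        = T.dist c c + ∑ u ∈ univ.erase c, T.dist u c :=
      (Finset.add_sum_erase _ _ (mem_univ c)).symm
    have h3 : (∑ u : V, ∑ v ∈ univ.erase c, T.dist u v)
        = (∑ v ∈ univ.erase c, T.dist c v)
          + ∑ u ∈ univ.erase c, ∑ v ∈ univ.erase c, T.dist u v :=
      (Finset.add_sum_erase _ _ (mem_univ c)).symm
    have h4 : (∑ v ∈ univ.erase c, T.dist c v) = ∑ v ∈ univ.erase c, T.dist v c :=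
      Finset.sum_congr rfl (fun v _ => SimpleGraph.dist_comm)
    have h5 : T.dist c c = 0 := SimpleGraph.dist_self
    omega
  have hWT2 : 2 * wiener T = ∑ u : V, ∑ v : V, T.dist u v := two_mul_wiener T
  have hWL2 : 2 * wiener T.lineGraph
      = ∑ e : T.edgeSet, ∑ f : T.edgeSet, T.lineGraph.dist e f :=
    two_mul_wiener T.lineGraph
  -- cast to ℚ and finish
  have hn1 : 1 ≤ n := by omega
  have hc1 : (2:ℚ) * (wiener T : ℚ)
      = 2 * ((∑ u ∈ univ.erase c, T.dist u c : ℕ) : ℚ)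
        + ((∑ u ∈ univ.erase c, ∑ v ∈ univ.erase c, T.dist u v : ℕ) : ℚ) := by
    exact_mod_cast congrArg (Nat.cast (R := ℚ)) (hWT2.trans hSTT)
  have hc2 : (2:ℚ) * (wiener T.lineGraph : ℚ)
      + ((∑ u ∈ univ.erase c, ∑ v ∈ univ.erase c,
        (if u ≠ v ∧ T.dist u v + T.dist v c ≠ T.dist u c
            ∧ T.dist v u + T.dist u c ≠ T.dist v c then 1 else 0) : ℕ) : ℚ)
      = ((∑ u ∈ univ.erase c, ∑ v ∈ univ.erase c, T.dist u v : ℕ) : ℚ) := by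
    have := (hWL2.trans hSLLtrans.symm)
    exact_mod_cast congrArg (Nat.cast (R := ℚ)) (by omega :
      2 * wiener T.lineGraph
        + (∑ u ∈ univ.erase c, ∑ v ∈ univ.erase c,
          (if u ≠ v ∧ T.dist u v + T.dist v c ≠ T.dist u c
              ∧ T.dist v u + T.dist u c ≠ T.dist v c then 1 else 0))
        = ∑ u ∈ univ.erase c, ∑ v ∈ univ.erase c, T.dist u v)
  have hcastn : ((n - 1 : ℕ) : ℚ) = (n : ℚ) - 1 := by
    push_cast [hn1]
    ring
  have hc3 : ((∑ u ∈ univ.erase c, ∑ v ∈ univ.erase c,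
        (if u ≠ v ∧ T.dist u v + T.dist v c ≠ T.dist u c
            ∧ T.dist v u + T.dist u c ≠ T.dist v c then 1 else 0) : ℕ) : ℚ)
      + ((n:ℚ) - 1)
      + 2 * ((∑ u ∈ univ.erase c, ∑ v ∈ univ.erase c,
        (if v ≠ u ∧ T.dist u v + T.dist v c = T.dist u c then 1 else 0) : ℕ) : ℚ)
      = ((n:ℚ) - 1) * ((n:ℚ) - 1) := by
    rw [← hcastn]
    exact_mod_cast congrArg (Nat.cast (R := ℚ)) (by omega :
      (∑ u ∈ univ.erase c, ∑ v ∈ univ.erase c,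
        (if u ≠ v ∧ T.dist u v + T.dist v c ≠ T.dist u c
            ∧ T.dist v u + T.dist u c ≠ T.dist v c then 1 else 0))
      + (n - 1)
      + 2 * (∑ u ∈ univ.erase c, ∑ v ∈ univ.erase c,
        (if v ≠ u ∧ T.dist u v + T.dist v c = T.dist u c then 1 else 0))
      = (n-1) * (n-1))
  have hc4 : ((∑ u ∈ univ.erase c, ∑ v ∈ univ.erase c,
        (if v ≠ u ∧ T.dist u v + T.dist v c = T.dist u c then 1 else 0) : ℕ) : ℚ)
      + ((n:ℚ) - 1)
      = ((∑ u ∈ univ.erase c, T.dist u c : ℕ) : ℚ) := by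
    rw [← hcastn]
    exact_mod_cast congrArg (Nat.cast (R := ℚ)) hBD
  have hc5 : (eccSum T : ℚ)
      = (graphRad T : ℚ) + ((eccSum T.lineGraph : ℚ) + ((n:ℚ) - 1)) := by
    rw [← hcastn, hrad]
    exact_mod_cast congrArg (Nat.cast (R := ℚ)) hEccT
  linear_combination (1/2) * hc1 - (1/2) * hc2 + (1/2) * hc3 - hc4 - hc5
end

section
/- If T is a tree on n vertices with radius r and center C(T) = {p} a single vertex, then ε(T) = d_T(p) + n·r, where d_T(p) is the total distance of p. -/
open Finset

section Aux
open SimpleGraph Walk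
variable {V : Type*} {T : SimpleGraph V}

lemma tree_path_length (hT : T.IsTree) {a b : V} {P : T.Walk a b} (hP : P.IsPath) :
    P.length = T.dist a b := by
  obtain ⟨Q, hQ, hlen⟩ := hT.isConnected.exists_path_of_dist a b
  rw [← hlen, (hT.existsUnique_path a b).unique hP hQ]

lemma tree_collinear (hT : T.IsTree) {a b b' c : V}
    (h1 : T.dist a b + T.dist b c = T.dist a c)
    (h2 : T.dist a b' + T.dist b' c = T.dist a c) :
    T.dist a b + T.dist b b' = T.dist a b' ∨ T.dist a b' + T.dist b' b = T.dist a b := by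
  classical
  obtain ⟨P₁, hP₁, hl₁⟩ := hT.isConnected.exists_path_of_dist a b
  obtain ⟨P₂, hP₂, hl₂⟩ := hT.isConnected.exists_path_of_dist b c
  obtain ⟨Q₁, hQ₁, hk₁⟩ := hT.isConnected.exists_path_of_dist a b'
  obtain ⟨Q₂, hQ₂, hk₂⟩ := hT.isConnected.exists_path_of_dist b' c
  have hW : (P₁.append P₂).IsPath := by
    apply Walk.isPath_of_length_eq_dist
    rw [Walk.length_append, hl₁, hl₂, h1]
  have hW' : (Q₁.append Q₂).IsPath := by
    apply Walk.isPath_of_length_eq_dist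
    rw [Walk.length_append, hk₁, hk₂, h2]
  have hEq : P₁.append P₂ = Q₁.append Q₂ := (hT.existsUnique_path a c).unique hW hW'
  have hb' : b' ∈ (P₁.append P₂).support := by
    rw [hEq]; exact (Walk.mem_support_append_iff _ _).mpr (Or.inl Q₁.end_mem_support)
  rcases (Walk.mem_support_append_iff _ _).mp hb' with h | h
  · right
    have e1 : (P₁.takeUntil b' h).length = T.dist a b' := tree_path_length hT (hP₁.takeUntil h)
    have e2 : (P₁.dropUntil b' h).length = T.dist b' b := tree_path_length hT (hP₁.dropUntil h)
    have e3 := congrArg Walk.length (P₁.take_spec h)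
    rw [Walk.length_append, e1, e2, hl₁] at e3
    exact e3
  · left
    have e1 : (P₂.takeUntil b' h).length = T.dist b b' := tree_path_length hT (hP₂.takeUntil h)
    have e2 : (P₂.dropUntil b' h).length = T.dist b' c := tree_path_length hT (hP₂.dropUntil h)
    have e3 := congrArg Walk.length (P₂.take_spec h)
    rw [Walk.length_append, e1, e2, hl₂] at e3
    omega

lemma tree_median (hT : T.IsTree) (a b c : V) :
    ∃ m : V, T.dist a m + T.dist m b = T.dist a b ∧
      T.dist a m + T.dist m c = T.dist a c ∧
      T.dist b m + T.dist m c = T.dist b c := by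
  classical
  suffices H : ∀ (n : ℕ) (a b c : V), T.dist a b = n →
      ∃ m : V, T.dist a m + T.dist m b = T.dist a b ∧
        T.dist a m + T.dist m c = T.dist a c ∧
        T.dist b m + T.dist m c = T.dist b c from H _ a b c rfl
  intro n
  induction n using Nat.strong_induction_on with
  | _ n ih =>
    intro a b c hab
    rcases Nat.eq_zero_or_pos n with h0 | hpos
    · subst h0
      have hab' : a = b := (hT.isConnected.dist_eq_zero_iff).mp hab
      subst hab'
      exact ⟨a, by simp [SimpleGraph.dist_self], by simp [SimpleGraph.dist_self],
        by simp [SimpleGraph.dist_self]⟩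
    · have hne : a ≠ b := by
        rintro rfl; rw [SimpleGraph.dist_self] at hab; omega
      obtain ⟨P, hP, hPl⟩ := hT.isConnected.exists_path_of_dist a b
      cases P with
      | nil => exact absurd rfl hne
      | @cons _ a₁ _ h P₁ =>
        have hP₁ : P₁.IsPath := hP.of_cons
        have ha₁b : T.dist a₁ b + 1 = n := by
          have hlen := tree_path_length hT hP₁
          rw [Walk.length_cons] at hPl
          omega
        have haa₁ : T.dist a a₁ = 1 := (SimpleGraph.dist_eq_one_iff_adj).mpr h
        by_cases hc : T.dist a₁ c + 1 = T.dist a c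
        · obtain ⟨m, e1, e2, e3⟩ := ih (T.dist a₁ b) (by omega) a₁ b c rfl
          have t1 : T.dist a m ≤ 1 + T.dist a₁ m := by
            calc T.dist a m ≤ T.dist a a₁ + T.dist a₁ m := hT.isConnected.dist_triangle
            _ = 1 + T.dist a₁ m := by rw [haa₁]
          have t2 : T.dist a b ≤ T.dist a m + T.dist m b := hT.isConnected.dist_triangle
          exact ⟨m, by omega, by omega, e3⟩
        · by_cases hac : a = c
          · subst hac
            exact ⟨a, by simp [SimpleGraph.dist_self], by simp [SimpleGraph.dist_self],
              by simp [SimpleGraph.dist_self]⟩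
          obtain ⟨Q, hQ, hQl⟩ := hT.isConnected.exists_path_of_dist a c
          cases Q with
          | nil => exact absurd rfl hac
          | @cons _ q₁ _ h' Q₁ =>
            have hQ₁ : Q₁.IsPath := hQ.of_cons
            have hq₁c : T.dist q₁ c + 1 = T.dist a c := by
              have hlen := tree_path_length hT hQ₁
              rw [Walk.length_cons] at hQl
              omega
            have hne' : a₁ ≠ q₁ := by rintro rfl; exact hc hq₁c
            have haP : a ∉ P₁.support := by
              have h5 := hP.support_nodup
              rw [Walk.support_cons, List.nodup_cons] at h5; exact h5.1
            have haQ : a ∉ Q₁.support := by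
              have h5 := hQ.support_nodup
              rw [Walk.support_cons, List.nodup_cons] at h5; exact h5.1
            have hdisj : ∀ z, z ∈ P₁.support → z ∈ Q₁.support → False := by
              intro z hz₁ hz₂
              have hA : (Walk.cons h (P₁.takeUntil z hz₁)).IsPath :=
                (hP₁.takeUntil hz₁).cons
                  (fun hmem => haP (Walk.support_takeUntil_subset _ hz₁ hmem))
              have hB : (Walk.cons h' (Q₁.takeUntil z hz₂)).IsPath :=
                (hQ₁.takeUntil hz₂).cons
                  (fun hmem => haQ (Walk.support_takeUntil_subset _ hz₂ hmem))
              have hAB := (hT.existsUnique_path a z).unique hA hB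
              have := congrArg (fun w => w.getVert 1) hAB
              simp only [Walk.getVert_cons_succ, Walk.getVert_zero] at this
              exact hne' this
            have hWpath : ((Walk.cons h P₁).reverse.append (Walk.cons h' Q₁)).IsPath := by
              rw [Walk.isPath_def, Walk.support_append, Walk.support_reverse,
                List.nodup_append]
              refine ⟨List.nodup_reverse.mpr hP.support_nodup, ?_, ?_⟩
              · rw [Walk.support_cons, List.tail_cons]
                exact hQ₁.support_nodup
              · intro z hz w hz' rfl
                rw [List.mem_reverse, Walk.support_cons] at hz
                rw [Walk.support_cons, List.tail_cons] at hz'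
                rw [List.mem_cons] at hz
                rcases hz with rfl | hz
                · exact haQ hz'
                · exact hdisj z hz hz'
            have hlen := tree_path_length hT hWpath
            rw [Walk.length_append, Walk.length_reverse] at hlen
            have hcomm : T.dist b a = T.dist a b := SimpleGraph.dist_comm ..
            refine ⟨a, by simp [SimpleGraph.dist_self], by simp [SimpleGraph.dist_self], ?_⟩
            omega

end Aux

open SimpleGraph Walk in
theorem stmt_16 {V : Type*} [Fintype V] [Nonempty V] (T : SimpleGraph V)
    (hT : T.IsTree) (p : V)
    (hcenter : ∀ v : V, eccVert T v = graphRad T ↔ v = p) :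
    eccSum T = (∑ u : V, T.dist p u) + Fintype.card V * graphRad T := by
  classical
  have hconn := hT.isConnected
  have hpecc : eccVert T p = graphRad T := (hcenter p).mpr rfl
  set r := graphRad T with hrdef
  have hdpu : ∀ u : V, T.dist p u ≤ r := fun u =>
    le_trans (Finset.le_sup (f := T.dist p) (mem_univ u)) (le_of_eq hpecc)
  have hrle : ∀ v : V, r ≤ eccVert T v := fun v => Finset.inf'_le _ (mem_univ v)
  rcases Nat.eq_zero_or_pos r with hr0 | hrpos
  · have hdist0 : ∀ u : V, T.dist p u = 0 := fun u => Nat.le_zero.mp (hr0 ▸ hdpu u)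
    have hallp : ∀ v : V, v = p := fun v =>
      ((hconn.dist_eq_zero_iff).mp (hdist0 v)).symm
    have hecc0 : ∀ v : V, eccVert T v = 0 := fun v => by
      rw [hallp v, hpecc]; exact hr0
    simp [eccSum, hecc0, hdist0, hr0]
  · obtain ⟨x, -, hx⟩ := Finset.exists_mem_eq_sup univ univ_nonempty (T.dist p)
    have hpx : T.dist p x = r := by rw [← hpecc]; exact hx.symm
    have hpnex : p ≠ x := by rintro rfl; rw [SimpleGraph.dist_self] at hpx; omega
    obtain ⟨P, hP, hPl⟩ := hconn.exists_path_of_dist p x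
    cases P with
    | nil => exact absurd rfl hpnex
    | @cons _ q _ hadj P₁ =>
      have hq : T.dist q x + 1 = r := by
        have := tree_path_length hT hP.of_cons
        rw [Walk.length_cons] at hPl; omega
      have hpq : T.dist p q = 1 := (SimpleGraph.dist_eq_one_iff_adj).mpr hadj
      have hqp : T.dist q p = 1 := by rw [SimpleGraph.dist_comm]; exact hpq
      have heccq : r + 1 ≤ eccVert T q := by
        have h1 := hrle q
        have h2 : eccVert T q ≠ r := fun hh => hadj.ne' ((hcenter q).mp (hh.trans hrdef))
        omega
      obtain ⟨y, -, hy⟩ := Finset.exists_mem_eq_sup univ univ_nonempty (T.dist q)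
      have hqy0 : r + 1 ≤ T.dist q y := by
        have : eccVert T q = T.dist q y := hy
        omega
      have htri : T.dist q y ≤ T.dist q p + T.dist p y := hconn.dist_triangle
      have hpy : T.dist p y = r := by have := hdpu y; omega
      have hqy : T.dist q y = r + 1 := by have := hdpu y; omega
      have hxy : T.dist x y = 2 * r := by
        obtain ⟨m, m1, m2, m3⟩ := tree_median hT x y q
        have hxq : T.dist x q = T.dist q x := SimpleGraph.dist_comm ..
        have hyq : T.dist y q = T.dist q y := SimpleGraph.dist_comm ..
        have cqm : T.dist q m = T.dist m q := SimpleGraph.dist_comm ..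
        have cym : T.dist y m = T.dist m y := SimpleGraph.dist_comm ..
        have hc1 : T.dist q m + T.dist m y = T.dist q y := by omega
        have hc2 : T.dist q p + T.dist p y = T.dist q y := by omega
        rcases tree_collinear hT hc1 hc2 with hcase | hcase
        · rcases Nat.eq_zero_or_pos (T.dist q m) with hq0 | hqpos
          · obtain rfl : q = m := (hconn.dist_eq_zero_iff).mp hq0
            omega
          · have hmp : T.dist m p = 0 := by omega
            have hmp2 : m = p := (hconn.dist_eq_zero_iff).mp hmp
            rw [hmp2] at m2
            have hxp : T.dist x p = r := by rw [SimpleGraph.dist_comm]; exact hpx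
            omega
        · exfalso
          have t : T.dist x p ≤ T.dist x m + T.dist m p := hconn.dist_triangle
          have hxp : T.dist x p = r := by rw [SimpleGraph.dist_comm]; exact hpx
          have cpm : T.dist p m = T.dist m p := SimpleGraph.dist_comm ..
          omega
      have key : ∀ v : V, eccVert T v = T.dist p v + r := by
        intro v
        apply le_antisymm
        · apply Finset.sup_le
          intro u _
          calc T.dist v u ≤ T.dist v p + T.dist p u := hconn.dist_triangle
            _ ≤ T.dist v p + r := Nat.add_le_add_left (hdpu u) _
            _ = T.dist p v + r := by rw [SimpleGraph.dist_comm]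
        · obtain ⟨m, m1, m2, m3⟩ := tree_median hT x y v
          have hxp : T.dist x p = r := by rw [SimpleGraph.dist_comm]; exact hpx
          have hc2 : T.dist x p + T.dist p y = T.dist x y := by omega
          have c3 : T.dist p v = T.dist v p := SimpleGraph.dist_comm ..
          have cpm : T.dist p m = T.dist m p := SimpleGraph.dist_comm ..
          have t : T.dist v p ≤ T.dist v m + T.dist m p := hconn.dist_triangle
          rcases tree_collinear hT m1 hc2 with hcase | hcase
          · have hsup : T.dist v y ≤ eccVert T v := Finset.le_sup (mem_univ y)
            have c0 : T.dist v y = T.dist y v := SimpleGraph.dist_comm ..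
            have c1 : T.dist y m = T.dist m y := SimpleGraph.dist_comm ..
            have c2 : T.dist m v = T.dist v m := SimpleGraph.dist_comm ..
            omega
          · have hsup : T.dist v x ≤ eccVert T v := Finset.le_sup (mem_univ x)
            have c1 : T.dist x v = T.dist v x := SimpleGraph.dist_comm ..
            have c2 : T.dist m v = T.dist v m := SimpleGraph.dist_comm ..
            omega
      calc eccSum T = ∑ v : V, (T.dist p v + r) := Finset.sum_congr rfl (fun v _ => key v)
        _ = (∑ u : V, T.dist p u) + Fintype.card V * r := by
          rw [Finset.sum_add_distrib, Finset.sum_const, Finset.card_univ, smul_eq_mul]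
end

section
/- If T is a tree on n vertices with radius r, then ε(T) ≥ r(n+r+1) if the center of T consists of a single vertex, and ε(T) ≥ (2r(n+r) − n)/2 if the center consists of two adjacent vertices; in either case equality holds if and only if T is a path. -/
open Finset

set_option linter.all false
set_option linter.unusedSectionVars false
set_option maxHeartbeats 1000000

namespace TreeAux
open SimpleGraph Walk

variable {V : Type*} [DecidableEq V] {T : SimpleGraph V}

lemma path_len (hT : T.IsTree) {x y : V} (p : T.Walk x y) (hp : p.IsPath) :
    p.length = T.dist x y := by
  obtain ⟨q, hq, hlen⟩ := hT.isConnected.exists_path_of_dist x y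
  rw [(hT.existsUnique_path x y).unique hp hq, hlen]

lemma dist_split_of_mem_support (hT : T.IsTree) {x y u : V} (p : T.Walk x y)
    (hp : p.IsPath) (hu : u ∈ p.support) :
    T.dist x u + T.dist u y = T.dist x y := by
  have h1 := path_len hT _ (hp.takeUntil hu)
  have h2 := path_len hT _ (hp.dropUntil hu)
  have h3 : (p.takeUntil u hu).length + (p.dropUntil u hu).length = p.length := by
    rw [← Walk.length_append, p.take_spec hu]
  rw [h1, h2] at h3
  rw [h3, path_len hT p hp]

/-- The median lemma for trees. -/
lemma median (hT : T.IsTree) (a b : V) : ∀ v : V,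
    ∃ m : V, T.dist v m + T.dist m a = T.dist v a ∧
      T.dist v m + T.dist m b = T.dist v b ∧
      T.dist a m + T.dist m b = T.dist a b := by
  have hconn := hT.isConnected
  have dc : ∀ x y : V, T.dist x y = T.dist y x := fun x y => SimpleGraph.dist_comm ..
  intro v
  generalize hn : T.dist v a + T.dist v b = n
  induction n using Nat.strong_induction_on generalizing v with
  | _ n IH =>
  by_cases hgeo : T.dist a v + T.dist v b = T.dist a b
  · exact ⟨v, by simp [T.dist_self], by simp [T.dist_self], hgeo⟩
  have hva : v ≠ a := by rintro rfl; simp [T.dist_self] at hgeo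
  have hvb : v ≠ b := by rintro rfl; simp [T.dist_self, dc a v] at hgeo
  obtain ⟨p, hp, hplen⟩ := hconn.exists_path_of_dist v a
  obtain ⟨q, hq, hqlen⟩ := hconn.exists_path_of_dist v b
  cases p with
  | nil => exact absurd rfl hva
  | @cons _ v' _ hadj p₁ =>
  cases q with
  | nil => exact absurd rfl hvb
  | @cons _ v'' _ hadj' q₁ =>
  have hp₁ : p₁.IsPath := hp.of_cons
  have hq₁ : q₁.IsPath := hq.of_cons
  have hda : T.dist v a = T.dist v' a + 1 := by
    rw [← hplen, ← path_len hT p₁ hp₁]; simp [Walk.length_cons]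
  have hdb : T.dist v b = T.dist v'' b + 1 := by
    rw [← hqlen, ← path_len hT q₁ hq₁]; simp [Walk.length_cons]
  by_cases hvv : v'' = v'
  · subst hvv
    obtain ⟨m, hm1, hm2, hm3⟩ := IH (T.dist v'' a + T.dist v'' b) (by omega) v'' rfl
    have t1 : T.dist v a ≤ T.dist v m + T.dist m a := hconn.dist_triangle
    have t2 : T.dist v b ≤ T.dist v m + T.dist m b := hconn.dist_triangle
    have t3 : T.dist v m ≤ T.dist v v'' + T.dist v'' m := hconn.dist_triangle
    have t4 : T.dist v v'' ≤ 1 := by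
      simpa using T.dist_le (Walk.cons hadj (Walk.nil))
    exact ⟨m, by omega, by omega, hm3⟩
  exfalso
  have hvp₁ : v ∉ p₁.support := ((Walk.cons_isPath_iff _ _).1 hp).2
  have hvq₁ : v ∉ q₁.support := ((Walk.cons_isPath_iff _ _).1 hq).2
  have hdisj : ∀ u, u ∈ p₁.support → u ∈ q₁.support → False := by
    intro u hu1 hu2
    have c1 : (Walk.cons hadj (p₁.takeUntil u hu1)).IsPath := by
      rw [Walk.cons_isPath_iff]
      exact ⟨hp₁.takeUntil hu1, fun h => hvp₁ (p₁.support_takeUntil_subset hu1 h)⟩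
    have c2 : (Walk.cons hadj' (q₁.takeUntil u hu2)).IsPath := by
      rw [Walk.cons_isPath_iff]
      exact ⟨hq₁.takeUntil hu2, fun h => hvq₁ (q₁.support_takeUntil_subset hu2 h)⟩
    have := (hT.existsUnique_path v u).unique c1 c2
    have h1 := congrArg (fun w => Walk.getVert w 1) this
    simp only [Walk.getVert_cons _ _ one_ne_zero, Nat.sub_self, Walk.getVert_zero] at h1
    exact hvv h1.symm
  have hr : ((Walk.cons hadj p₁).reverse.append (Walk.cons hadj' q₁)).IsPath := by
    rw [Walk.isPath_def, Walk.support_append]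
    have htail : (Walk.cons hadj' q₁).support.tail = q₁.support := by
      simp [Walk.support_cons]
    rw [htail]
    refine List.Nodup.append ?_ (hq₁.support_nodup) ?_
    · exact hp.reverse.support_nodup
    · intro u hu1 hu2
      rw [Walk.support_reverse, List.mem_reverse, Walk.support_cons, List.mem_cons] at hu1
      rcases hu1 with hu1 | hu1
      · exact hvq₁ (hu1 ▸ hu2)
      · exact hdisj u hu1 hu2
  have hlen := path_len hT _ hr
  rw [Walk.length_append, Walk.length_reverse, hplen, hqlen] at hlen
  rw [dc a v] at hgeo
  omega

/-- Ordering of two points on a geodesic. -/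
lemma geodesic_order (hT : T.IsTree) {a b x y : V}
    (hx : T.dist a x + T.dist x b = T.dist a b)
    (hy : T.dist a y + T.dist y b = T.dist a b)
    (hxy : T.dist a x ≤ T.dist a y) :
    T.dist x y + T.dist a x = T.dist a y := by
  have hconn := hT.isConnected
  have dc : ∀ u w : V, T.dist u w = T.dist w u := fun u w => SimpleGraph.dist_comm ..
  obtain ⟨p1, hp1, hl1⟩ := hconn.exists_path_of_dist a x
  obtain ⟨p2, hp2, hl2⟩ := hconn.exists_path_of_dist x b
  obtain ⟨q1, hq1, hl3⟩ := hconn.exists_path_of_dist a y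
  obtain ⟨q2, hq2, hl4⟩ := hconn.exists_path_of_dist y b
  have hP : (p1.append p2).IsPath :=
    Walk.isPath_of_length_eq_dist _ (by rw [Walk.length_append]; omega)
  have hQ : (q1.append q2).IsPath :=
    Walk.isPath_of_length_eq_dist _ (by rw [Walk.length_append]; omega)
  have heq : p1.append p2 = q1.append q2 := (hT.existsUnique_path a b).unique hP hQ
  have hy' : y ∈ (p1.append p2).support := by
    rw [heq, Walk.mem_support_append_iff]
    exact Or.inl (Walk.end_mem_support _)
  rw [Walk.mem_support_append_iff] at hy'
  rcases hy' with h | h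
  · have := dist_split_of_mem_support hT p1 hp1 h
    rw [dc y x] at this
    omega
  · have := dist_split_of_mem_support hT p2 hp2 h
    omega

/-- Existence of a vertex at each distance along a geodesic. -/
lemma exists_dist_split (hT : T.IsTree) (a b : V) :
    ∀ k, k ≤ T.dist a b → ∃ x, T.dist a x = k ∧ T.dist x b + k = T.dist a b := by
  have hconn := hT.isConnected
  intro k
  induction k with
  | zero => exact fun _ => ⟨a, T.dist_self, by simp⟩
  | succ k ih =>
    intro hk
    obtain ⟨x, h1, h2⟩ := ih (by omega)
    obtain ⟨p, hp, hplen⟩ := hconn.exists_path_of_dist x b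
    cases p with
    | nil =>
      rw [T.dist_self] at hplen; omega
    | @cons _ x' _ hadj p₁ =>
      have hx' : T.dist x' b = p₁.length := (path_len hT p₁ hp.of_cons).symm
      have hxx' : T.dist x x' ≤ 1 := by
        simpa using T.dist_le (Walk.cons hadj Walk.nil)
      have t1 : T.dist a x' ≤ T.dist a x + T.dist x x' := hconn.dist_triangle
      have t2 : T.dist a b ≤ T.dist a x' + T.dist x' b := hconn.dist_triangle
      have hlen : p₁.length + 1 = T.dist x b := by
        simpa [Walk.length_cons] using hplen
      exact ⟨x', by omega, by omega⟩

lemma sum_helper1 (r : ℕ) :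
    ∑ k ∈ range (2 * r + 1), ((k - r) + (r - k)) = r * (r + 1) := by
  induction r with
  | zero => simp
  | succ r ih =>
    have h1 : 2 * (r + 1) + 1 = (2 * r + 2) + 1 := by ring
    rw [h1, Finset.sum_range_succ']
    have h2 : ∀ k ∈ range (2 * r + 2), ((k + 1) - (r + 1)) + ((r + 1) - (k + 1))
        = (k - r) + (r - k) := fun k _ => by omega
    rw [Finset.sum_congr rfl h2, Finset.sum_range_succ, ih]
    ring_nf
    omega

lemma sum_helper2 (s : ℕ) :
    ∑ k ∈ range (2 * s + 2), ((k - (s + 1)) + (s - k)) = s * (s + 1) := by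
  induction s with
  | zero => simp; omega
  | succ s ih =>
    have h1 : 2 * (s + 1) + 2 = (2 * s + 3) + 1 := by ring
    rw [h1, Finset.sum_range_succ']
    have h2 : ∀ k ∈ range (2 * s + 3), ((k + 1) - (s + 2)) + ((s + 1) - (k + 1))
        = (k - (s + 1)) + (s - k) := fun k _ => by omega
    rw [Finset.sum_congr rfl h2, Finset.sum_range_succ, ih]
    have e1 : 2 * s + 2 - (s + 1) = s + 1 := by omega
    have e2 : s - (2 * s + 2) = 0 := by omega
    have e3 : (0:ℕ) - (s + 2) = 0 := by omega
    have e4 : s + 1 - 0 = s + 1 := by omega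
    rw [e1, e2, e3, e4]
    ring

lemma pathGraph_walk_le {n : ℕ} {x y : Fin n} (w : (SimpleGraph.pathGraph n).Walk x y) :
    (x : ℕ) ≤ y + w.length ∧ (y : ℕ) ≤ x + w.length := by
  induction w with
  | nil => simp
  | @cons u z _ h p ih =>
    rw [SimpleGraph.pathGraph_adj] at h
    rw [Walk.length_cons]
    omega

section Fin
variable [Fintype V] [Nonempty V]

lemma ecc_ge (v w : V) : T.dist v w ≤ eccVert T v := Finset.le_sup (mem_univ w)

lemma rad_le (v : V) : graphRad T ≤ eccVert T v := Finset.inf'_le _ (mem_univ v)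

lemma rad_exists : ∃ v : V, graphRad T = eccVert T v := by
  obtain ⟨v, -, h⟩ := Finset.exists_mem_eq_inf' (univ_nonempty) (eccVert T)
  exact ⟨v, h⟩

variable (hT : T.IsTree) {a b : V} (hab : ∀ u w : V, T.dist u w ≤ T.dist a b)
include hT hab

lemma ecc_eq_max (v : V) : eccVert T v = max (T.dist v a) (T.dist v b) := by
  have hconn := hT.isConnected
  have dc : ∀ u w : V, T.dist u w = T.dist w u := fun u w => SimpleGraph.dist_comm ..
  apply le_antisymm
  · apply Finset.sup_le
    intro w _
    obtain ⟨m, hm1, hm2, hm3⟩ := median hT a b v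
    obtain ⟨m', hn1, hn2, hn3⟩ := median hT a b w
    have t1 : T.dist v w ≤ T.dist v m + T.dist m w := hconn.dist_triangle
    have t2 : T.dist m w ≤ T.dist m m' + T.dist m' w := hconn.dist_triangle
    have e1 : T.dist m a = T.dist a m := dc ..
    have e2 : T.dist m' a = T.dist a m' := dc ..
    have e3 : T.dist m' w = T.dist w m' := dc ..
    have e4 : T.dist m m' = T.dist m' m := dc ..
    have b1 : T.dist w a ≤ T.dist a b := hab ..
    have b2 : T.dist w b ≤ T.dist a b := hab ..
    rcases le_total (T.dist a m) (T.dist a m') with h | h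
    · have ho := geodesic_order hT hm3 hn3 h
      omega
    · have ho := geodesic_order hT hn3 hm3 h
      omega
  · exact max_le (ecc_ge v a) (ecc_ge v b)

lemma rad_eq : graphRad T = (T.dist a b + 1) / 2 := by
  have hconn := hT.isConnected
  have dc : ∀ u w : V, T.dist u w = T.dist w u := fun u w => SimpleGraph.dist_comm ..
  obtain ⟨v0, hv0⟩ := rad_exists (T := T)
  have h1 : T.dist a b ≤ T.dist a v0 + T.dist v0 b := hconn.dist_triangle
  have h2 := ecc_eq_max hT hab v0
  obtain ⟨x, hx1, hx2⟩ := exists_dist_split hT a b ((T.dist a b + 1) / 2) (by omega)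
  have h3 := rad_le (T := T) x
  have h4 := ecc_eq_max hT hab x
  have e1 : T.dist x a = T.dist a x := dc ..
  have e2 : T.dist v0 a = T.dist a v0 := dc ..
  omega

lemma ecc_lower_even {s : ℕ} {c : V} (hc1 : T.dist a c = s) (hc2 : T.dist c b = s)
    (hD : T.dist a b = s + s) (v : V) :
    s + T.dist v c ≤ eccVert T v := by
  have hconn := hT.isConnected
  have dc : ∀ u w : V, T.dist u w = T.dist w u := fun u w => SimpleGraph.dist_comm ..
  obtain ⟨m, hm1, hm2, hm3⟩ := median hT a b v
  have hcgeo : T.dist a c + T.dist c b = T.dist a b := by omega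
  have t1 : T.dist v c ≤ T.dist v m + T.dist m c := hconn.dist_triangle
  have e1 : T.dist m a = T.dist a m := dc ..
  have h4 := ecc_eq_max hT hab v
  rcases le_total (T.dist a m) (T.dist a c) with h | h
  · have ho := geodesic_order hT hm3 hcgeo h
    omega
  · have ho := geodesic_order hT hcgeo hm3 h
    have e2 : T.dist c m = T.dist m c := dc ..
    omega

lemma ecc_lower_odd {s : ℕ} {c1 c2 : V} (hc1 : T.dist a c1 = s)
    (hc1' : T.dist c1 b = s + 1) (hc2 : T.dist a c2 = s + 1) (hc2' : T.dist c2 b = s)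
    (hD : T.dist a b = s + s + 1) (v : V) :
    (s + 1) + min (T.dist v c1) (T.dist v c2) ≤ eccVert T v := by
  have hconn := hT.isConnected
  have dc : ∀ u w : V, T.dist u w = T.dist w u := fun u w => SimpleGraph.dist_comm ..
  obtain ⟨m, hm1, hm2, hm3⟩ := median hT a b v
  have hcgeo : T.dist a c1 + T.dist c1 b = T.dist a b := by omega
  have hcgeo2 : T.dist a c2 + T.dist c2 b = T.dist a b := by omega
  have t1 : T.dist v c1 ≤ T.dist v m + T.dist m c1 := hconn.dist_triangle
  have t2 : T.dist v c2 ≤ T.dist v m + T.dist m c2 := hconn.dist_triangle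
  have e1 : T.dist m a = T.dist a m := dc ..
  have h4 := ecc_eq_max hT hab v
  rcases le_total (T.dist a m) (T.dist a c1) with h | h
  · have ho := geodesic_order hT hm3 hcgeo h
    omega
  · rcases le_total (T.dist a c2) (T.dist a m) with h' | h'
    · have ho := geodesic_order hT hcgeo2 hm3 h'
      have e2 : T.dist c2 m = T.dist m c2 := dc ..
      omega
    · have : T.dist a m = s ∨ T.dist a m = s + 1 := by omega
      rcases this with h'' | h''
      · have ho := geodesic_order hT hm3 hcgeo (by omega)
        omega
      · have ho := geodesic_order hT hcgeo2 hm3 (by omega)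
        have e2 : T.dist c2 m = T.dist m c2 := dc ..
        omega

omit hab in
lemma iso_of_card (hcard : Fintype.card V = T.dist a b + 1) :
    Nonempty (T ≃g SimpleGraph.pathGraph (Fintype.card V)) := by
  have hconn := hT.isConnected
  have dc : ∀ u w : V, T.dist u w = T.dist w u := fun u w => SimpleGraph.dist_comm ..
  have hexists : ∀ k : Fin (T.dist a b + 1), ∃ x, T.dist a x = (k : ℕ) ∧
      T.dist x b + (k : ℕ) = T.dist a b :=
    fun k => exists_dist_split hT a b k (by omega)
  choose X hX1 hX2 using hexists
  have hgeo : ∀ k : Fin (T.dist a b + 1),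
      T.dist a (X k) + T.dist (X k) b = T.dist a b := by
    intro k; have := hX1 k; have := hX2 k; omega
  have hXd : ∀ k l : Fin (T.dist a b + 1), (k : ℕ) ≤ (l : ℕ) →
      T.dist (X k) (X l) + (k : ℕ) = (l : ℕ) := by
    intro k l h
    have := geodesic_order hT (hgeo k) (hgeo l) (by rw [hX1 k, hX1 l]; exact h)
    rw [hX1 k, hX1 l] at this
    exact this
  set e : Fin (Fintype.card V) → V := fun k => X (Fin.cast hcard k) with he
  have hinj : Function.Injective e := by
    intro i j h
    have h1 : T.dist a (e i) = (i : ℕ) := by rw [he]; exact hX1 _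
    have h2 : T.dist a (e j) = (j : ℕ) := by rw [he]; exact hX1 _
    rw [h] at h1
    exact Fin.ext (by omega)
  have hbij : Function.Bijective e :=
    (Fintype.bijective_iff_injective_and_card e).2 ⟨hinj, by simp⟩
  have hadj : ∀ i j : Fin (Fintype.card V),
      T.Adj (e i) (e j) ↔ (SimpleGraph.pathGraph (Fintype.card V)).Adj i j := by
    intro i j
    rw [SimpleGraph.pathGraph_adj, ← SimpleGraph.dist_eq_one_iff_adj]
    have dced : T.dist (e i) (e j) = T.dist (e j) (e i) := dc ..
    rcases le_total (i : ℕ) (j : ℕ) with h | h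
    · have := hXd (Fin.cast hcard i) (Fin.cast hcard j) (by simpa using h)
      simp only [Fin.coe_cast] at this
      have hee : T.dist (e i) (e j) = T.dist (X (Fin.cast hcard i)) (X (Fin.cast hcard j)) := rfl
      omega
    · have := hXd (Fin.cast hcard j) (Fin.cast hcard i) (by simpa using h)
      simp only [Fin.coe_cast] at this
      have hee : T.dist (e j) (e i) = T.dist (X (Fin.cast hcard j)) (X (Fin.cast hcard i)) := rfl
      omega
  exact ⟨(SimpleGraph.Iso.symm ⟨Equiv.ofBijective e hbij, by
    intro i j
    simpa using (hadj i j)⟩)⟩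

lemma card_of_iso (f : T ≃g SimpleGraph.pathGraph (Fintype.card V)) :
    Fintype.card V = T.dist a b + 1 := by
  have hconn := hT.isConnected
  have hn : 1 ≤ Fintype.card V := Fintype.card_pos
  obtain ⟨p, hp, hplen⟩ := hconn.exists_path_of_dist a b
  have h1 : T.dist a b < Fintype.card V := hplen ▸ hp.length_lt
  set z : Fin (Fintype.card V) := ⟨0, by omega⟩ with hz
  set l : Fin (Fintype.card V) := ⟨Fintype.card V - 1, by omega⟩ with hl
  obtain ⟨w, hw⟩ := hconn.exists_walk_length_eq_dist (f.symm z) (f.symm l)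
  have hmap := pathGraph_walk_le (w.map f.toHom)
  rw [Walk.length_map, hw] at hmap
  have hz2 : ((f.toHom (f.symm z)) : ℕ) = 0 := by
    rw [show f.toHom (f.symm z) = z from f.apply_symm_apply z]
  have hl2 : ((f.toHom (f.symm l)) : ℕ) = Fintype.card V - 1 := by
    rw [show f.toHom (f.symm l) = l from f.apply_symm_apply l]
  have hd := hab (f.symm z) (f.symm l)
  have hmap2 := hmap.2
  omega

end Fin
end TreeAux
theorem stmt_18 {V : Type*} [Fintype V] [Nonempty V] (T : SimpleGraph V)
    (hT : T.IsTree) :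
    ({v : V | eccVert T v = graphRad T}.ncard = 1 →
      (graphRad T * (Fintype.card V + graphRad T + 1) ≤ eccSum T ∧
        (eccSum T = graphRad T * (Fintype.card V + graphRad T + 1) ↔
          Nonempty (T ≃g SimpleGraph.pathGraph (Fintype.card V))))) ∧
    ({v : V | eccVert T v = graphRad T}.ncard = 2 →
      ((2 * (graphRad T : ℚ) * (Fintype.card V + graphRad T) - Fintype.card V) / 2
          ≤ eccSum T ∧
        ((eccSum T : ℚ) =
            (2 * (graphRad T : ℚ) * (Fintype.card V + graphRad T)
              - Fintype.card V) / 2 ↔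
          Nonempty (T ≃g SimpleGraph.pathGraph (Fintype.card V))))) := by
  classical
  have hconn := hT.isConnected
  have dc : ∀ u w : V, T.dist u w = T.dist w u := fun u w => SimpleGraph.dist_comm ..
  obtain ⟨a, -, ha⟩ := Finset.exists_mem_eq_sup (univ : Finset V) univ_nonempty (eccVert T)
  obtain ⟨b, -, hb⟩ := Finset.exists_mem_eq_sup (univ : Finset V) univ_nonempty (T.dist a)
  have hab : ∀ u w : V, T.dist u w ≤ T.dist a b := by
    intro u w
    have h1 : T.dist u w ≤ eccVert T u := TreeAux.ecc_ge u w
    have h2 : eccVert T u ≤ univ.sup (eccVert T) := Finset.le_sup (mem_univ u)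
    have h3 : eccVert T a = univ.sup (T.dist a) := rfl
    omega
  have hr : graphRad T = (T.dist a b + 1) / 2 := TreeAux.rad_eq hT hab
  have hexists : ∀ k : Fin (T.dist a b + 1), ∃ x, T.dist a x = (k : ℕ) ∧
      T.dist x b + (k : ℕ) = T.dist a b :=
    fun k => TreeAux.exists_dist_split hT a b k (by omega)
  choose X hX1 hX2 using hexists
  have hgeoX : ∀ k, T.dist a (X k) + T.dist (X k) b = T.dist a b := by
    intro k; have := hX1 k; have := hX2 k; omega
  have hXinj : Function.Injective X := by
    intro k l h; apply Fin.ext; rw [← hX1 k, ← hX1 l, h]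
  have hXd : ∀ k l : Fin (T.dist a b + 1), (k : ℕ) ≤ (l : ℕ) →
      T.dist (X k) (X l) + (k : ℕ) = (l : ℕ) := by
    intro k l h
    have := TreeAux.geodesic_order hT (hgeoX k) (hgeoX l) (by rw [hX1 k, hX1 l]; exact h)
    rwa [hX1 k, hX1 l] at this
  have hecc := TreeAux.ecc_eq_max hT hab
  have hSmem : ∀ v, eccVert T v = graphRad T →
      T.dist a v + T.dist v b = T.dist a b := by
    intro v hv
    obtain ⟨m, hm1, hm2, hm3⟩ := TreeAux.median hT a b v
    have h4 := hecc v
    have e1 : T.dist m a = T.dist a m := dc ..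
    have e2 : T.dist v a = T.dist a v := dc ..
    have hvm : T.dist v m = 0 := by omega
    have hveq : v = m := (hconn.dist_eq_zero_iff).1 hvm
    rw [hveq]
    exact hm3
  have himg_card : (univ.image X).card = T.dist a b + 1 := by
    rw [Finset.card_image_of_injective _ hXinj, Finset.card_univ, Fintype.card_fin]
  have hn_ge : T.dist a b + 1 ≤ Fintype.card V := by
    have h := Finset.card_le_univ (univ.image X)
    rw [himg_card] at h
    exact h
  have hsum_im : ∀ f : V → ℕ, ∑ k : Fin (T.dist a b + 1), f (X k) ≤ ∑ v : V, f v := by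
    intro f
    rw [← Finset.sum_image (fun x _ y _ h => hXinj h)]
    exact Finset.sum_le_sum_of_subset (Finset.subset_univ _)
  rcases Nat.even_or_odd (T.dist a b) with ⟨s, hs⟩ | ⟨s, hs⟩
  · -- EVEN case : dist a b = s + s
    have hrs : graphRad T = s := by omega
    have hsc : s < T.dist a b + 1 := by omega
    obtain ⟨c, hcdef⟩ : ∃ c, X ⟨s, hsc⟩ = c := ⟨_, rfl⟩
    have hc1 : T.dist a c = s := by rw [← hcdef]; exact hX1 ⟨s, hsc⟩
    have hc2 : T.dist c b + s = T.dist a b := by rw [← hcdef]; exact hX2 ⟨s, hsc⟩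
    have hc2' : T.dist c b = s := by omega
    have hlow : ∀ v, s + T.dist v c ≤ eccVert T v :=
      TreeAux.ecc_lower_even hT hab hc1 hc2' (by omega)
    have hcenter : {v : V | eccVert T v = graphRad T} = {c} := by
      ext v
      simp only [Set.mem_setOf_eq, Set.mem_singleton_iff]
      constructor
      · intro hv
        have hgv := hSmem v hv
        have h4 := hecc v
        have e1 : T.dist v a = T.dist a v := dc ..
        have hgc : T.dist a c + T.dist c b = T.dist a b := by omega
        have h5 := TreeAux.geodesic_order hT hgv hgc (by omega)
        have h6 : T.dist v c = 0 := by omega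
        exact (hconn.dist_eq_zero_iff).1 h6
      · intro hvc2
        rw [hvc2, hecc c]
        have e1 : T.dist c a = T.dist a c := dc ..
        omega
    have hncard : {v : V | eccVert T v = graphRad T}.ncard = 1 := by
      rw [hcenter]; exact Set.ncard_singleton c
    have hdXc : ∀ k : Fin (T.dist a b + 1),
        T.dist (X k) c = ((k : ℕ) - s) + (s - (k : ℕ)) := by
      intro k
      rcases le_total (k : ℕ) s with h | h
      · have h5 : T.dist (X k) c + (k : ℕ) = s := by
          rw [← hcdef]; exact hXd k ⟨s, hsc⟩ h
        omega
      · have h5 : T.dist c (X k) + s = (k : ℕ) := by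
          rw [← hcdef]; exact hXd ⟨s, hsc⟩ k h
        have e := dc (X k) c
        omega
    have hsumcim : ∑ k : Fin (T.dist a b + 1), T.dist (X k) c = s * (s + 1) := by
      calc ∑ k : Fin (T.dist a b + 1), T.dist (X k) c
          = ∑ k : Fin (T.dist a b + 1), (((k : ℕ) - s) + (s - (k : ℕ))) :=
            Finset.sum_congr rfl fun k _ => hdXc k
        _ = ∑ k ∈ range (T.dist a b + 1), ((k - s) + (s - k)) :=
            Fin.sum_univ_eq_sum_range (fun k => (k - s) + (s - k)) (T.dist a b + 1)
        _ = s * (s + 1) := by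
            rw [show T.dist a b + 1 = 2 * s + 1 by omega]; exact TreeAux.sum_helper1 s
    have hsumc : s * (s + 1) ≤ ∑ v : V, T.dist v c := by
      have h := hsum_im (fun v => T.dist v c)
      omega
    have hchain : Fintype.card V * s + ∑ v : V, T.dist v c ≤ eccSum T := by
      have h1 : ∑ v : V, (s + T.dist v c) ≤ ∑ v : V, eccVert T v :=
        Finset.sum_le_sum fun v _ => hlow v
      rw [Finset.sum_add_distrib, Finset.sum_const, Finset.card_univ, smul_eq_mul] at h1
      exact h1
    have hform : graphRad T * (Fintype.card V + graphRad T + 1)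
        = Fintype.card V * s + s * (s + 1) := by
      rw [hrs]; ring
    constructor
    · intro _
      refine ⟨by omega, ?_, ?_⟩
      · intro hEq
        have himg : univ.image X = univ := by
          by_contra hne
          have hexv : ∃ v : V, v ∉ univ.image X := by
            by_contra hall
            push_neg at hall
            exact hne (Finset.eq_univ_iff_forall.2 fun v => hall v)
          obtain ⟨v, hv⟩ := hexv
          have hvc : 0 < T.dist v c := by
            have hne2 : v ≠ c := fun hvc2 => hv (by
              rw [hvc2, ← hcdef]; exact Finset.mem_image_of_mem X (mem_univ _))
            exact hconn.pos_dist_of_ne hne2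
          have heq2 := Finset.sum_image (s := (univ : Finset (Fin (T.dist a b + 1))))
            (f := fun u => T.dist u c) (g := X) (fun x _ y _ h => hXinj h)
          have hlt2 : ∑ u ∈ univ.image X, T.dist u c < ∑ u : V, T.dist u c :=
            Finset.sum_lt_sum_of_subset (Finset.subset_univ _) (mem_univ v) hv hvc
              fun j _ _ => Nat.zero_le _
          omega
        have hcard : Fintype.card V = T.dist a b + 1 := by
          have h := himg_card
          rw [himg, Finset.card_univ] at h
          omega
        exact TreeAux.iso_of_card hT hcard
      · rintro ⟨f⟩
        have hcard := TreeAux.card_of_iso hT hab f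
        have himg : univ.image X = univ :=
          Finset.eq_univ_of_card _ (by rw [himg_card, hcard])
        have hsume : eccSum T = ∑ k : Fin (T.dist a b + 1), eccVert T (X k) := by
          have h : eccSum T = ∑ v ∈ univ.image X, eccVert T v := by rw [himg]; rfl
          rw [h, Finset.sum_image (fun x _ y _ h => hXinj h)]
        have heX : ∀ k : Fin (T.dist a b + 1),
            eccVert T (X k) = s + (((k : ℕ) - s) + (s - (k : ℕ))) := by
          intro k
          rw [hecc (X k)]
          have h1 := hX1 k
          have h2 := hX2 k
          have e : T.dist (X k) a = T.dist a (X k) := dc ..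
          omega
        rw [hsume]
        calc ∑ k : Fin (T.dist a b + 1), eccVert T (X k)
            = ∑ k ∈ range (T.dist a b + 1), (s + ((k - s) + (s - k))) := by
              rw [← Fin.sum_univ_eq_sum_range (fun k => s + ((k - s) + (s - k)))
                (T.dist a b + 1)]
              exact Finset.sum_congr rfl fun k _ => heX k
          _ = (T.dist a b + 1) * s + s * (s + 1) := by
              rw [Finset.sum_add_distrib, Finset.sum_const, Finset.card_range, smul_eq_mul,
                show T.dist a b + 1 = 2 * s + 1 by omega, TreeAux.sum_helper1 s]
          _ = graphRad T * (Fintype.card V + graphRad T + 1) := by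
              rw [hrs, hcard, hs]; ring
    · intro h2
      exact absurd (hncard.symm.trans h2) (by norm_num)
  · -- ODD case : dist a b = 2 * s + 1
    have hrs : graphRad T = s + 1 := by omega
    have hsc1 : s < T.dist a b + 1 := by omega
    have hsc2 : s + 1 < T.dist a b + 1 := by omega
    obtain ⟨c1, hc1def⟩ : ∃ c, X ⟨s, hsc1⟩ = c := ⟨_, rfl⟩
    obtain ⟨c2, hc2def⟩ : ∃ c, X ⟨s + 1, hsc2⟩ = c := ⟨_, rfl⟩
    have hc1a : T.dist a c1 = s := by rw [← hc1def]; exact hX1 ⟨s, hsc1⟩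
    have hc1b' : T.dist c1 b + s = T.dist a b := by rw [← hc1def]; exact hX2 ⟨s, hsc1⟩
    have hc1b : T.dist c1 b = s + 1 := by omega
    have hc2a : T.dist a c2 = s + 1 := by rw [← hc2def]; exact hX1 ⟨s + 1, hsc2⟩
    have hc2b' : T.dist c2 b + (s + 1) = T.dist a b := by rw [← hc2def]; exact hX2 ⟨s + 1, hsc2⟩
    have hc2b : T.dist c2 b = s := by omega
    have hlow : ∀ v, (s + 1) + min (T.dist v c1) (T.dist v c2) ≤ eccVert T v :=
      TreeAux.ecc_lower_odd hT hab hc1a hc1b hc2a hc2b (by omega)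
    have hne12 : c1 ≠ c2 := by
      intro h
      rw [h] at hc1a
      omega
    have hcenter : {v : V | eccVert T v = graphRad T} = {c1, c2} := by
      ext v
      simp only [Set.mem_setOf_eq, Set.mem_insert_iff, Set.mem_singleton_iff]
      constructor
      · intro hv
        have hgv := hSmem v hv
        have h4 := hecc v
        have e1 : T.dist v a = T.dist a v := dc ..
        have hgc1 : T.dist a c1 + T.dist c1 b = T.dist a b := by omega
        have hgc2 : T.dist a c2 + T.dist c2 b = T.dist a b := by omega
        have hv' : T.dist a v = s ∨ T.dist a v = s + 1 := by omega
        rcases hv' with h' | h'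
        · left
          have h5 := TreeAux.geodesic_order hT hgv hgc1 (by omega)
          have h6 : T.dist v c1 = 0 := by omega
          exact (hconn.dist_eq_zero_iff).1 h6
        · right
          have h5 := TreeAux.geodesic_order hT hgv hgc2 (by omega)
          have h6 : T.dist v c2 = 0 := by omega
          exact (hconn.dist_eq_zero_iff).1 h6
      · intro hvc
        rcases hvc with h' | h'
        · rw [h', hecc c1]
          have e1 : T.dist c1 a = T.dist a c1 := dc ..
          omega
        · rw [h', hecc c2]
          have e1 : T.dist c2 a = T.dist a c2 := dc ..
          omega
    have hncard : {v : V | eccVert T v = graphRad T}.ncard = 2 := by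
      rw [hcenter]; exact Set.ncard_pair hne12
    have hdXm : ∀ k : Fin (T.dist a b + 1),
        min (T.dist (X k) c1) (T.dist (X k) c2)
          = ((k : ℕ) - (s + 1)) + (s - (k : ℕ)) := by
      intro k
      have d1 : T.dist (X k) c1 = ((k : ℕ) - s) + (s - (k : ℕ)) := by
        rcases le_total (k : ℕ) s with h | h
        · have h5 : T.dist (X k) c1 + (k : ℕ) = s := by
            rw [← hc1def]; exact hXd k ⟨s, hsc1⟩ h
          omega
        · have h5 : T.dist c1 (X k) + s = (k : ℕ) := by
            rw [← hc1def]; exact hXd ⟨s, hsc1⟩ k h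
          have e := dc (X k) c1
          omega
      have d2 : T.dist (X k) c2 = ((k : ℕ) - (s + 1)) + ((s + 1) - (k : ℕ)) := by
        rcases le_total (k : ℕ) (s + 1) with h | h
        · have h5 : T.dist (X k) c2 + (k : ℕ) = s + 1 := by
            rw [← hc2def]; exact hXd k ⟨s + 1, hsc2⟩ h
          omega
        · have h5 : T.dist c2 (X k) + (s + 1) = (k : ℕ) := by
            rw [← hc2def]; exact hXd ⟨s + 1, hsc2⟩ k h
          have e := dc (X k) c2
          omega
      omega
    have hsumcim : ∑ k : Fin (T.dist a b + 1),
        min (T.dist (X k) c1) (T.dist (X k) c2) = s * (s + 1) := by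
      calc ∑ k : Fin (T.dist a b + 1), min (T.dist (X k) c1) (T.dist (X k) c2)
          = ∑ k : Fin (T.dist a b + 1), (((k : ℕ) - (s + 1)) + (s - (k : ℕ))) :=
            Finset.sum_congr rfl fun k _ => hdXm k
        _ = ∑ k ∈ range (T.dist a b + 1), ((k - (s + 1)) + (s - k)) :=
            Fin.sum_univ_eq_sum_range (fun k => (k - (s + 1)) + (s - k)) (T.dist a b + 1)
        _ = s * (s + 1) := by
            rw [show T.dist a b + 1 = 2 * s + 2 by omega]; exact TreeAux.sum_helper2 s
    have hsumc : s * (s + 1) ≤ ∑ v : V, min (T.dist v c1) (T.dist v c2) := by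
      have h := hsum_im (fun v => min (T.dist v c1) (T.dist v c2))
      omega
    have hchain : Fintype.card V * (s + 1) + ∑ v : V, min (T.dist v c1) (T.dist v c2)
        ≤ eccSum T := by
      have h1 : ∑ v : V, ((s + 1) + min (T.dist v c1) (T.dist v c2))
          ≤ ∑ v : V, eccVert T v :=
        Finset.sum_le_sum fun v _ => hlow v
      rw [Finset.sum_add_distrib, Finset.sum_const, Finset.card_univ, smul_eq_mul] at h1
      exact h1
    have hn2 : 2 * s + 2 ≤ Fintype.card V := by omega
    have hA : 2 * (s + 1) * (Fintype.card V + (s + 1))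
        = 2 * (Fintype.card V * (s + 1)) + 2 * (s * (s + 1)) + (2 * s + 2) := by ring
    constructor
    · intro h1
      exact absurd (hncard.symm.trans h1) (by norm_num)
    · intro _
      have hNbound : Fintype.card V * (s + 1) + s * (s + 1) ≤ eccSum T := by omega
      have hfin : 2 * (s + 1) * (Fintype.card V + (s + 1))
          ≤ 2 * eccSum T + Fintype.card V := by omega
      constructor
      · -- the inequality, in ℚ
        rw [hrs, div_le_iff₀ (by norm_num : (0:ℚ) < 2)]
        have hfinQ : ((2 * (s + 1) * (Fintype.card V + (s + 1)) : ℕ) : ℚ)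
            ≤ ((2 * eccSum T + Fintype.card V : ℕ) : ℚ) := Nat.cast_le.2 hfin
        push_cast at hfinQ
        push_cast
        nlinarith [hfinQ]
      constructor
      · intro hEq
        rw [hrs] at hEq
        have hEqN : 2 * eccSum T + Fintype.card V
            = 2 * (s + 1) * (Fintype.card V + (s + 1)) := by
          have hcast : ((2 * eccSum T + Fintype.card V : ℕ) : ℚ)
              = ((2 * (s + 1) * (Fintype.card V + (s + 1)) : ℕ) : ℚ) := by
            push_cast
            rw [eq_div_iff (by norm_num : (2:ℚ) ≠ 0)] at hEq
            push_cast at hEq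
            nlinarith [hEq]
          exact Nat.cast_injective hcast
        have hcard : Fintype.card V = T.dist a b + 1 := by omega
        exact TreeAux.iso_of_card hT hcard
      · rintro ⟨f⟩
        have hcard := TreeAux.card_of_iso hT hab f
        have himg : univ.image X = univ :=
          Finset.eq_univ_of_card _ (by rw [himg_card, hcard])
        have hsume : eccSum T = ∑ k : Fin (T.dist a b + 1), eccVert T (X k) := by
          have h : eccSum T = ∑ v ∈ univ.image X, eccVert T v := by rw [himg]; rfl
          rw [h, Finset.sum_image (fun x _ y _ h => hXinj h)]
        have heX : ∀ k : Fin (T.dist a b + 1),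
            eccVert T (X k) = (s + 1) + (((k : ℕ) - (s + 1)) + (s - (k : ℕ))) := by
          intro k
          rw [hecc (X k)]
          have h1 := hX1 k
          have h2 := hX2 k
          have e : T.dist (X k) a = T.dist a (X k) := dc ..
          omega
        have hval : eccSum T = (2 * s + 2) * (s + 1) + s * (s + 1) := by
          rw [hsume]
          calc ∑ k : Fin (T.dist a b + 1), eccVert T (X k)
              = ∑ k ∈ range (T.dist a b + 1), ((s + 1) + ((k - (s + 1)) + (s - k))) := by
                rw [← Fin.sum_univ_eq_sum_range
                  (fun k => (s + 1) + ((k - (s + 1)) + (s - k))) (T.dist a b + 1)]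
                exact Finset.sum_congr rfl fun k _ => heX k
            _ = (2 * s + 2) * (s + 1) + s * (s + 1) := by
                rw [Finset.sum_add_distrib, Finset.sum_const, Finset.card_range, smul_eq_mul,
                  show T.dist a b + 1 = 2 * s + 2 by omega, TreeAux.sum_helper2 s]
        have hcv : Fintype.card V = 2 * s + 2 := by omega
        rw [hval, hrs, hcv, eq_div_iff (by norm_num : (2:ℚ) ≠ 0)]
        push_cast
        ring
end
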